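/- arXiv:0710.1324 — 9 statements merged into one kernel-verified Lean document; each statement's English description precedes it below -/
import Mathlib

section
/- For any positive integer k, the sum over j from 1 to k-1 of 1/sin²(πj/k) equals (k²-1)/3. -/
open Real Finset

/-- Derivative-of-geometric-sum identity. -/
lemma aux_deriv_geom (z : ℂ) (n : ℕ) :
    (z - 1) * ∑ m ∈ range n, (m : ℂ) * z ^ m
      = (n - 1) * z ^ n - (∑ m ∈ range n, z ^ m) + 1 := by
  induction n with
  | zero => simp
  | succ n ih =>
    rw [Finset.sum_range_succ, Finset.sum_range_succ (f := fun m => z ^ m), mul_add, ih]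
    push_cast
    ring

lemma aux_L1 (k : ℕ) (z : ℂ) (hz : z ^ k = 1) (h1 : z ≠ 1) :
    (z - 1) * ∑ m ∈ range k, (m : ℂ) * z ^ m = k := by
  have hg : ∑ m ∈ range k, z ^ m = 0 := by
    rw [geom_sum_eq h1, hz, sub_self, zero_div]
  rw [aux_deriv_geom, hz, hg]
  ring

lemma aux_sum_sq (k : ℕ) :
    (∑ m ∈ range k, (m : ℂ) ^ 2) * 6 = k * (k - 1) * (2 * k - 1) := by
  induction k with
  | zero => simp
  | succ n ih =>
    rw [Finset.sum_range_succ, add_mul, ih]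
    push_cast
    ring

lemma aux_sum_id (k : ℕ) :
    (∑ m ∈ range k, (m : ℂ)) * 2 = k * (k - 1) := by
  induction k with
  | zero => simp
  | succ n ih =>
    rw [Finset.sum_range_succ, add_mul, ih]
    push_cast
    ring

theorem sum_inv_sin_sq (k : ℕ) (hk : 0 < k) :
    ∑ j ∈ Finset.Ico 1 k, (1 : ℝ) / (Real.sin (π * j / k)) ^ 2
      = ((k : ℝ) ^ 2 - 1) / 3 := by
  have hkC : (k : ℂ) ≠ 0 := Nat.cast_ne_zero.mpr hk.ne'
  have hkZ : (0 : ℤ) < k := by exact_mod_cast hk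
  set u : ℂ := Complex.exp (2 * π * Complex.I / k) with hu_def
  have hu_pow : ∀ t : ℕ, u ^ t = Complex.exp (2 * π * Complex.I * t / k) := by
    intro t
    rw [hu_def, ← Complex.exp_nat_mul]
    congr 1
    ring
  have huk : u ^ k = 1 := by
    rw [hu_pow, mul_div_assoc, div_self hkC, mul_one, Complex.exp_eq_one_iff]
    exact ⟨1, by ring⟩
  have hu0 : u ≠ 0 := Complex.exp_ne_zero _
  -- u^m * (u^n)⁻¹ ≠ 1 when m ≠ n, m,n < k
  have hne : ∀ m n : ℕ, m < k → n < k → m ≠ n → u ^ m * (u ^ n)⁻¹ ≠ 1 := by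
    intro m n hm hn hmn h
    rw [hu_pow, hu_pow, ← Complex.exp_neg, ← Complex.exp_add,
      Complex.exp_eq_one_iff] at h
    obtain ⟨t, ht⟩ := h
    have hπ : (π : ℂ) ≠ 0 := Complex.ofReal_ne_zero.mpr Real.pi_ne_zero
    have h2 : (2 * π * Complex.I) * ((m : ℂ) - n) = (2 * π * Complex.I) * (t * k) := by
      field_simp at ht
      linear_combination (2 * π * Complex.I) * ht
    have h3 : ((m : ℂ) - n) = t * k :=
      mul_left_cancel₀ (by simp [hπ, Complex.I_ne_zero]) h2
    have h4 : (m : ℤ) - n = t * k := by exact_mod_cast h3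
    rcases lt_trichotomy t 0 with h5 | h5 | h5
    · have : t * k ≤ -k := by nlinarith
      omega
    · rw [h5] at h4; omega
    · have : (k : ℤ) ≤ t * k := by nlinarith
      omega
  -- (u^j)^k = 1
  have hpowk : ∀ j : ℕ, (u ^ j) ^ k = 1 := by
    intro j; rw [pow_right_comm, huk, one_pow]
  have hpowinvk : ∀ j : ℕ, ((u ^ j)⁻¹) ^ k = 1 := by
    intro j; rw [← inv_pow, pow_right_comm, inv_pow, huk, inv_one, one_pow]
  -- the key complex factorization
  have hL2 : ∀ j : ℕ, (u ^ j - 1) * ((u ^ j)⁻¹ - 1)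
      = ((4 * Real.sin (π * j / k) ^ 2 : ℝ) : ℂ) := by
    intro j
    have hθ : u ^ j = Complex.exp ((2 * π * j / k : ℝ) * Complex.I) := by
      rw [hu_pow]; congr 1; push_cast; ring
    have hinv : (u ^ j)⁻¹ = Complex.exp (-((2 * π * j / k : ℝ) * Complex.I)) := by
      rw [hθ, ← Complex.exp_neg]
    have hcos := Complex.two_cos (x := ((2 * π * j / k : ℝ) : ℂ))
    have hcosR : Complex.cos ((2 * π * j / k : ℝ) : ℂ) = ((Real.cos (2 * π * j / k) : ℝ) : ℂ) :=
      (Complex.ofReal_cos _).symm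
    have hexpand : (u ^ j - 1) * ((u ^ j)⁻¹ - 1)
        = 2 - 2 * Complex.cos ((2 * π * j / k : ℝ) : ℂ) := by
      have hmul : Complex.exp (((2 * π * j / k : ℝ) : ℂ) * Complex.I)
          * Complex.exp (-(((2 * π * j / k : ℝ) : ℂ) * Complex.I)) = 1 := by
        rw [← Complex.exp_add]; simp
      rw [hinv, hθ]
      rw [neg_mul] at hcos
      linear_combination hmul + hcos
    rw [hexpand, hcosR]
    have hhalf : Real.cos (2 * π * j / k) = 1 - 2 * Real.sin (π * j / k) ^ 2 := by
      have h1 := Real.cos_two_mul (π * j / k)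
      have h2 := Real.sin_sq_add_cos_sq (π * j / k)
      have h3 : 2 * π * j / k = 2 * (π * j / k) := by ring
      rw [h3, h1]; linarith
    rw [hhalf]
    push_cast
    ring
  set A : ℕ → ℂ := fun j => ∑ m ∈ range k, (m : ℂ) * (u ^ j) ^ m with hA_def
  set B : ℕ → ℂ := fun j => ∑ n ∈ range k, (n : ℂ) * ((u ^ j)⁻¹) ^ n with hB_def
  -- termwise identity
  have hterm : ∀ j ∈ Finset.Ico 1 k,
      ((1 / Real.sin (π * j / k) ^ 2 : ℝ) : ℂ) = 4 * (A j * B j) / (k : ℂ) ^ 2 := by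
    intro j hj
    rw [Finset.mem_Ico] at hj
    have hj1 : u ^ j ≠ 1 := by
      have := hne j 0 hj.2 hk (by omega)
      simpa using this
    have hj1' : (u ^ j)⁻¹ ≠ 1 := by
      have := hne 0 j hk hj.2 (by omega)
      simpa using this
    have hA1 : (u ^ j - 1) * A j = k := aux_L1 k _ (hpowk j) hj1
    have hB1 : ((u ^ j)⁻¹ - 1) * B j = k := aux_L1 k _ (hpowinvk j) hj1'
    have hsin : Real.sin (π * j / k) ≠ 0 := by
      apply ne_of_gt
      apply Real.sin_pos_of_pos_of_lt_pi
      · have : (0 : ℝ) < j := by exact_mod_cast hj.1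
        have : (0 : ℝ) < k := by exact_mod_cast hk
        positivity
      · rw [div_lt_iff₀ (by exact_mod_cast hk)]
        have hjk : (j : ℝ) < k := by exact_mod_cast hj.2
        nlinarith [Real.pi_pos]
    have hsinC : ((Real.sin (π * j / k) : ℝ) : ℂ) ≠ 0 := Complex.ofReal_ne_zero.mpr hsin
    have hkey : ((4 * Real.sin (π * j / k) ^ 2 : ℝ) : ℂ) * (A j * B j) = (k : ℂ) ^ 2 := by
      calc ((4 * Real.sin (π * j / k) ^ 2 : ℝ) : ℂ) * (A j * B j)
          = ((u ^ j - 1) * A j) * (((u ^ j)⁻¹ - 1) * B j) := by rw [← hL2]; ring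
        _ = (k : ℂ) * k := by rw [hA1, hB1]
        _ = (k : ℂ) ^ 2 := by ring
    set s : ℝ := Real.sin (π * j / k) with hs_def
    have hsC : ((s : ℝ) : ℂ) ≠ 0 := Complex.ofReal_ne_zero.mpr hsin
    rw [Complex.ofReal_div, Complex.ofReal_one, Complex.ofReal_pow]
    rw [Complex.ofReal_mul, Complex.ofReal_pow] at hkey
    have h4 : ((4 : ℝ) : ℂ) = 4 := by norm_num
    rw [h4] at hkey
    rw [div_eq_div_iff (pow_ne_zero 2 hsC) (pow_ne_zero 2 hkC)]
    linear_combination -hkey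
  rw [← Complex.ofReal_inj, Complex.ofReal_sum]
  calc ∑ j ∈ Finset.Ico 1 k, ((1 / Real.sin (π * j / k) ^ 2 : ℝ) : ℂ)
      = ∑ j ∈ Finset.Ico 1 k, 4 * (A j * B j) / (k : ℂ) ^ 2 := by
        apply Finset.sum_congr rfl
        intro j hj
        exact hterm j hj
    _ = (4 / (k : ℂ) ^ 2) * ∑ j ∈ Finset.Ico 1 k, A j * B j := by
        rw [Finset.mul_sum]
        apply Finset.sum_congr rfl
        intro j _
        ring
    _ = (((k : ℝ) ^ 2 - 1) / 3 : ℝ) := ?_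
  -- total sum over range k
  have hAB : ∀ j : ℕ, A j * B j
      = ∑ m ∈ range k, ∑ n ∈ range k, ((m : ℂ) * n) * (u ^ m * (u ^ n)⁻¹) ^ j := by
    intro j
    rw [hA_def, hB_def]
    simp only
    rw [Finset.sum_mul_sum]
    apply Finset.sum_congr rfl
    intro m _
    apply Finset.sum_congr rfl
    intro n _
    have e1 : (u ^ j) ^ m = (u ^ m) ^ j := pow_right_comm u j m
    have e2 : ((u ^ j)⁻¹) ^ n = ((u ^ n)⁻¹) ^ j := by
      rw [← inv_pow, ← inv_pow, pow_right_comm]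
    rw [e1, e2, mul_pow]
    ring
  have hgeom : ∀ m ∈ range k, ∀ n ∈ range k,
      ∑ j ∈ range k, (u ^ m * (u ^ n)⁻¹) ^ j = if m = n then (k : ℂ) else 0 := by
    intro m hm n hn
    rw [Finset.mem_range] at hm hn
    by_cases hmn : m = n
    · subst hmn
      rw [mul_inv_cancel₀ (pow_ne_zero _ hu0)]
      simp
    · rw [if_neg hmn, geom_sum_eq (hne m n hm hn hmn)]
      rw [mul_pow, hpowk m, hpowinvk n, one_mul, sub_self, zero_div]
  have hsumAB : ∑ j ∈ range k, A j * B j = (k : ℂ) * ∑ m ∈ range k, (m : ℂ) ^ 2 := by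
    calc ∑ j ∈ range k, A j * B j
        = ∑ j ∈ range k, ∑ m ∈ range k, ∑ n ∈ range k,
            ((m : ℂ) * n) * (u ^ m * (u ^ n)⁻¹) ^ j := by
          exact Finset.sum_congr rfl fun j _ => hAB j
      _ = ∑ m ∈ range k, ∑ n ∈ range k, ∑ j ∈ range k,
            ((m : ℂ) * n) * (u ^ m * (u ^ n)⁻¹) ^ j := by
          rw [Finset.sum_comm]
          apply Finset.sum_congr rfl
          intro m _
          rw [Finset.sum_comm]
      _ = ∑ m ∈ range k, ∑ n ∈ range k,
            ((m : ℂ) * n) * (if m = n then (k : ℂ) else 0) := by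
          apply Finset.sum_congr rfl; intro m hm
          apply Finset.sum_congr rfl; intro n hn
          rw [← Finset.mul_sum, hgeom m hm n hn]
      _ = ∑ m ∈ range k, ((m : ℂ) * m) * k := by
          apply Finset.sum_congr rfl; intro m hm
          rw [Finset.sum_eq_single m]
          · simp
          · intro n _ hnm
            rw [if_neg (Ne.symm hnm), mul_zero]
          · intro h; exact absurd hm h
      _ = (k : ℂ) * ∑ m ∈ range k, (m : ℂ) ^ 2 := by
          rw [Finset.mul_sum]
          exact Finset.sum_congr rfl fun m _ => by ring
  have hA0B0 : A 0 * B 0 = (∑ m ∈ range k, (m : ℂ)) ^ 2 := by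
    rw [hA_def, hB_def]
    simp [sq]
  have hsplit : ∑ j ∈ range k, A j * B j
      = A 0 * B 0 + ∑ j ∈ Finset.Ico 1 k, A j * B j := by
    rw [Finset.range_eq_Ico, Finset.sum_eq_sum_Ico_succ_bot hk]
  have hIco : ∑ j ∈ Finset.Ico 1 k, A j * B j
      = (k : ℂ) * (∑ m ∈ range k, (m : ℂ) ^ 2) - (∑ m ∈ range k, (m : ℂ)) ^ 2 := by
    rw [← hsumAB, hsplit, hA0B0]; ring
  have h6 := aux_sum_sq k
  have h2 := aux_sum_id k
  have hX : ∑ m ∈ range k, (m : ℂ) ^ 2 = (k * (k - 1) * (2 * k - 1)) / 6 := by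
    linear_combination h6 / 6
  have hY : ∑ m ∈ range k, (m : ℂ) = (k * (k - 1)) / 2 := by
    linear_combination h2 / 2
  rw [hIco, hX, hY]
  push_cast
  field_simp
  ring
end

section
/- For any positive integer k, the sum over j from 1 to k-1 of 1/(4 sin²(πj/k)) equals (k²-1)/12. -/
open Real Finset

lemma aux_geom (k : ℕ) (x : ℂ) (hxk : x ^ k = 1) (hx : x ≠ 1) :
    ∑ m ∈ range k, x ^ m = 0 := by
  rw [geom_sum_eq hx, hxk]; simp

lemma aux_B (n : ℕ) (x : ℂ) :
    (x - 1) * ∑ m ∈ range n, (m : ℂ) * x ^ m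
      = n * x ^ n - ∑ m ∈ range (n + 1), x ^ m + 1 := by
  induction n with
  | zero => simp
  | succ n ih =>
    rw [Finset.sum_range_succ, Finset.sum_range_succ (f := fun m => x ^ m)]
    push_cast
    push_cast at ih
    linear_combination ih

lemma aux_gauss (n : ℕ) : ∑ m ∈ range n, (m : ℝ) = n * (n - 1) / 2 := by
  induction n with
  | zero => simp
  | succ n ih =>
    rw [Finset.sum_range_succ, ih]
    push_cast
    ring

lemma aux_sq (n : ℕ) : ∑ m ∈ range n, (m : ℝ) ^ 2 = n * (n - 1) * (2 * n - 1) / 6 := by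
  induction n with
  | zero => simp
  | succ n ih =>
    rw [Finset.sum_range_succ, ih]
    push_cast
    ring

theorem sum_inv_four_sin_sq (k : ℕ) (hk : 0 < k) :
    ∑ j ∈ Finset.Ico 1 k, (1 : ℝ) / (4 * (Real.sin (π * j / k)) ^ 2)
      = ((k : ℝ) ^ 2 - 1) / 12 := by
  have hk0 : (k : ℂ) ≠ 0 := Nat.cast_ne_zero.mpr hk.ne'
  have hkR : (0:ℝ) < k := Nat.cast_pos.mpr hk
  set ζ : ℂ := Complex.exp (2 * ↑π * Complex.I / k) with hζ
  have hζk : ζ ^ k = 1 := by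
    rw [hζ, ← Complex.exp_nat_mul]
    rw [show (k : ℂ) * (2 * ↑π * Complex.I / k) = 2 * ↑π * Complex.I by field_simp]
    exact Complex.exp_two_pi_mul_I
  have hζ0 : ζ ≠ 0 := Complex.exp_ne_zero _
  have hζj : ∀ j : ℕ, 0 < j → j < k → ζ ^ j ≠ 1 := by
    intro j hj1 hjk h
    rw [hζ, ← Complex.exp_nat_mul, Complex.exp_eq_one_iff] at h
    obtain ⟨n, hn⟩ := h
    have h2 : (j : ℂ) = n * k := by
      have hI : (2 : ℂ) * ↑π * Complex.I ≠ 0 := by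
        simp [Complex.I_ne_zero, Real.pi_ne_zero, Complex.ofReal_ne_zero]
      field_simp at hn
      apply mul_right_cancel₀ hI
      linear_combination (2 * ↑π * Complex.I) * hn
    have h3 : (j : ℤ) = n * k := by exact_mod_cast h2
    have hkZ : (0:ℤ) < k := by exact_mod_cast hk
    have hjZ : (0:ℤ) < j := by exact_mod_cast hj1
    have hjkZ : (j:ℤ) < k := by exact_mod_cast hjk
    rcases le_or_gt n 0 with h | h
    · nlinarith [mul_le_mul_of_nonneg_right h hkZ.le]
    · nlinarith [mul_le_mul_of_nonneg_right h hkZ.le]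
  -- normSq (ζ^j - 1) = 4 sin^2 (π j / k)
  have habs : ∀ j : ℕ, Complex.normSq (ζ ^ j - 1) = 4 * (Real.sin (π * j / k)) ^ 2 := by
    intro j
    have hzj : ζ ^ j = Complex.exp ((2 * π * j / k : ℝ) * Complex.I) := by
      rw [hζ, ← Complex.exp_nat_mul]
      push_cast
      ring_nf
    rw [hzj, Complex.exp_mul_I]
    have h1 : Real.cos (2 * π * j / k) = 1 - 2 * Real.sin (π * j / k) ^ 2 := by
      have := Real.cos_sq (π * j / k)
      rw [show 2 * (π * ↑j / ↑k) = 2 * π * j / k by ring] at this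
      nlinarith [Real.sin_sq_add_cos_sq (π * j / k)]
    have hre : ((Complex.cos ((2 * π * j / k : ℝ)) + Complex.sin ((2 * π * j / k : ℝ)) * Complex.I) - 1) =
        Complex.ofReal (Real.cos (2 * π * j / k) - 1) + Complex.ofReal (Real.sin (2 * π * j / k)) * Complex.I := by
      push_cast [Complex.ofReal_cos, Complex.ofReal_sin]
      ring
    rw [hre, Complex.normSq_add_mul_I]
    nlinarith [Real.sin_sq_add_cos_sq (2 * π * j / k), h1]
  -- main computation
  set G : ℕ → ℂ := fun j => ∑ m ∈ range k, (m : ℂ) * ζ ^ (j * m) with hG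
  have hg : ∀ j : ℕ, 0 < j → j < k → (ζ ^ j - 1) * G j = k := by
    intro j hj1 hj2
    have hx : (ζ ^ j) ^ k = 1 := by rw [← pow_mul, mul_comm, pow_mul, hζk, one_pow]
    have hxe : ∀ m, ζ ^ (j * m) = (ζ ^ j) ^ m := fun m => by rw [← pow_mul]
    have h1 := aux_B k (ζ ^ j)
    rw [Finset.sum_range_succ, aux_geom k (ζ ^ j) hx (hζj j hj1 hj2), hx] at h1
    simp only [hG, hxe]
    rw [h1]; ring
  have hconjζ : (starRingEnd ℂ) ζ = ζ⁻¹ := by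
    rw [hζ, ← Complex.exp_conj, ← Complex.exp_neg]
    congr 1
    simp [map_div₀, Complex.conj_I, Complex.conj_ofReal, map_ofNat]
    ring
  have hconjpow : ∀ m : ℕ, (starRingEnd ℂ) (ζ ^ m) = (ζ ^ m)⁻¹ := by
    intro m; rw [map_pow, hconjζ, inv_pow]
  have horth : ∀ m n : ℕ, m < k → n < k →
      ∑ j ∈ range k, ζ ^ (j * m) * (ζ ^ (j * n))⁻¹ = if m = n then (k : ℂ) else 0 := by
    intro m n hm hn
    have hterm : ∀ j, ζ ^ (j * m) * (ζ ^ (j * n))⁻¹ = (ζ ^ m * (ζ ^ n)⁻¹) ^ j := by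
      intro j
      rw [mul_pow, inv_pow, ← pow_mul, ← pow_mul, mul_comm m j, mul_comm n j]
    simp only [hterm]
    by_cases h : m = n
    · subst h
      simp [mul_inv_cancel₀ (pow_ne_zero m hζ0)]
    · have e1 : (ζ ^ m) ^ k = 1 := by rw [← pow_mul, mul_comm, pow_mul, hζk, one_pow]
      have e2 : (ζ ^ n) ^ k = 1 := by rw [← pow_mul, mul_comm, pow_mul, hζk, one_pow]
      have hw : (ζ ^ m * (ζ ^ n)⁻¹) ^ k = 1 := by
        rw [mul_pow, inv_pow, e1, e2, inv_one, mul_one]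
      have hw1 : ζ ^ m * (ζ ^ n)⁻¹ ≠ 1 := by
        intro he
        have hmn : ζ ^ m = ζ ^ n := by
          field_simp at he
          exact he
        rcases Nat.lt_or_ge m n with hlt | hge
        · have h2 : ζ ^ m * ζ ^ (n - m) = ζ ^ m * 1 := by
            rw [← pow_add, Nat.add_sub_cancel' hlt.le, mul_one, ← hmn]
          exact hζj (n - m) (by omega) (by omega) (mul_left_cancel₀ (pow_ne_zero m hζ0) h2)
        · have hlt2 : n < m := by omega
          have h2 : ζ ^ n * ζ ^ (m - n) = ζ ^ n * 1 := by
            rw [← pow_add, Nat.add_sub_cancel' hlt2.le, mul_one, hmn]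
          exact hζj (m - n) (by omega) (by omega) (mul_left_cancel₀ (pow_ne_zero n hζ0) h2)
      rw [aux_geom k _ hw hw1]
      simp [h]
  have hexpand : ∀ j : ℕ, (Complex.normSq (G j) : ℂ)
      = ∑ m ∈ range k, ∑ n ∈ range k, (m : ℂ) * n * (ζ ^ (j * m) * (ζ ^ (j * n))⁻¹) := by
    intro j
    rw [← Complex.mul_conj]
    simp only [hG]
    rw [map_sum, Finset.sum_mul_sum]
    refine Finset.sum_congr rfl fun m _ => Finset.sum_congr rfl fun n _ => ?_
    rw [map_mul, hconjpow]
    simp only [Complex.conj_natCast]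
    ring
  have hpar : ∑ j ∈ range k, (Complex.normSq (G j) : ℂ) = (k : ℂ) * ∑ m ∈ range k, (m : ℂ) ^ 2 := by
    rw [Finset.sum_congr rfl fun j _ => hexpand j, Finset.sum_comm]
    have step1 : ∀ m ∈ range k,
        ∑ j ∈ range k, ∑ n ∈ range k, (m : ℂ) * n * (ζ ^ (j * m) * (ζ ^ (j * n))⁻¹)
          = (m : ℂ) ^ 2 * k := by
      intro m hm
      rw [Finset.sum_comm]
      have step2 : ∀ n ∈ range k,
          ∑ j ∈ range k, (m : ℂ) * n * (ζ ^ (j * m) * (ζ ^ (j * n))⁻¹)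
            = (m : ℂ) * n * (if m = n then (k : ℂ) else 0) := by
        intro n hn
        rw [← Finset.mul_sum, horth m n (mem_range.mp hm) (mem_range.mp hn)]
      rw [Finset.sum_congr rfl step2]
      simp only [mul_ite, mul_zero]
      rw [Finset.sum_ite_eq (range k) m (fun n => (m : ℂ) * n * k), if_pos hm]
      ring
    rw [Finset.sum_congr rfl step1, Finset.mul_sum]
    exact Finset.sum_congr rfl fun m _ => by ring
  have hparR : ∑ j ∈ range k, Complex.normSq (G j) = (k : ℝ) * ∑ m ∈ range k, (m : ℝ) ^ 2 := by
    have := hpar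
    push_cast at this ⊢
    exact_mod_cast this
  -- pointwise identity on Ico 1 k
  have hpt : ∀ j ∈ Finset.Ico 1 k, (1 : ℝ) / (4 * (Real.sin (π * j / k)) ^ 2)
      = Complex.normSq (G j) / (k : ℝ) ^ 2 := by
    intro j hj
    rw [Finset.mem_Ico] at hj
    have hne : ζ ^ j - 1 ≠ 0 := sub_ne_zero.mpr (hζj j hj.1 hj.2)
    have hns : Complex.normSq (ζ ^ j - 1) ≠ 0 := (Complex.normSq_pos.mpr hne).ne'
    have h4 : Complex.normSq (ζ ^ j - 1) * Complex.normSq (G j) = (k : ℝ) ^ 2 := by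
      rw [← Complex.normSq_mul, hg j hj.1 hj.2, Complex.normSq_natCast]
      ring
    have hpos := Complex.normSq_pos.mpr hne
    rw [← habs j, div_eq_div_iff hns (by positivity : ((k:ℝ)^2) ≠ 0)]
    linear_combination -h4
  rw [Finset.sum_congr rfl hpt]
  have hG0 : Complex.normSq (G 0) = ((k : ℝ) * ((k : ℝ) - 1) / 2) ^ 2 := by
    have : G 0 = (((k : ℝ) * ((k : ℝ) - 1) / 2 : ℝ) : ℂ) := by
      simp only [hG, Nat.zero_mul, pow_zero, mul_one]
      rw [← aux_gauss k]
      push_cast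
      rfl
    rw [this, Complex.normSq_ofReal]
    ring
  have hsplit : ∑ j ∈ range k, Complex.normSq (G j)
      = Complex.normSq (G 0) + ∑ j ∈ Finset.Ico 1 k, Complex.normSq (G j) := by
    rw [Finset.range_eq_Ico, Finset.sum_eq_sum_Ico_succ_bot hk]
  have hIco : ∑ j ∈ Finset.Ico 1 k, Complex.normSq (G j)
      = (k : ℝ) * ((k : ℝ) * ((k : ℝ) - 1) * (2 * (k : ℝ) - 1) / 6)
        - ((k : ℝ) * ((k : ℝ) - 1) / 2) ^ 2 := by
    rw [← aux_sq k, ← hparR, hsplit, hG0]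
    ring
  rw [← Finset.sum_div, hIco]
  field_simp
  ring
end

section
/- If h is a rotation by angle 2π/k acting on a plane, then summing |det(I-h^j)|⁻¹ over the nontrivial elements h^j (j=1,...,k-1) of the cyclic group generated by h gives (k²-1)/12. -/
open Real Matrix Finset

noncomputable def Rot (θ : ℝ) : Matrix (Fin 2) (Fin 2) ℝ :=
  !![Real.cos θ, -Real.sin θ; Real.sin θ, Real.cos θ]

lemma rot_pow (θ : ℝ) (j : ℕ) : Rot θ ^ j = Rot (j * θ) := by
  induction j with
  | zero => simp [Rot, Matrix.one_fin_two]
  | succ j ih =>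
      rw [pow_succ, ih, Rot, Rot, Rot, Matrix.mul_fin_two]
      push_cast
      rw [add_mul, one_mul, Real.cos_add, Real.sin_add]
      congr 1 <;> ring

lemma det_one_sub_rot (φ : ℝ) :
    ((1 : Matrix (Fin 2) (Fin 2) ℝ) - Rot φ).det = 2 - 2 * Real.cos φ := by
  rw [Matrix.det_fin_two]
  simp [Rot, Matrix.one_apply]
  nlinarith [Real.sin_sq_add_cos_sq φ]

lemma L1 (x : ℂ) (n : ℕ) :
    (1 - x) * ∑ m ∈ Finset.range n, (m : ℂ) * x ^ m
      = (∑ m ∈ Finset.range n, x ^ m) - 1 - ((n : ℂ) - 1) * x ^ n := by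
  induction n with
  | zero => simp
  | succ n ih =>
      rw [Finset.sum_range_succ, Finset.sum_range_succ (f := fun m => x ^ m)]
      push_cast
      linear_combination ih

lemma geo (k : ℕ) (x : ℂ) (hx : x ^ k = 1) :
    ∑ j ∈ Finset.range k, x ^ j = if x = 1 then (k : ℂ) else 0 := by
  split_ifs with h
  · simp [h]
  · rw [geom_sum_eq h, hx]; simp

lemma zeta_pow_eq_one_iff (k : ℕ) (hk : 1 ≤ k) (m : ℕ) :
    Complex.exp (2 * Real.pi * Complex.I / k) ^ m = 1 ↔ (k : ℕ) ∣ m := by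
  rw [← Complex.exp_nat_mul, Complex.exp_eq_one_iff]
  have hk0 : (k : ℂ) ≠ 0 := Nat.cast_ne_zero.mpr (by omega)
  have hI : (Complex.I : ℂ) ≠ 0 := Complex.I_ne_zero
  have hpi : (Real.pi : ℂ) ≠ 0 := by exact_mod_cast Real.pi_ne_zero
  constructor
  · rintro ⟨n, hn⟩
    have h2 : (m : ℂ) * (2 * Real.pi * Complex.I) = n * k * (2 * Real.pi * Complex.I) := by
      field_simp at hn
      linear_combination (2 * Real.pi * Complex.I) * hn
    have h3 : (m : ℂ) = n * k := mul_right_cancel₀ (by simp [hpi, hI]) h2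
    have h4 : (m : ℤ) = n * k := by exact_mod_cast h3
    have : (k : ℤ) ∣ (m : ℤ) := ⟨n, by rw [h4]; ring⟩
    exact_mod_cast this
  · rintro ⟨c, rfl⟩
    refine ⟨c, ?_⟩
    push_cast
    field_simp

lemma sumId (n : ℕ) : ∑ m ∈ Finset.range n, (m : ℂ) = n * (n - 1) / 2 := by
  induction n with
  | zero => simp
  | succ n ih => rw [Finset.sum_range_succ, ih]; push_cast; ring

lemma sumSq (n : ℕ) : ∑ m ∈ Finset.range n, (m : ℂ) ^ 2 = n * (n - 1) * (2 * n - 1) / 6 := by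
  induction n with
  | zero => simp
  | succ n ih => rw [Finset.sum_range_succ, ih]; push_cast; ring

lemma key (k : ℕ) (hk : 1 ≤ k) :
    ∑ j ∈ Finset.Ico 1 k,
      ((1 - Complex.exp (2 * Real.pi * Complex.I / k) ^ j)⁻¹
        - ((1 - Complex.exp (2 * Real.pi * Complex.I / k) ^ j)⁻¹) ^ 2)
      = ((k : ℂ) ^ 2 - 1) / 12 := by
  set ζ : ℂ := Complex.exp (2 * Real.pi * Complex.I / k) with hζ
  have hk0 : (k : ℂ) ≠ 0 := Nat.cast_ne_zero.mpr (by omega)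
  have hζk : ζ ^ k = 1 := (zeta_pow_eq_one_iff k hk k).mpr dvd_rfl
  have hζm : ∀ m ∈ Finset.range k, (ζ ^ m = 1 ↔ m = 0) := by
    intro m hm
    rw [zeta_pow_eq_one_iff k hk m]
    simp only [Finset.mem_range] at hm
    constructor
    · intro h; exact Nat.eq_zero_of_dvd_of_lt h hm
    · rintro rfl; exact dvd_zero k
  -- T j
  set T : ℕ → ℂ := fun j => ∑ m ∈ Finset.range k, (m : ℂ) * (ζ ^ j) ^ m with hT
  have hxpow : ∀ j, (ζ ^ j) ^ k = 1 := by
    intro j; rw [← pow_mul, mul_comm, pow_mul, hζk, one_pow]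
  -- a_j in terms of T j
  have hxne : ∀ j ∈ Finset.Ico 1 k, ζ ^ j ≠ 1 := by
    intro j hj
    simp only [Finset.mem_Ico] at hj
    intro h
    have := Nat.eq_zero_of_dvd_of_lt ((zeta_pow_eq_one_iff k hk j).mp (hζ ▸ h)) hj.2
    omega
  have ha : ∀ j ∈ Finset.Ico 1 k, (1 - ζ ^ j)⁻¹ = -(T j) / k := by
    intro j hj
    have hne := hxne j hj
    have h1 : (1 - ζ ^ j) * T j = -(k : ℂ) := by
      rw [hT]
      rw [L1 (ζ ^ j) k, geo k (ζ ^ j) (hxpow j), if_neg hne, hxpow j]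
      ring
    have h2 : (1 - ζ ^ j) ≠ 0 := sub_ne_zero.mpr (Ne.symm hne)
    have h3 : T j = -(k:ℂ) / (1 - ζ ^ j) := by
      rw [eq_div_iff h2]; linear_combination h1
    rw [h3]
    field_simp
  -- sum of T over range k is 0
  have hTrange : ∑ j ∈ Finset.range k, T j = 0 := by
    rw [hT]
    rw [Finset.sum_comm]
    apply Finset.sum_eq_zero
    intro m hm
    have : ∀ j ∈ Finset.range k, (m : ℂ) * (ζ ^ j) ^ m = (m : ℂ) * (ζ ^ m) ^ j := by
      intro j _; rw [← pow_mul, mul_comm j m, pow_mul]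
    rw [Finset.sum_congr rfl this, ← Finset.mul_sum, geo k (ζ ^ m) (hxpow m)]
    by_cases h0 : m = 0
    · simp [h0]
    · rw [if_neg (fun h => h0 ((hζm m hm).mp h))]; ring
  have hsplit : ∀ f : ℕ → ℂ, ∑ j ∈ Finset.range k, f j = f 0 + ∑ j ∈ Finset.Ico 1 k, f j := by
    intro f
    rw [Finset.range_eq_Ico, Finset.sum_eq_sum_Ico_succ_bot (by omega : 0 < k)]
  have hT0 : T 0 = (k : ℂ) * (k - 1) / 2 := by
    rw [hT]
    simp only [pow_zero, one_pow, mul_one]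
    exact sumId k
  have hTIco : ∑ j ∈ Finset.Ico 1 k, T j = -((k : ℂ) * (k - 1) / 2) := by
    have h := hsplit T
    rw [hTrange, hT0] at h
    linear_combination -h
  -- expansion of T j squared
  have expand : ∀ j, (T j) ^ 2
      = ∑ m ∈ Finset.range k, ∑ n ∈ Finset.range k,
          ((m : ℂ) * (n : ℂ)) * (ζ ^ (m + n)) ^ j := by
    intro j
    rw [hT, sq, Finset.sum_mul_sum]
    refine Finset.sum_congr rfl fun m _ => Finset.sum_congr rfl fun n _ => ?_
    rw [show ((m:ℂ) * (ζ^j)^m) * ((n:ℂ) * (ζ^j)^n)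
        = ((m:ℂ)*(n:ℂ)) * ((ζ^j)^m * (ζ^j)^n) from by ring,
      ← pow_add, ← pow_mul, mul_comm j (m+n), pow_mul]
  -- condition characterization
  have hcond : ∀ m ∈ Finset.Ico 1 k, ∀ n ∈ Finset.range k,
      (ζ ^ (m + n) = 1 ↔ n = k - m) := by
    intro m hm n hn
    simp only [Finset.mem_Ico] at hm
    simp only [Finset.mem_range] at hn
    have h := zeta_pow_eq_one_iff k hk (m + n)
    rw [← hζ] at h
    rw [h]
    constructor
    · rintro ⟨c, hc⟩
      have hc2 : c < 2 := by
        by_contra hc2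
        push_neg at hc2
        have : 2 * k ≤ k * c := by calc 2 * k = k * 2 := by ring
                                      _ ≤ k * c := Nat.mul_le_mul_left k hc2
        omega
      interval_cases c <;> omega
    · intro hnk
      exact ⟨1, by omega⟩
  have hTsq_range : ∑ j ∈ Finset.range k, (T j) ^ 2
      = (k : ℂ) ^ 2 * (k - 1) * (k + 1) / 6 := by
    calc ∑ j ∈ Finset.range k, (T j) ^ 2
        = ∑ j ∈ Finset.range k, ∑ m ∈ Finset.range k, ∑ n ∈ Finset.range k,
            ((m : ℂ) * (n : ℂ)) * (ζ ^ (m + n)) ^ j := by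
          exact Finset.sum_congr rfl fun j _ => expand j
      _ = ∑ m ∈ Finset.range k, ∑ n ∈ Finset.range k,
            ((m : ℂ) * (n : ℂ)) * ∑ j ∈ Finset.range k, (ζ ^ (m + n)) ^ j := by
          rw [Finset.sum_comm]
          refine Finset.sum_congr rfl fun m _ => ?_
          rw [Finset.sum_comm]
          refine Finset.sum_congr rfl fun n _ => ?_
          rw [Finset.mul_sum]
      _ = ∑ m ∈ Finset.range k, ∑ n ∈ Finset.range k,
            ((m : ℂ) * (n : ℂ)) * (if ζ ^ (m + n) = 1 then (k : ℂ) else 0) := by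
          refine Finset.sum_congr rfl fun m _ => Finset.sum_congr rfl fun n _ => ?_
          rw [geo k (ζ ^ (m + n)) (hxpow (m + n))]
      _ = ∑ m ∈ Finset.Ico 1 k, ((m : ℂ) * ((k : ℂ) - m) * k) := by
          rw [hsplit]
          have h0 : (∑ n ∈ Finset.range k,
              (((0:ℕ) : ℂ) * (n : ℂ)) * (if ζ ^ (0 + n) = 1 then (k : ℂ) else 0)) = 0 :=
            Finset.sum_eq_zero fun n _ => by simp
          rw [h0, zero_add]
          refine Finset.sum_congr rfl fun m hm => ?_
          have hm' := Finset.mem_Ico.mp hm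
          have step1 : ∀ n ∈ Finset.range k,
              ((m : ℂ) * (n : ℂ)) * (if ζ ^ (m + n) = 1 then (k : ℂ) else 0)
                = (if n = k - m then ((m:ℂ) * (((k - m : ℕ)) : ℂ) * k) else 0) := by
            intro n hn
            simp only [hcond m hm n hn]
            split_ifs with h
            · subst h; ring
            · ring
          rw [Finset.sum_congr rfl step1,
            Finset.sum_ite_eq' (Finset.range k) (k - m)
              (fun _ => ((m:ℂ) * (((k - m : ℕ)) : ℂ) * k)),
            if_pos (Finset.mem_range.mpr (by omega)),
            Nat.cast_sub (by omega : m ≤ k)]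
      _ = (k : ℂ) ^ 2 * (k - 1) * (k + 1) / 6 := by
          have h := hsplit (fun m => (m : ℂ) * ((k : ℂ) - m) * k)
          simp only [Nat.cast_zero, zero_mul, zero_add] at h
          rw [← h]
          have e : ∀ m ∈ Finset.range k, (m : ℂ) * ((k : ℂ) - m) * k
              = (k:ℂ) * (k:ℂ) * (m:ℂ) - (k:ℂ) * (m:ℂ)^2 := fun m _ => by ring
          rw [Finset.sum_congr rfl e, Finset.sum_sub_distrib, ← Finset.mul_sum,
            ← Finset.mul_sum, sumId k, sumSq k]
          ring
  have hTsqIco : ∑ j ∈ Finset.Ico 1 k, (T j) ^ 2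
      = (k : ℂ) ^ 2 * (k - 1) * (k + 1) / 6 - ((k : ℂ) * (k - 1) / 2) ^ 2 := by
    have h := hsplit (fun j => (T j) ^ 2)
    rw [hTsq_range, hT0] at h
    linear_combination -h
  have hterm : ∀ j ∈ Finset.Ico 1 k,
      (1 - ζ ^ j)⁻¹ - ((1 - ζ ^ j)⁻¹) ^ 2 = -(T j)/k - (T j)^2/(k:ℂ)^2 := by
    intro j hj
    rw [ha j hj]
    ring
  rw [Finset.sum_congr rfl hterm, Finset.sum_sub_distrib, ← Finset.sum_div, ← Finset.sum_div,
    Finset.sum_neg_distrib, hTIco, hTsqIco]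
  field_simp
  ring

theorem sum_abs_det_inv_rotation (k : ℕ) (hk : 1 ≤ k) :
    ∑ j ∈ Finset.Ico 1 k, |((1 : Matrix (Fin 2) (Fin 2) ℝ) - (Rot (2 * π / k)) ^ j).det|⁻¹
      = ((k : ℝ) ^ 2 - 1) / 12 := by
  set ζ : ℂ := Complex.exp (2 * Real.pi * Complex.I / k) with hζ
  have hk0 : (k : ℂ) ≠ 0 := Nat.cast_ne_zero.mpr (by omega)
  have hterm : ∀ j ∈ Finset.Ico 1 k,
      ((|((1 : Matrix (Fin 2) (Fin 2) ℝ) - (Rot (2 * Real.pi / k)) ^ j).det|⁻¹ : ℝ) : ℂ)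
        = (1 - ζ ^ j)⁻¹ - ((1 - ζ ^ j)⁻¹) ^ 2 := by
    intro j hj
    simp only [Finset.mem_Ico] at hj
    set φ : ℝ := (j : ℝ) * (2 * Real.pi / k) with hφ
    have hdet : ((1 : Matrix (Fin 2) (Fin 2) ℝ) - (Rot (2 * Real.pi / k)) ^ j).det
        = 2 - 2 * Real.cos φ := by rw [rot_pow, det_one_sub_rot]
    have habs : |((1 : Matrix (Fin 2) (Fin 2) ℝ) - (Rot (2 * Real.pi / k)) ^ j).det|
        = 2 - 2 * Real.cos φ := by
      rw [hdet]
      exact abs_of_nonneg (by nlinarith [Real.cos_le_one φ])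
    -- w = ζ ^ j = exp(φ I)
    have hw : ζ ^ j = Complex.exp ((φ : ℂ) * Complex.I) := by
      rw [hζ, ← Complex.exp_nat_mul]
      congr 1
      rw [hφ]
      push_cast
      field_simp
    have hw0 : ζ ^ j ≠ 0 := by rw [hw]; exact Complex.exp_ne_zero _
    have hw1 : ζ ^ j ≠ 1 := by
      intro h
      have := Nat.eq_zero_of_dvd_of_lt ((zeta_pow_eq_one_iff k hk j).mp (hζ ▸ h)) hj.2
      omega
    have hcast : ((2 - 2 * Real.cos φ : ℝ) : ℂ) = 2 - (ζ ^ j + (ζ ^ j)⁻¹) := by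
      push_cast [Complex.ofReal_cos]
      rw [hw, ← Complex.exp_neg]
      rw [show -((φ:ℂ) * Complex.I) = -(φ:ℂ) * Complex.I from by ring]
      rw [Complex.cos]
      ring
    rw [habs, Complex.ofReal_inv, hcast]
    have h2 : (1 : ℂ) - ζ ^ j ≠ 0 := sub_ne_zero.mpr (Ne.symm hw1)
    have h3 : (2 : ℂ) - (ζ ^ j + (ζ ^ j)⁻¹) = (1 - ζ ^ j) ^ 2 / (-(ζ ^ j)) := by
      rw [div_neg, eq_neg_iff_add_eq_zero]
      field_simp
      ring
    rw [h3, inv_div, div_eq_iff (pow_ne_zero 2 h2)]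
    field_simp
    ring
  have hsum := Finset.sum_congr rfl hterm
  rw [key k hk] at hsum
  have : ((∑ j ∈ Finset.Ico 1 k,
      |((1 : Matrix (Fin 2) (Fin 2) ℝ) - (Rot (2 * Real.pi / k)) ^ j).det|⁻¹ : ℝ) : ℂ)
      = ((k : ℂ) ^ 2 - 1) / 12 := by
    rw [Complex.ofReal_sum]
    exact hsum
  exact_mod_cast this
end

section
/- For a > 0, b a natural number, ε > 0, and N ≥ (b+1)/2, as t → 0⁺ one has ∫₀^ε e^{-x²a²/t} x^b dx = Γ((b+1)/2)/(2a^{b+1}) · t^{(b+1)/2} + O((t/(ε²a²))^N). -/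
open Real MeasureTheory Filter Asymptotics Topology Set

lemma aux_integrable (b : ℕ) {c : ℝ} (hc : 0 < c) :
    IntegrableOn (fun x : ℝ => Real.exp (-c * x ^ 2) * x ^ b) (Set.Ioi 0) := by
  have h := integrableOn_rpow_mul_exp_neg_mul_sq hc
    (s := (b:ℝ)) (lt_of_lt_of_le neg_one_lt_zero (Nat.cast_nonneg b))
  simpa [mul_comm, Real.rpow_natCast] using h

lemma aux_full (b : ℕ) {c : ℝ} (hc : 0 < c) :
    ∫ x in Set.Ioi (0:ℝ), Real.exp (-c * x ^ 2) * x ^ b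
      = Real.Gamma (((b:ℝ)+1)/2) * (1/c) ^ (((b:ℝ)+1)/2) / 2 := by
  set s : ℝ := ((b:ℝ)+1)/2 with hsdef
  have hs : 0 < s := by positivity
  have h1 := integral_rpow_mul_exp_neg_mul_Ioi hs hc
  have h2 := integral_comp_rpow_Ioi
    (g := fun y : ℝ => y ^ (s - 1) * Real.exp (-(c*y))) (p := 2) two_ne_zero
  rw [h1] at h2
  have h3 : ∫ x in Set.Ioi (0:ℝ),
      (|(2:ℝ)| * x ^ ((2:ℝ) - 1)) • ((x ^ (2:ℝ)) ^ (s - 1) * Real.exp (-(c * x ^ (2:ℝ))))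
      = ∫ x in Set.Ioi (0:ℝ), 2 * (Real.exp (-c * x ^ 2) * x ^ b) := by
    refine setIntegral_congr_fun measurableSet_Ioi (fun x hx => ?_)
    have hx0 : (0:ℝ) < x := hx
    have hx2 : x ^ (2:ℝ) = x ^ 2 := by
      rw [show (2:ℝ) = ((2:ℕ):ℝ) by norm_num, Real.rpow_natCast]
    have hpow : (x ^ (2:ℝ)) ^ (s - 1) = x ^ ((2:ℝ) * (s - 1)) :=
      (Real.rpow_mul hx0.le 2 (s - 1)).symm
    have hb1 : (2:ℝ) * (s - 1) = (b:ℝ) - 1 := by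
      simp only [hsdef]; ring
    have hxb : x * x ^ ((b:ℝ) - 1) = x ^ b := by
      nth_rewrite 1 [← Real.rpow_one x]
      rw [← Real.rpow_add hx0, ← Real.rpow_natCast x b]
      norm_num
    rw [hpow, hb1, hx2]
    simp only [smul_eq_mul]
    rw [show ((2:ℝ) - 1) = (1:ℝ) by norm_num, Real.rpow_one]
    rw [show -(c * x ^ 2) = -c * x ^ 2 by ring]
    rw [← hxb]; ring_nf
  rw [h3, integral_const_mul] at h2
  linarith [h2]

lemma aux_tail (b : ℕ) {c ε : ℝ} (hc : 0 < c) (hε : 0 < ε) :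
    ∫ x in Set.Ioi ε, Real.exp (-c * x ^ 2) * x ^ b
      ≤ Real.exp (-(c * ε ^ 2) / 2) *
        (Real.Gamma (((b:ℝ)+1)/2) * (1/(c/2)) ^ (((b:ℝ)+1)/2) / 2) := by
  have hc2 : 0 < c / 2 := half_pos hc
  have hint2 : IntegrableOn (fun x : ℝ => Real.exp (-(c/2) * x ^ 2) * x ^ b) (Set.Ioi 0) :=
    aux_integrable b hc2
  have hint2' : IntegrableOn
      (fun x : ℝ => Real.exp (-(c*ε^2)/2) * (Real.exp (-(c/2) * x ^ 2) * x ^ b)) (Set.Ioi 0) :=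
    hint2.const_mul _
  calc ∫ x in Set.Ioi ε, Real.exp (-c * x ^ 2) * x ^ b
      ≤ ∫ x in Set.Ioi ε,
          Real.exp (-(c*ε^2)/2) * (Real.exp (-(c/2) * x ^ 2) * x ^ b) := by
        refine setIntegral_mono_on
          ((aux_integrable b hc).mono_set (Set.Ioi_subset_Ioi hε.le))
          (hint2'.mono_set (Set.Ioi_subset_Ioi hε.le)) measurableSet_Ioi
          (fun x hx => ?_)
        have hx0 : (0:ℝ) < x := hε.trans hx
        have hxb : (0:ℝ) ≤ x ^ b := by positivity
        have hexp : Real.exp (-c * x ^ 2) ≤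
            Real.exp (-(c*ε^2)/2) * Real.exp (-(c/2) * x ^ 2) := by
          rw [← Real.exp_add, Real.exp_le_exp]
          have hxε : ε < x := hx
          have hsq : ε ^ 2 ≤ x ^ 2 := by nlinarith
          have h2 : c * ε ^ 2 ≤ c * x ^ 2 := mul_le_mul_of_nonneg_left hsq hc.le
          linarith
        calc Real.exp (-c * x ^ 2) * x ^ b
            ≤ (Real.exp (-(c*ε^2)/2) * Real.exp (-(c/2) * x ^ 2)) * x ^ b :=
              mul_le_mul_of_nonneg_right hexp hxb
          _ = Real.exp (-(c*ε^2)/2) * (Real.exp (-(c/2) * x ^ 2) * x ^ b) := by ring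
    _ ≤ ∫ x in Set.Ioi (0:ℝ),
          Real.exp (-(c*ε^2)/2) * (Real.exp (-(c/2) * x ^ 2) * x ^ b) := by
        refine setIntegral_mono_set hint2' ?_
          (HasSubset.Subset.eventuallyLE (Set.Ioi_subset_Ioi hε.le))
        filter_upwards [self_mem_ae_restrict measurableSet_Ioi] with x hx
        have hx0 : (0:ℝ) < x := hx
        positivity
    _ = Real.exp (-(c*ε^2)/2) *
        (Real.Gamma (((b:ℝ)+1)/2) * (1/(c/2)) ^ (((b:ℝ)+1)/2) / 2) := by
        rw [integral_const_mul, aux_full b hc2]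

lemma aux_exp_neg_le (M : ℕ) {u : ℝ} (hu0 : 0 < u) :
    Real.exp (-(1/(2*u))) ≤ (M.factorial : ℝ) * 2 ^ M * u ^ M := by
  have h2u : (0:ℝ) < 2*u := by positivity
  have hp := Real.pow_div_factorial_le_exp (x := 1/(2*u)) (by positivity) M
  have key : Real.exp (-(1/(2*u))) * ((1/(2*u))^M / (M.factorial:ℝ)) ≤ 1 := by
    calc Real.exp (-(1/(2*u))) * ((1/(2*u))^M / (M.factorial:ℝ))
        ≤ Real.exp (-(1/(2*u))) * Real.exp (1/(2*u)) :=
          mul_le_mul_of_nonneg_left hp (Real.exp_nonneg _)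
      _ = 1 := by rw [← Real.exp_add]; simp
  have hfac : (0:ℝ) < (M.factorial:ℝ) := by positivity
  calc Real.exp (-(1/(2*u)))
      = (Real.exp (-(1/(2*u))) * ((1/(2*u))^M / (M.factorial:ℝ))) *
          ((M.factorial:ℝ) * (2*u)^M) := by
        field_simp
        rw [← mul_pow, one_div, inv_mul_cancel₀ h2u.ne', one_pow]
      _ ≤ 1 * ((M.factorial:ℝ) * (2*u)^M) :=
        mul_le_mul_of_nonneg_right key (by positivity)
      _ = (M.factorial:ℝ) * 2 ^ M * u ^ M := by rw [one_mul, mul_pow]; ring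

theorem integral_gaussian_moment_asymptotics
    (a : ℝ) (ha : 0 < a) (b : ℕ) (ε : ℝ) (hε : 0 < ε) (N : ℝ)
    (hN : ((b : ℝ) + 1) / 2 ≤ N) :
    (fun t : ℝ =>
        (∫ x in (0:ℝ)..ε, Real.exp (-x ^ 2 * a ^ 2 / t) * x ^ b) -
          Real.Gamma (((b : ℝ) + 1) / 2) / (2 * a ^ (b + 1)) * t ^ (((b : ℝ) + 1) / 2))
      =O[𝓝[>] 0] fun t : ℝ => (t / (ε ^ 2 * a ^ 2)) ^ N := by
  have hs : 0 < ((b:ℝ)+1)/2 := by positivity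
  set M := ⌈N⌉₊ with hM
  have hNM : N ≤ (M:ℝ) := Nat.le_ceil N
  rw [isBigO_iff]
  refine ⟨Real.Gamma (((b:ℝ)+1)/2) * (2*ε^2) ^ (((b:ℝ)+1)/2) / 2 *
    ((M.factorial : ℝ) * 2 ^ M), ?_⟩
  have hmem : Set.Ioo (0:ℝ) (ε^2*a^2) ∈ 𝓝[>] (0:ℝ) :=
    Ioo_mem_nhdsGT_of_mem ⟨le_rfl, by positivity⟩
  filter_upwards [hmem] with t ht
  obtain ⟨ht0, ht1⟩ := ht
  have ht0' : t ≠ 0 := ht0.ne'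
  have hc : 0 < a^2/t := by positivity
  have hu0 : 0 < t / (ε^2*a^2) := by positivity
  have hu1 : t / (ε^2*a^2) ≤ 1 := by
    rw [div_le_one (by positivity)]; exact ht1.le
  -- rewrite the integrand
  have hfeq : ∀ x : ℝ, Real.exp (-x^2*a^2/t) * x^b = Real.exp (-(a^2/t)*x^2) * x^b :=
    fun x => by rw [show -x^2*a^2/t = -(a^2/t)*x^2 by ring]
  rw [intervalIntegral.integral_of_le hε.le]
  simp only [hfeq]
  -- split the integral
  have hInt := aux_integrable b hc
  have hIoc : IntegrableOn (fun x:ℝ => Real.exp (-(a^2/t)*x^2) * x^b) (Set.Ioc 0 ε) :=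
    hInt.mono_set Set.Ioc_subset_Ioi_self
  have hTail : IntegrableOn (fun x:ℝ => Real.exp (-(a^2/t)*x^2) * x^b) (Set.Ioi ε) :=
    hInt.mono_set (Set.Ioi_subset_Ioi hε.le)
  have hsplit : (∫ x in Set.Ioc (0:ℝ) ε, Real.exp (-(a^2/t)*x^2) * x^b)
      = (∫ x in Set.Ioi (0:ℝ), Real.exp (-(a^2/t)*x^2) * x^b)
        - ∫ x in Set.Ioi ε, Real.exp (-(a^2/t)*x^2) * x^b := by
    have hsum : (∫ x in Set.Ioi (0:ℝ), Real.exp (-(a^2/t)*x^2) * x^b)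
        = (∫ x in Set.Ioc (0:ℝ) ε, Real.exp (-(a^2/t)*x^2) * x^b)
          + ∫ x in Set.Ioi ε, Real.exp (-(a^2/t)*x^2) * x^b := by
      rw [← Set.Ioc_union_Ioi_eq_Ioi hε.le]
      exact setIntegral_union (Set.Ioc_disjoint_Ioi le_rfl) measurableSet_Ioi hIoc hTail
    linarith
  have hfull := aux_full b hc
  have hmain : Real.Gamma (((b:ℝ)+1)/2) * (1/(a^2/t)) ^ (((b:ℝ)+1)/2) / 2
      = Real.Gamma (((b:ℝ)+1)/2) / (2*a^(b+1)) * t ^ (((b:ℝ)+1)/2) := by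
    have h1 : (1:ℝ)/(a^2/t) = t/a^2 := by field_simp
    have h3 : ((a:ℝ)^2) ^ (((b:ℝ)+1)/2) = a ^ (b+1) := by
      rw [← Real.rpow_natCast a 2, ← Real.rpow_mul ha.le, ← Real.rpow_natCast a (b+1)]
      congr 1
      push_cast
      ring
    rw [h1, Real.div_rpow ht0.le (by positivity), h3]
    ring
  rw [hsplit, hfull, hmain]
  rw [show Real.Gamma (((b:ℝ)+1)/2) / (2*a^(b+1)) * t ^ (((b:ℝ)+1)/2)
        - (∫ x in Set.Ioi ε, Real.exp (-(a^2/t)*x^2) * x^b)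
        - Real.Gamma (((b:ℝ)+1)/2) / (2*a^(b+1)) * t ^ (((b:ℝ)+1)/2)
      = -(∫ x in Set.Ioi ε, Real.exp (-(a^2/t)*x^2) * x^b) by ring]
  rw [norm_neg, Real.norm_eq_abs, Real.norm_eq_abs,
    abs_of_nonneg (setIntegral_nonneg measurableSet_Ioi
      (fun x hx => by have : (0:ℝ) < x := hε.trans hx; positivity)),
    abs_of_pos (Real.rpow_pos_of_pos hu0 N)]
  -- the tail estimate
  have heq1 : -((a^2/t) * ε^2)/2 = -(1/(2*(t/(ε^2*a^2)))) := by
    field_simp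
  have heq2 : (1:ℝ)/((a^2/t)/2) = (2*ε^2) * (t/(ε^2*a^2)) := by
    field_simp
  have hexp := aux_exp_neg_le M hu0
  have huN : (t/(ε^2*a^2)) ^ M ≤ (t/(ε^2*a^2)) ^ N := by
    rw [← Real.rpow_natCast (t/(ε^2*a^2)) M]
    exact Real.rpow_le_rpow_of_exponent_ge hu0 hu1 hNM
  have hus : (t/(ε^2*a^2)) ^ (((b:ℝ)+1)/2) ≤ 1 :=
    Real.rpow_le_one hu0.le hu1 hs.le
  calc (∫ x in Set.Ioi ε, Real.exp (-(a^2/t)*x^2) * x^b)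
      ≤ Real.exp (-((a^2/t) * ε^2)/2) *
        (Real.Gamma (((b:ℝ)+1)/2) * (1/((a^2/t)/2)) ^ (((b:ℝ)+1)/2) / 2) :=
        aux_tail b hc hε
    _ = Real.exp (-(1/(2*(t/(ε^2*a^2))))) *
        (Real.Gamma (((b:ℝ)+1)/2) *
          ((2*ε^2) ^ (((b:ℝ)+1)/2) * (t/(ε^2*a^2)) ^ (((b:ℝ)+1)/2)) / 2) := by
        rw [heq1, heq2, Real.mul_rpow (by positivity) hu0.le]
    _ ≤ ((M.factorial : ℝ) * 2 ^ M * (t/(ε^2*a^2)) ^ M) *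
        (Real.Gamma (((b:ℝ)+1)/2) * ((2*ε^2) ^ (((b:ℝ)+1)/2) * 1) / 2) := by
        have hg : (0:ℝ) ≤ Real.Gamma (((b:ℝ)+1)/2) := Real.Gamma_nonneg_of_nonneg hs.le
        have h2e : (0:ℝ) ≤ (2*ε^2) ^ (((b:ℝ)+1)/2) := by positivity
        have hu' : (0:ℝ) ≤ (t/(ε^2*a^2)) ^ (((b:ℝ)+1)/2) := by positivity
        apply mul_le_mul hexp _ (by positivity) (by positivity)
        apply div_le_div_of_nonneg_right ?_ (by norm_num)
        exact mul_le_mul_of_nonneg_left (mul_le_mul_of_nonneg_left hus h2e) hg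
    _ ≤ ((M.factorial : ℝ) * 2 ^ M * (t/(ε^2*a^2)) ^ N) *
        (Real.Gamma (((b:ℝ)+1)/2) * ((2*ε^2) ^ (((b:ℝ)+1)/2) * 1) / 2) := by
        apply mul_le_mul_of_nonneg_right (mul_le_mul_of_nonneg_left huN (by positivity))
        have hg : (0:ℝ) ≤ Real.Gamma (((b:ℝ)+1)/2) := Real.Gamma_nonneg_of_nonneg hs.le
        positivity
    _ = Real.Gamma (((b:ℝ)+1)/2) * (2*ε^2) ^ (((b:ℝ)+1)/2) / 2 *
        ((M.factorial : ℝ) * 2 ^ M) * (t/(ε^2*a^2)) ^ N := by ring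
end

section
/- With I₁(t, ε) = ∫₀^ε ∫₀^π e^{-(r²/(2t))(1-cos θ)} dθ · 2r dr, the change of variables cos θ = (x-s)/(x+s) with s = t/ε² yields I₁(t, ε) = ε√t · F(t/ε²), where F(s) = ∫₀^∞ (1 - e^{-1/(x+s)})/√x dx. -/
open Real MeasureTheory intervalIntegral

theorem I1_eq_eps_sqrt_t_F (t ε : ℝ) (ht : 0 < t) (hε : 0 < ε) :
    (∫ r in (0:ℝ)..ε, (∫ θ in (0:ℝ)..π, Real.exp (-(r ^ 2 / (2 * t)) * (1 - Real.cos θ))) * (2 * r))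
      = ε * Real.sqrt t *
          ∫ x in Set.Ioi (0:ℝ), (1 - Real.exp (-1 / (x + t / ε ^ 2))) / Real.sqrt x := by
  have hπ := Real.pi_pos
  set s : ℝ := t / ε ^ 2 with hs_def
  have hs : 0 < s := by positivity
  -- cosine bounds
  have hcoslt : ∀ θ : ℝ, 0 < θ → θ ≤ π → Real.cos θ < 1 := by
    intro θ h1 h2
    have := Real.strictAntiOn_cos ⟨le_rfl, hπ.le⟩ ⟨h1.le, h2⟩ h1
    simpa using this
  have hcosgt : ∀ θ : ℝ, 0 ≤ θ → θ < π → -1 < Real.cos θ := by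
    intro θ h1 h2
    have := Real.strictAntiOn_cos ⟨h1, h2.le⟩ ⟨hπ.le, le_rfl⟩ h2
    simpa using this
  -- Step 1 : Fubini swap
  have hswap :
      (∫ r in (0:ℝ)..ε, (∫ θ in (0:ℝ)..π,
          Real.exp (-(r ^ 2 / (2 * t)) * (1 - Real.cos θ))) * (2 * r))
        = ∫ θ in Set.Ioc (0:ℝ) π, ∫ r in Set.Ioc (0:ℝ) ε,
            Real.exp (-(r ^ 2 / (2 * t)) * (1 - Real.cos θ)) * (2 * r) := by
    have hcont : Continuous (fun p : ℝ × ℝ =>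
        Real.exp (-(p.1 ^ 2 / (2 * t)) * (1 - Real.cos p.2)) * (2 * p.1)) := by fun_prop
    have hint : Integrable (Function.uncurry fun r θ =>
        Real.exp (-(r ^ 2 / (2 * t)) * (1 - Real.cos θ)) * (2 * r))
        ((volume.restrict (Set.Ioc (0:ℝ) ε)).prod (volume.restrict (Set.Ioc (0:ℝ) π))) := by
      rw [Measure.prod_restrict]
      exact ((hcont.continuousOn.integrableOn_compact
          (isCompact_Icc (a := ((0:ℝ),(0:ℝ))) (b := (ε, π))))).mono_set
        (by rw [Set.Icc_prod_eq]
            exact Set.prod_mono Set.Ioc_subset_Icc_self Set.Ioc_subset_Icc_self)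
    calc (∫ r in (0:ℝ)..ε, (∫ θ in (0:ℝ)..π,
            Real.exp (-(r ^ 2 / (2 * t)) * (1 - Real.cos θ))) * (2 * r))
        = ∫ r in Set.Ioc (0:ℝ) ε, ∫ θ in Set.Ioc (0:ℝ) π,
            Real.exp (-(r ^ 2 / (2 * t)) * (1 - Real.cos θ)) * (2 * r) := by
          rw [intervalIntegral.integral_of_le hε.le]
          refine setIntegral_congr_fun measurableSet_Ioc fun r _ => ?_
          rw [intervalIntegral.integral_of_le hπ.le, ← MeasureTheory.integral_mul_const]
      _ = _ := MeasureTheory.integral_integral_swap hint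
  -- Step 2 : inner r-integral
  have hinner : ∀ θ ∈ Set.Ioc (0:ℝ) π,
      (∫ r in Set.Ioc (0:ℝ) ε, Real.exp (-(r ^ 2 / (2 * t)) * (1 - Real.cos θ)) * (2 * r))
        = 2 * t / (1 - Real.cos θ) * (1 - Real.exp (-(ε ^ 2 / (2 * t)) * (1 - Real.cos θ))) := by
    intro θ hθ
    set c : ℝ := 1 - Real.cos θ with hc_def
    have hc : 0 < c := by
      have := hcoslt θ hθ.1 hθ.2; simp only [hc_def]; linarith
    rw [← intervalIntegral.integral_of_le hε.le]
    have h : ∀ r : ℝ, HasDerivAt (fun r : ℝ => -(2 * t / c) * Real.exp (-(r ^ 2 / (2 * t)) * c))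
        (Real.exp (-(r ^ 2 / (2 * t)) * c) * (2 * r)) r := by
      intro r
      have h1 : HasDerivAt (fun r : ℝ => -(r ^ 2 / (2 * t)) * c) (-(2 * r / (2 * t)) * c) r := by
        have := ((hasDerivAt_pow 2 r).div_const (2 * t)).neg.mul_const c
        simpa using this
      have := (h1.exp).const_mul (-(2 * t / c))
      refine this.congr_deriv ?_
      field_simp
    rw [intervalIntegral.integral_eq_sub_of_hasDerivAt (fun r _ => h r)
      ((Continuous.intervalIntegrable (by fun_prop) _ _))]
    simp
    ring
  -- the change of variables map
  set φ : ℝ → ℝ := fun θ => s * (1 + Real.cos θ) / (1 - Real.cos θ) with hφ_def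
  have himg : φ '' Set.Ioo 0 π = Set.Ioi (0:ℝ) := by
    ext x
    constructor
    · rintro ⟨θ, hθ, rfl⟩
      have h1 := hcoslt θ hθ.1 hθ.2.le
      have hnum : 0 < s * (1 + Real.cos θ) := by
        have := hcosgt θ hθ.1.le hθ.2; nlinarith
      have hden : (0:ℝ) < 1 - Real.cos θ := by linarith
      exact Set.mem_Ioi.2 (div_pos hnum hden)
    · intro hx
      have hx : (0:ℝ) < x := hx
      have hxs : 0 < x + s := by linarith
      have h1 : (x - s) / (x + s) < 1 := by rw [div_lt_one hxs]; linarith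
      have h2 : -1 < (x - s) / (x + s) := by rw [lt_div_iff₀ hxs]; linarith
      refine ⟨Real.arccos ((x - s) / (x + s)), ⟨?_, ?_⟩, ?_⟩
      · exact Real.arccos_pos.2 h1
      · exact lt_of_le_of_ne (Real.arccos_le_pi _) fun h => by
          have := Real.arccos_eq_pi.1 h; linarith [h2]
      · show s * (1 + Real.cos _) / (1 - Real.cos _) = x
        rw [Real.cos_arccos h2.le h1.le]
        have hd : 1 - (x - s) / (x + s) = 2 * s / (x + s) := by field_simp; ring
        rw [hd, div_eq_iff (by positivity)]
        field_simp
        ring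
  have hderiv : ∀ θ ∈ Set.Ioo (0:ℝ) π,
      HasDerivWithinAt φ (-2 * s * Real.sin θ / (1 - Real.cos θ) ^ 2) (Set.Ioo 0 π) θ := by
    intro θ hθ
    have h1 := hcoslt θ hθ.1 hθ.2.le
    have hden : 1 - Real.cos θ ≠ 0 := by intro h; nlinarith
    have hu : HasDerivAt (fun θ : ℝ => s * (1 + Real.cos θ)) (s * (-Real.sin θ)) θ := by
      simpa using ((Real.hasDerivAt_cos θ).const_add 1).const_mul s
    have hv : HasDerivAt (fun θ : ℝ => 1 - Real.cos θ) (Real.sin θ) θ := by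
      simpa using ((Real.hasDerivAt_cos θ).const_sub 1)
    have h := hu.div hv hden
    have h2 : HasDerivAt φ (-2 * s * Real.sin θ / (1 - Real.cos θ) ^ 2) θ := by
      refine h.congr_deriv ?_
      field_simp
      ring
    exact h2.hasDerivWithinAt
  have hinj : Set.InjOn φ (Set.Ioo 0 π) := by
    intro a ha b hb hab
    have h1a := hcoslt a ha.1 ha.2.le
    have h1b := hcoslt b hb.1 hb.2.le
    have hda : 1 - Real.cos a ≠ 0 := by intro h; nlinarith
    have hdb : 1 - Real.cos b ≠ 0 := by intro h; nlinarith
    have hcc : Real.cos a = Real.cos b := by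
      simp only [hφ_def] at hab
      field_simp at hab
      nlinarith [hab]
    exact Real.injOn_cos ⟨ha.1.le, ha.2.le⟩ ⟨hb.1.le, hb.2.le⟩ hcc
  -- change of variables
  have hcov : (∫ x in Set.Ioi (0:ℝ), (1 - Real.exp (-1 / (x + s))) / Real.sqrt x)
      = ∫ θ in Set.Ioo (0:ℝ) π, |(-2 * s * Real.sin θ / (1 - Real.cos θ) ^ 2)| •
          ((1 - Real.exp (-1 / (φ θ + s))) / Real.sqrt (φ θ)) := by
    rw [← himg]
    exact integral_image_eq_integral_abs_deriv_smul measurableSet_Ioo hderiv hinj _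
  rw [hswap, hcov, ← MeasureTheory.integral_const_mul,
    setIntegral_congr_fun measurableSet_Ioc hinner, integral_Ioc_eq_integral_Ioo]
  refine (setIntegral_congr_fun measurableSet_Ioo fun θ hθ => ?_).symm
  -- pointwise algebra
  show ε * Real.sqrt t * (|(-2 * s * Real.sin θ / (1 - Real.cos θ) ^ 2)| •
      ((1 - Real.exp (-1 / (φ θ + s))) / Real.sqrt (φ θ)))
    = 2 * t / (1 - Real.cos θ) * (1 - Real.exp (-(ε ^ 2 / (2 * t)) * (1 - Real.cos θ)))
  rw [smul_eq_mul]
  simp only [hφ_def]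
  set c : ℝ := Real.cos θ with hc_def
  have hc2 : c < 1 := hcoslt θ hθ.1 hθ.2.le
  have hc1 : -1 < c := hcosgt θ hθ.1.le hθ.2
  have hsinpos : 0 < Real.sin θ := Real.sin_pos_of_pos_of_lt_pi hθ.1 hθ.2
  have h1c : (0:ℝ) < 1 - c := by linarith
  have h1c' : (0:ℝ) < 1 + c := by linarith
  set A : ℝ := Real.sqrt (1 - c) with hA_def
  set B : ℝ := Real.sqrt (1 + c) with hB_def
  set S : ℝ := Real.sqrt s with hS_def
  have hA : A ^ 2 = 1 - c := Real.sq_sqrt h1c.le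
  have hB : B ^ 2 = 1 + c := Real.sq_sqrt h1c'.le
  have hS : S ^ 2 = s := Real.sq_sqrt hs.le
  have hApos : 0 < A := Real.sqrt_pos.2 h1c
  have hBpos : 0 < B := Real.sqrt_pos.2 h1c'
  have hSpos : 0 < S := Real.sqrt_pos.2 hs
  have hsin : Real.sin θ = A * B := by
    rw [Real.sin_eq_sqrt_one_sub_cos_sq hθ.1.le hθ.2.le, ← hc_def, hA_def, hB_def,
      ← Real.sqrt_mul h1c.le]
    ring_nf
  have hsqrtt : Real.sqrt t = ε * S := by
    have htse : t = s * ε ^ 2 := by rw [hs_def]; field_simp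
    rw [htse, Real.sqrt_mul hs.le, Real.sqrt_sq hε.le]; ring
  have hexparg : -1 / (s * (1 + c) / (1 - c) + s) = -(ε ^ 2 / (2 * t)) * (1 - c) := by
    have h2 : s * (1 + c) / (1 - c) + s = 2 * s / (1 - c) := by field_simp; ring
    rw [h2, hs_def]
    field_simp
  have hsqrtφ : Real.sqrt (s * (1 + c) / (1 - c)) = S * B / A := by
    have h3 : s * (1 + c) / (1 - c) = (S * B / A) ^ 2 := by
      rw [div_pow, mul_pow, hA, hB, hS]
    rw [h3, Real.sqrt_sq (by positivity)]
  have habs : |(-2 * s * Real.sin θ / (1 - c) ^ 2)| = 2 * s * Real.sin θ / (1 - c) ^ 2 := by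
    rw [abs_div, abs_of_pos (by positivity : (0:ℝ) < (1 - c) ^ 2),
      show -2 * s * Real.sin θ = -(2 * s * Real.sin θ) by ring, abs_neg,
      abs_of_pos (by positivity)]
  have htse' : t = S ^ 2 * ε ^ 2 := by rw [hS, hs_def]; field_simp
  rw [habs, hexparg, hsqrtφ, hsqrtt, hsin, htse']
  rw [← hA, ← hS]
  field_simp
end

section
/- ∑_{m≥0} e^{-m(m+1)t} = (1/√(4πt)) (π + (π/4) t + O(t²)) as t → 0⁺; equivalently, √(4πt) ∑_{m≥0} e^{-m(m+1)t} - π - (π/4)t = O(t²) as t → 0⁺. -/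
open Real Filter Asymptotics Topology

noncomputable section

private lemma summable_nat_exp {c : ℝ} (hc : 0 < c) :
    Summable (fun m : ℕ => Real.exp (-((m : ℝ) * ((m : ℝ) + 1)) * c)) := by
  refine Summable.of_nonneg_of_le (fun m => (Real.exp_pos _).le) (fun m => ?_)
    (summable_geometric_of_lt_one (Real.exp_pos (-c)).le
      (Real.exp_lt_one_iff.2 (by linarith)))
  rw [← Real.exp_nat_mul]
  apply Real.exp_le_exp.2
  nlinarith [Nat.cast_nonneg (α := ℝ) m, mul_nonneg (Nat.cast_nonneg (α := ℝ) m) hc.le, mul_nonneg (mul_nonneg (Nat.cast_nonneg (α := ℝ) m) (Nat.cast_nonneg (α := ℝ) m)) hc.le]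

example : True := trivial



private lemma jacobi_identity {t : ℝ} (ht : 0 < t) :
    (∑' n : ℤ, Real.exp (-((n : ℝ) * ((n : ℝ) + 1)) * t)) =
      Real.sqrt (π / t) *
        ∑' n : ℤ, ((-1 : ℝ) ^ n * Real.exp (t / 4 - π ^ 2 * (n : ℝ) ^ 2 / t)) := by
  have hπ : (0 : ℝ) < π := Real.pi_pos
  have hπ' : (π : ℂ) ≠ 0 := by exact_mod_cast Real.pi_ne_zero
  have ht' : (t : ℂ) ≠ 0 := by exact_mod_cast ht.ne'
  have ha : 0 < (((t / π : ℝ) : ℂ)).re := by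
    rw [Complex.ofReal_re]; positivity
  have key := Complex.tsum_exp_neg_quadratic ha ((-(t / (2 * π)) : ℝ) : ℂ)
  have E1 : ∀ n : ℤ, Complex.exp (-↑π * ((t / π : ℝ) : ℂ) * (n : ℂ) ^ 2 +
      2 * ↑π * ((-(t / (2 * π)) : ℝ) : ℂ) * (n : ℂ)) =
      ((Real.exp (-((n : ℝ) * ((n : ℝ) + 1)) * t) : ℝ) : ℂ) := by
    intro n
    rw [Complex.ofReal_exp]
    congr 1
    push_cast
    field_simp
    ring
  have E2 : ∀ n : ℤ, Complex.exp (-↑π / ((t / π : ℝ) : ℂ) *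
      ((n : ℂ) + Complex.I * ((-(t / (2 * π)) : ℝ) : ℂ)) ^ 2) =
      (((-1 : ℝ) ^ n * Real.exp (t / 4 - π ^ 2 * (n : ℝ) ^ 2 / t) : ℝ) : ℂ) := by
    intro n
    have hexp : -↑π / ((t / π : ℝ) : ℂ) *
        ((n : ℂ) + Complex.I * ((-(t / (2 * π)) : ℝ) : ℂ)) ^ 2 =
        ((t / 4 - π ^ 2 * (n : ℝ) ^ 2 / t : ℝ) : ℂ) + (n : ℂ) * (↑π * Complex.I) := by
      push_cast
      field_simp
      ring_nf
      rw [Complex.I_sq]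
      ring
    rw [hexp, Complex.exp_add, Complex.exp_int_mul, Complex.exp_pi_mul_I]
    push_cast
    ring
  have hsqrt : (1 : ℂ) / (((t / π : ℝ) : ℂ)) ^ (1 / 2 : ℂ) =
      ((Real.sqrt (π / t) : ℝ) : ℂ) := by
    have h1 : ((t / π : ℝ) : ℂ) ^ (1 / 2 : ℂ) = ((Real.sqrt (t / π) : ℝ) : ℂ) := by
      rw [Real.sqrt_eq_rpow, Complex.ofReal_cpow (by positivity) (1 / 2)]
      norm_num
    rw [h1, ← Complex.ofReal_one, ← Complex.ofReal_div]
    congr 1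
    rw [one_div, ← Real.sqrt_inv, inv_div]
  have := Complex.ofReal_inj (z := ∑' n : ℤ, Real.exp (-((n : ℝ) * ((n : ℝ) + 1)) * t))
    (w := Real.sqrt (π / t) *
      ∑' n : ℤ, ((-1 : ℝ) ^ n * Real.exp (t / 4 - π ^ 2 * (n : ℝ) ^ 2 / t)))
  rw [← this]
  calc ((∑' n : ℤ, Real.exp (-((n : ℝ) * ((n : ℝ) + 1)) * t) : ℝ) : ℂ)
      = ∑' n : ℤ, Complex.exp (-↑π * ((t / π : ℝ) : ℂ) * (n : ℂ) ^ 2 +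
          2 * ↑π * ((-(t / (2 * π)) : ℝ) : ℂ) * (n : ℂ)) := by
        rw [Complex.ofReal_tsum]; exact tsum_congr fun n => (E1 n).symm
    _ = 1 / (((t / π : ℝ) : ℂ)) ^ (1 / 2 : ℂ) * ∑' n : ℤ, Complex.exp (-↑π / ((t / π : ℝ) : ℂ) *
          ((n : ℂ) + Complex.I * ((-(t / (2 * π)) : ℝ) : ℂ)) ^ 2) := key
    _ = ((Real.sqrt (π / t) *
          ∑' n : ℤ, ((-1 : ℝ) ^ n * Real.exp (t / 4 - π ^ 2 * (n : ℝ) ^ 2 / t)) : ℝ) : ℂ) := by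
        rw [hsqrt, Complex.ofReal_mul, Complex.ofReal_tsum]
        congr 1
        exact tsum_congr fun n => E2 n

example : True := trivial

private lemma zsum_eq {t : ℝ} (ht : 0 < t) :
    (∑' n : ℤ, Real.exp (-((n : ℝ) * ((n : ℝ) + 1)) * t)) =
      2 * ∑' m : ℕ, Real.exp (-((m : ℝ) * ((m : ℝ) + 1)) * t) := by
  have hS := summable_nat_exp ht
  have h1 : (fun n : ℕ => Real.exp (-(((n : ℤ) : ℝ) * (((n : ℤ) : ℝ) + 1)) * t)) =
      fun m : ℕ => Real.exp (-((m : ℝ) * ((m : ℝ) + 1)) * t) := by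
    funext n; push_cast; ring_nf
  have h2 : (fun n : ℕ => Real.exp (-(((-(n + 1) : ℤ) : ℝ) * (((-(n + 1) : ℤ) : ℝ) + 1)) * t)) =
      fun m : ℕ => Real.exp (-((m : ℝ) * ((m : ℝ) + 1)) * t) := by
    funext n; push_cast; ring_nf
  rw [tsum_of_nat_of_neg_add_one (by rw [h1]; exact hS) (by rw [h2]; exact hS), h1, h2]
  ring

set_option maxHeartbeats 1000000 in
private lemma theta_tail {t : ℝ} (ht : 0 < t) (ht1 : t ≤ 1) :
    |(∑' n : ℤ, ((-1 : ℝ) ^ n * Real.exp (t / 4 - π ^ 2 * (n : ℝ) ^ 2 / t))) -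
        Real.exp (t / 4)| ≤ 4 * Real.exp (t / 4) * Real.exp (-π ^ 2 / t) := by
  have hπ : (0 : ℝ) < π := Real.pi_pos
  have hπ1 : (1 : ℝ) ≤ π ^ 2 := by nlinarith [Real.pi_gt_three]
  set q : ℝ := Real.exp (-π ^ 2 / t) with hq_def
  have hq0 : 0 < q := Real.exp_pos _
  have hq_half : q ≤ 1 / 2 := by
    have h1 : -π ^ 2 / t ≤ -1 := by
      rw [div_le_iff₀ ht]
      nlinarith
    calc q ≤ Real.exp (-1) := Real.exp_le_exp.2 h1
      _ ≤ 1 / 2 := by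
        rw [Real.exp_neg]
        have := Real.add_one_le_exp 1
        rw [inv_le_comm₀ (Real.exp_pos 1) (by norm_num)]
        linarith
  set g : ℤ → ℝ := fun n => (-1 : ℝ) ^ n * Real.exp (t / 4 - π ^ 2 * (n : ℝ) ^ 2 / t) with hg
  have hone : ∀ k : ℤ, |(-1 : ℝ) ^ k| = 1 := by
    intro k
    rcases Int.even_or_odd k with h | h
    · rw [h.neg_one_zpow, abs_one]
    · rw [h.neg_one_zpow, abs_neg, abs_one]
  have habs : ∀ (k : ℤ) (n : ℕ), ((k : ℝ)) ^ 2 = ((n : ℝ) + 1) ^ 2 →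
      |g k| ≤ Real.exp (t / 4) * q ^ (n + 1) := by
    intro k n hk
    rw [hg]
    simp only
    rw [abs_mul, hone k, one_mul, Real.abs_exp, hk, sub_eq_add_neg, Real.exp_add,
      ← Real.exp_nat_mul]
    gcongr
    have hn0 : (0 : ℝ) ≤ (n : ℝ) := Nat.cast_nonneg n
    push_cast
    rw [show ((n : ℝ) + 1) * (-π ^ 2 / t) = -(((n : ℝ) + 1) * π ^ 2 / t) by ring,
      neg_le_neg_iff, div_le_div_iff₀ ht ht]
    nlinarith [mul_nonneg (mul_nonneg (mul_nonneg (sq_nonneg π) ht.le) hn0)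
      (by linarith : (0 : ℝ) ≤ (n : ℝ) + 1)]
  have hM : Summable (fun n : ℕ => Real.exp (t / 4) * q ^ (n + 1)) := by
    apply Summable.mul_left
    exact (summable_geometric_of_lt_one hq0.le (by linarith)).comp_injective
      (add_left_injective 1)
  have hb1 : ∀ n : ℕ, |g ((n : ℤ) + 1)| ≤ Real.exp (t / 4) * q ^ (n + 1) := fun n =>
    habs _ n (by push_cast; ring)
  have hb2 : ∀ n : ℕ, |g (-((n : ℤ) + 1))| ≤ Real.exp (t / 4) * q ^ (n + 1) := fun n =>
    habs _ n (by push_cast; ring)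
  have habs1 : Summable (fun n : ℕ => |g ((n : ℤ) + 1)|) :=
    Summable.of_nonneg_of_le (fun n => abs_nonneg _) hb1 hM
  have habs2 : Summable (fun n : ℕ => |g (-((n : ℤ) + 1))|) :=
    Summable.of_nonneg_of_le (fun n => abs_nonneg _) hb2 hM
  have hsum1 : Summable (fun n : ℕ => g ((n : ℤ) + 1)) := habs1.of_abs
  have hsum2 : Summable (fun n : ℕ => g (-((n : ℤ) + 1))) := habs2.of_abs
  have hdecomp := tsum_of_add_one_of_neg_add_one hsum1 hsum2
  have hg0 : g 0 = Real.exp (t / 4) := by simp [hg]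
  have htsumM : (∑' n : ℕ, Real.exp (t / 4) * q ^ (n + 1)) ≤ 2 * Real.exp (t / 4) * q := by
    have heq : (∑' n : ℕ, Real.exp (t / 4) * q ^ (n + 1)) =
        Real.exp (t / 4) * q * (1 - q)⁻¹ := by
      have h : ∀ n : ℕ, Real.exp (t / 4) * q ^ (n + 1) = (Real.exp (t / 4) * q) * q ^ n := by
        intro n; ring
      rw [tsum_congr h, tsum_mul_left, tsum_geometric_of_lt_one hq0.le (by linarith)]
    rw [heq]
    have h1q : (1 - q)⁻¹ ≤ 2 := by
      rw [inv_le_comm₀ (by linarith) (by norm_num)]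
      linarith
    have he := Real.exp_pos (t / 4)
    calc Real.exp (t / 4) * q * (1 - q)⁻¹ ≤ Real.exp (t / 4) * q * 2 := by
          apply mul_le_mul_of_nonneg_left h1q (by positivity)
      _ = 2 * Real.exp (t / 4) * q := by ring
  have habs1' : Summable (fun n : ℕ => ‖g ((n : ℤ) + 1)‖) := by
    simpa only [Real.norm_eq_abs] using habs1
  have habs2' : Summable (fun n : ℕ => ‖g (-((n : ℤ) + 1))‖) := by
    simpa only [Real.norm_eq_abs] using habs2
  have hA : |∑' n : ℕ, g ((n : ℤ) + 1)| ≤ 2 * Real.exp (t / 4) * q := by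
    rw [← Real.norm_eq_abs]
    refine le_trans (norm_tsum_le_tsum_norm habs1') (le_trans ?_ htsumM)
    refine Summable.tsum_le_tsum ?_ habs1' hM
    intro n
    rw [Real.norm_eq_abs]
    exact hb1 n
  have hB : |∑' n : ℕ, g (-((n : ℤ) + 1))| ≤ 2 * Real.exp (t / 4) * q := by
    rw [← Real.norm_eq_abs]
    refine le_trans (norm_tsum_le_tsum_norm habs2') (le_trans ?_ htsumM)
    refine Summable.tsum_le_tsum ?_ habs2' hM
    intro n
    rw [Real.norm_eq_abs]
    exact hb2 n
  have hsplit : (∑' n : ℤ, g n) - Real.exp (t / 4) =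
      (∑' n : ℕ, g ((n : ℤ) + 1)) + ∑' n : ℕ, g (-((n : ℤ) + 1)) := by
    rw [hdecomp, hg0]; ring
  rw [show (∑' n : ℤ, ((-1 : ℝ) ^ n * Real.exp (t / 4 - π ^ 2 * (n : ℝ) ^ 2 / t))) =
    ∑' n : ℤ, g n from rfl, hsplit]
  calc |(∑' n : ℕ, g ((n : ℤ) + 1)) + ∑' n : ℕ, g (-((n : ℤ) + 1))|
      ≤ |∑' n : ℕ, g ((n : ℤ) + 1)| + |∑' n : ℕ, g (-((n : ℤ) + 1))| := abs_add_le _ _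
    _ ≤ 2 * Real.exp (t / 4) * q + 2 * Real.exp (t / 4) * q := add_le_add hA hB
    _ = 4 * Real.exp (t / 4) * q := by ring

private lemma exp_neg_inv_le {t : ℝ} (ht : 0 < t) : Real.exp (-(1 / t)) ≤ 4 * t ^ 2 := by
  have h1 : 1 / (2 * t) + 1 ≤ Real.exp (1 / (2 * t)) := Real.add_one_le_exp _
  have h2 : (0 : ℝ) < 1 / (2 * t) := by positivity
  have h3 : (1 / (2 * t)) ^ 2 ≤ Real.exp (1 / t) := by
    have he : Real.exp (1 / t) = Real.exp (1 / (2 * t)) * Real.exp (1 / (2 * t)) := by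
      rw [← Real.exp_add]
      congr 1
      field_simp
      norm_num
    rw [he]
    nlinarith [Real.exp_pos (1 / (2 * t))]
  rw [Real.exp_neg]
  rw [inv_le_comm₀ (Real.exp_pos _) (by positivity)]
  calc (4 * t ^ 2)⁻¹ = (1 / (2 * t)) ^ 2 := by field_simp; ring
    _ ≤ Real.exp (1 / t) := h3

theorem heat_trace_legendre_asymptotics :
    (fun t : ℝ =>
        Real.sqrt (4 * π * t) * (∑' m : ℕ, Real.exp (-((m : ℝ) * ((m : ℝ) + 1)) * t)) -
          π - (π / 4) * t)
      =O[𝓝[>] 0] fun t : ℝ => t ^ 2 := by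
  have hπ : (0 : ℝ) < π := Real.pi_pos
  have hπ1 : (1 : ℝ) ≤ π ^ 2 := by nlinarith [Real.pi_gt_three]
  rw [isBigO_iff]
  use 160
  filter_upwards [Ioo_mem_nhdsGT_of_mem (by norm_num : (0 : ℝ) ∈ Set.Ico 0 1)] with t htm
  obtain ⟨ht0, ht1⟩ := htm
  set S := ∑' m : ℕ, Real.exp (-((m : ℝ) * ((m : ℝ) + 1)) * t) with hS_def
  set Θ := ∑' n : ℤ, ((-1 : ℝ) ^ n * Real.exp (t / 4 - π ^ 2 * (n : ℝ) ^ 2 / t)) with hΘ_def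
  have h2S : 2 * S = Real.sqrt (π / t) * Θ := (zsum_eq ht0).symm.trans (jacobi_identity ht0)
  have hprod : Real.sqrt (4 * π * t) * Real.sqrt (π / t) = 2 * π := by
    rw [← Real.sqrt_mul (by positivity),
      show (4 * π * t) * (π / t) = (2 * π) ^ 2 by field_simp; ring]
    exact Real.sqrt_sq (by positivity)
  have hSval : S = Real.sqrt (π / t) * Θ / 2 := by linarith
  have hkey : Real.sqrt (4 * π * t) * S = π * Θ := by
    rw [hSval, show Real.sqrt (4 * π * t) * (Real.sqrt (π / t) * Θ / 2) =
      Real.sqrt (4 * π * t) * Real.sqrt (π / t) * Θ / 2 by ring, hprod]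
    ring
  have htail := theta_tail ht0 ht1.le
  have hexp : |Real.exp (t / 4) - 1 - t / 4| ≤ (t / 4) ^ 2 := by
    have hb := Real.exp_bound (x := t / 4) (by rw [abs_of_nonneg (by linarith)]; linarith)
      (n := 2) (by norm_num)
    norm_num [Finset.sum_range_succ, Nat.factorial,
      abs_of_nonneg (by linarith : (0:ℝ) ≤ t / 4)] at hb
    have heq : |Real.exp (t / 4) - 1 - t / 4| = |Real.exp (t / 4) - (1 + t / 4)| := by
      congr 1; ring
    rw [heq]
    nlinarith [sq_nonneg (t / 4)]
  have hpiexp : Real.exp (-π ^ 2 / t) ≤ 4 * t ^ 2 := by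
    calc Real.exp (-π ^ 2 / t) ≤ Real.exp (-(1 / t)) := by
          rw [Real.exp_le_exp, neg_div, neg_le_neg_iff, div_le_div_iff₀ ht0 ht0]
          nlinarith
      _ ≤ 4 * t ^ 2 := exp_neg_inv_le ht0
  have hexp3 : Real.exp (t / 4) ≤ 3 := by
    calc Real.exp (t / 4) ≤ Real.exp 1 := Real.exp_le_exp.2 (by linarith)
      _ ≤ 3 := by
        have := Real.exp_one_lt_d9
        linarith
  have hRbound : |Θ - Real.exp (t / 4)| ≤ 48 * t ^ 2 := by
    calc |Θ - Real.exp (t / 4)| ≤ 4 * Real.exp (t / 4) * Real.exp (-π ^ 2 / t) := htail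
      _ ≤ 4 * 3 * (4 * t ^ 2) := by
          apply mul_le_mul (by nlinarith [Real.exp_pos (t/4)]) hpiexp (Real.exp_pos _).le
          norm_num
      _ = 48 * t ^ 2 := by ring
  have hfinal : |π * Θ - π - π / 4 * t| ≤ 160 * t ^ 2 := by
    have hsplit : π * Θ - π - π / 4 * t =
        π * (Real.exp (t / 4) - 1 - t / 4) + π * (Θ - Real.exp (t / 4)) := by ring
    rw [hsplit]
    have hpile : π ≤ 3.15 := by nlinarith [Real.pi_lt_d2]
    calc |π * (Real.exp (t / 4) - 1 - t / 4) + π * (Θ - Real.exp (t / 4))|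
        ≤ |π * (Real.exp (t / 4) - 1 - t / 4)| + |π * (Θ - Real.exp (t / 4))| := abs_add_le _ _
      _ = π * |Real.exp (t / 4) - 1 - t / 4| + π * |Θ - Real.exp (t / 4)| := by
          rw [abs_mul, abs_mul, abs_of_pos hπ]
      _ ≤ π * (t / 4) ^ 2 + π * (48 * t ^ 2) := by
          gcongr
      _ ≤ 160 * t ^ 2 := by nlinarith [sq_nonneg t]
  rw [Real.norm_eq_abs, Real.norm_eq_abs, hkey, abs_of_nonneg (sq_nonneg t)]
  exact hfinal

end
end

section
/- For 0 < ε' < 1, ∫_{-1+ε'}^{1-ε'} (1/4)·(2-z²)/(1-z²)^{3/2} dz = (1/2)((1-ε')/√(1-(1-ε')²) + arcsin(1-ε')), and lim_{ε'→0⁺} [ this integral - 1/(2(π/2 - arcsin(1-ε'))) ] = π/4. -/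
open Real MeasureTheory Filter Topology intervalIntegral

noncomputable def Faux (z : ℝ) : ℝ := (1/4) * (z / Real.sqrt (1 - z^2) + Real.arcsin z)

lemma Faux_hasDerivAt {z : ℝ} (hz : -1 < z) (hz' : z < 1) :
    HasDerivAt Faux ((1 / 4) * (2 - z ^ 2) / (1 - z ^ 2) ^ ((3:ℝ) / 2)) z := by
  have h1 : 0 < 1 - z^2 := by nlinarith
  have hs : 0 < Real.sqrt (1 - z^2) := Real.sqrt_pos.2 h1
  have hs2 : Real.sqrt (1 - z^2) ^ 2 = 1 - z^2 := Real.sq_sqrt h1.le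
  have hq : HasDerivAt (fun z : ℝ => 1 - z^2) (-(2*z)) z := by
    simpa using ((hasDerivAt_pow 2 z).const_sub 1)
  have hsqrt : HasDerivAt (fun z : ℝ => Real.sqrt (1 - z^2)) (-z / Real.sqrt (1 - z^2)) z := by
    have := (Real.hasDerivAt_sqrt h1.ne').comp z hq
    refine this.congr_deriv ?_
    field_simp
  have hdiv : HasDerivAt (fun z : ℝ => z / Real.sqrt (1 - z^2))
      ((1 * Real.sqrt (1-z^2) - z * (-z / Real.sqrt (1-z^2))) / Real.sqrt (1-z^2)^2) z :=
    (hasDerivAt_id z).div hsqrt hs.ne'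
  have harc := Real.hasDerivAt_arcsin (by linarith : z ≠ -1) (by linarith : z ≠ 1)
  have hsum := (hdiv.add harc).const_mul (1/4 : ℝ)
  refine hsum.congr_deriv ?_
  have hrw : (1 - z^2) ^ ((3:ℝ)/2) = (1 - z^2) * Real.sqrt (1 - z^2) := by
    rw [show (3:ℝ)/2 = 1 + 1/2 by norm_num, Real.rpow_add h1, Real.rpow_one,
      Real.sqrt_eq_rpow]
  rw [hrw, hs2]
  field_simp
  nlinarith [hs2, hs]

lemma part1 (ε' : ℝ) (hε' : 0 < ε') (hε1 : ε' < 1) :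
    ∫ z in (-1 + ε')..(1 - ε'), (1 / 4) * (2 - z ^ 2) / (1 - z ^ 2) ^ ((3:ℝ) / 2)
      = (1 / 2) * ((1 - ε') / Real.sqrt (1 - (1 - ε') ^ 2) + Real.arcsin (1 - ε')) := by
  have hle : -1 + ε' ≤ 1 - ε' := by linarith
  have hsub : Set.uIcc (-1 + ε') (1 - ε') ⊆ Set.Ioo (-1:ℝ) 1 := by
    rw [Set.uIcc_of_le hle]
    intro x hx
    exact ⟨by linarith [hx.1], by linarith [hx.2]⟩
  have hint : IntervalIntegrable (fun z => (1 / 4) * (2 - z ^ 2) / (1 - z ^ 2) ^ ((3:ℝ) / 2))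
      volume (-1 + ε') (1 - ε') := by
    apply ContinuousOn.intervalIntegrable
    apply ContinuousOn.div (by fun_prop)
    · apply ContinuousOn.rpow_const (by fun_prop)
      intro x hx
      right; norm_num
    · intro x hx
      have hx' := hsub hx
      have h1 : 0 < 1 - x^2 := by nlinarith [hx'.1, hx'.2]
      exact (Real.rpow_pos_of_pos h1 _).ne'
  have key := intervalIntegral.integral_eq_sub_of_hasDerivAt
    (fun x hx => Faux_hasDerivAt (hsub hx).1 (hsub hx).2) hint
  rw [key]
  have hneg : (-1 + ε') = -(1 - ε') := by ring
  rw [hneg]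
  unfold Faux
  rw [Real.arcsin_neg, show (-(1-ε'))^2 = (1-ε')^2 by ring]
  ring

lemma cot_sub_tendsto :
    Tendsto (fun t : ℝ => (1/2) * (Real.cos t / Real.sin t - 1/t)) (𝓝[>] 0) (𝓝 0) := by
  have hIoo : Set.Ioo (0:ℝ) 1 ∈ 𝓝[>] (0:ℝ) := Ioo_mem_nhdsGT_of_mem ⟨le_refl 0, one_pos⟩
  apply tendsto_of_tendsto_of_tendsto_of_le_of_le' (g := fun t : ℝ => -t) (h := fun _ => (0:ℝ))
  · simpa using ((continuous_neg.tendsto (0:ℝ)).mono_left (nhdsWithin_le_nhds (s := Set.Ioi 0)))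
  · exact tendsto_const_nhds
  · filter_upwards [hIoo] with t ht
    have hpi := Real.pi_gt_three
    have hsin : 0 < Real.sin t := Real.sin_pos_of_pos_of_lt_pi ht.1 (by linarith [ht.2])
    have key : Real.sin t - t * Real.cos t ≤ t^3/2 := by
      nlinarith [Real.sin_lt ht.1, Real.one_sub_sq_div_two_le_cos (x := t), ht.1]
    have hsin2 : t/2 ≤ Real.sin t := by
      nlinarith [Real.sin_gt_sub_cube ht.1, ht.1, ht.2, sq_nonneg t,
        mul_pos ht.1 ht.1]
    have e : (1/2) * (Real.cos t / Real.sin t - 1/t)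
        = (t * Real.cos t - Real.sin t) / (2*(t * Real.sin t)) := by
      field_simp [ht.1.ne', hsin.ne']
    rw [e, le_div_iff₀ (by nlinarith [mul_pos ht.1 hsin])]
    nlinarith [key, mul_le_mul_of_nonneg_left hsin2 (by positivity : (0:ℝ) ≤ 2*t^2), ht.1]
  · filter_upwards [hIoo] with t ht
    have hpi := Real.pi_gt_three
    have hsin : 0 < Real.sin t := Real.sin_pos_of_pos_of_lt_pi ht.1 (by linarith [ht.2])
    have hcos : 0 < Real.cos t := Real.cos_pos_of_mem_Ioo ⟨by linarith [ht.1], by linarith [ht.2]⟩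
    have htan := Real.lt_tan ht.1 (by linarith [ht.2])
    rw [Real.tan_eq_sin_div_cos, lt_div_iff₀ hcos] at htan
    have : Real.cos t / Real.sin t ≤ 1/t := by
      rw [div_le_div_iff₀ hsin ht.1]
      nlinarith
    linarith

theorem integral_and_limit (ε' : ℝ) (hε' : 0 < ε') (hε1 : ε' < 1) :
    (∫ z in (-1 + ε')..(1 - ε'), (1 / 4) * (2 - z ^ 2) / (1 - z ^ 2) ^ ((3:ℝ) / 2)
        = (1 / 2) * ((1 - ε') / Real.sqrt (1 - (1 - ε') ^ 2) + Real.arcsin (1 - ε'))) ∧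
      Filter.Tendsto
        (fun e : ℝ =>
          (∫ z in (-1 + e)..(1 - e), (1 / 4) * (2 - z ^ 2) / (1 - z ^ 2) ^ ((3:ℝ) / 2)) -
            1 / (2 * (π / 2 - Real.arcsin (1 - e))))
        (𝓝[>] 0) (𝓝 (π / 4)) := by
  refine ⟨part1 ε' hε' hε1, ?_⟩
  have hc : Continuous fun e : ℝ => Real.arcsin (1 - e) :=
    Real.continuous_arcsin.comp (continuous_const.sub continuous_id)
  have hθ : Tendsto (fun e : ℝ => π/2 - Real.arcsin (1 - e)) (𝓝[>] 0) (𝓝[>] 0) := by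
    refine tendsto_nhdsWithin_iff.mpr ⟨?_, ?_⟩
    · have hcont : Continuous fun e : ℝ => π/2 - Real.arcsin (1 - e) := continuous_const.sub hc
      have := (hcont.tendsto 0).mono_left (nhdsWithin_le_nhds (s := Set.Ioi (0:ℝ)))
      simpa [Real.arcsin_one] using this
    · filter_upwards [self_mem_nhdsWithin] with e he
      have he' : (0:ℝ) < e := he
      have : Real.arcsin (1 - e) < π/2 := Real.arcsin_lt_pi_div_two.mpr (by linarith)
      simp only [Set.mem_Ioi]
      linarith
  have h1 : Tendsto (fun e : ℝ => (1/2) * Real.arcsin (1 - e)) (𝓝[>] 0) (𝓝 (π/4)) := by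
    have hcont : Continuous fun e : ℝ => (1/2) * Real.arcsin (1 - e) := continuous_const.mul hc
    have heq : π/4 = (1/2) * Real.arcsin (1 - 0) := by
      rw [sub_zero, Real.arcsin_one]; ring
    rw [heq]
    exact (hcont.tendsto 0).mono_left nhdsWithin_le_nhds
  have h2 := cot_sub_tendsto.comp hθ
  have hsum := h1.add h2
  rw [add_zero] at hsum
  apply hsum.congr'
  filter_upwards [Ioo_mem_nhdsGT_of_mem ⟨le_refl (0:ℝ), one_pos⟩] with e he
  rw [part1 e he.1 he.2]
  have hb1 : -1 ≤ 1 - e := by linarith [he.2]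
  have hb2 : 1 - e ≤ 1 := by linarith [he.1]
  have hcos : Real.cos (π/2 - Real.arcsin (1 - e)) = 1 - e := by
    rw [Real.cos_pi_div_two_sub, Real.sin_arcsin hb1 hb2]
  have hsin : Real.sin (π/2 - Real.arcsin (1 - e)) = Real.sqrt (1 - (1 - e)^2) := by
    rw [Real.sin_pi_div_two_sub, Real.cos_arcsin]
  simp only [Function.comp]
  rw [hcos, hsin]
  have hne : π/2 - Real.arcsin (1 - e) ≠ 0 := by
    have : Real.arcsin (1 - e) < π/2 := Real.arcsin_lt_pi_div_two.mpr (by linarith [he.1])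
    linarith
  have hsqpos : 0 < Real.sqrt (1 - (1 - e)^2) := Real.sqrt_pos.2 (by nlinarith [he.1, he.2])
  field_simp
  ring
end

section
/- Suppose f: (0,∞) → ℝ satisfies f(t) = C·t^{-q/2}(1 + o(1)) as t → 0⁺ where f(t) = ∑_{m} e^{-λ_m t} for a nondecreasing sequence 0 ≤ λ₀ ≤ λ₁ ≤ ... tending to infinity, C > 0, q > 0. Then the counting function N(λ) = #{m : λ_m ≤ λ} satisfies N(λ) ~ (C/Γ(q/2 + 1)) λ^{q/2} as λ → ∞. -/
open Real Filter Topology MeasureTheory Set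

lemma km_exp_ident (a t : ℝ) (k : ℕ) :
    Real.exp (-a * t) * Real.exp (-a * t) ^ k = Real.exp (-a * (((k:ℝ)+1) * t)) := by
  rw [← Real.exp_nat_mul, ← Real.exp_add]
  congr 1
  ring

lemma km_delta_tendsto : Tendsto (fun n : ℕ => Real.exp (-1) / ((n:ℝ) + 2)) atTop (𝓝 0) := by
  have h := (tendsto_const_div_atTop_nhds_zero_nat (Real.exp (-1))).comp
    (tendsto_add_atTop_nat 2)
  refine h.congr fun n => ?_
  simp only [Function.comp_apply]
  push_cast
  ring_nf

lemma km_integrand_integrable (p : ℝ) (hp : 0 < p) (h : ℝ → ℝ) (hc : Continuous h) :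
    IntegrableOn (fun s : ℝ => Real.exp (-s) * h (Real.exp (-s)) * s ^ (p - 1)) (Ioi 0) := by
  obtain ⟨M, hM⟩ := isCompact_Icc.exists_bound_of_continuousOn (hc.continuousOn (s := Icc (0:ℝ) 1))
  have hint : Integrable (fun s : ℝ => M * (Real.exp (-s) * s ^ (p - 1)))
      (volume.restrict (Ioi 0)) := (Real.GammaIntegral_convergent hp).const_mul M
  refine Integrable.mono' hint ?_ ?_
  · refine ContinuousOn.aestronglyMeasurable ?_ measurableSet_Ioi
    exact (((Real.continuous_exp.comp continuous_neg).mul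
      (hc.comp (Real.continuous_exp.comp continuous_neg))).continuousOn).mul
      (continuousOn_id.rpow_const fun x hx => Or.inl (ne_of_gt hx))
  · rw [ae_restrict_iff' measurableSet_Ioi]
    filter_upwards with s hs
    have hx : Real.exp (-s) ∈ Icc (0:ℝ) 1 :=
      ⟨(Real.exp_pos _).le, Real.exp_le_one_iff.2 (by simpa using hs.le)⟩
    have h1 : |h (Real.exp (-s))| ≤ M := by simpa using hM _ hx
    have h2 : (0:ℝ) ≤ s ^ (p - 1) := Real.rpow_nonneg hs.le _
    have h3 : (0:ℝ) < Real.exp (-s) := Real.exp_pos _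
    rw [Real.norm_eq_abs, abs_mul, abs_mul, abs_of_pos h3, abs_of_nonneg h2]
    calc Real.exp (-s) * |h (Real.exp (-s))| * s ^ (p - 1)
        ≤ Real.exp (-s) * M * s ^ (p - 1) := by gcongr
      _ = M * (Real.exp (-s) * s ^ (p - 1)) := by ring

lemma km_integral_monomial (p : ℝ) (hp : 0 < p) (k : ℕ) :
    ∫ s in Ioi (0:ℝ), Real.exp (-s) * (Real.exp (-s)) ^ k * s ^ (p - 1)
      = Real.Gamma p * ((k : ℝ) + 1) ^ (-p) := by
  have hc : (0:ℝ) < (k : ℝ) + 1 := by positivity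
  have : ∀ s : ℝ, Real.exp (-s) * (Real.exp (-s)) ^ k * s ^ (p - 1)
      = s ^ (p - 1) * Real.exp (-(((k : ℝ) + 1) * s)) := by
    intro s
    rw [← Real.exp_nat_mul, ← Real.exp_add]
    ring_nf
  simp_rw [this]
  rw [integral_rpow_mul_exp_neg_mul_Ioi hp hc]
  rw [one_div, Real.inv_rpow hc.le, ← Real.rpow_neg hc.le]
  ring

lemma km_indicator_integral (p : ℝ) (hp : 0 < p) :
    ∫ s in Ioi (0:ℝ), (if s ≤ 1 then s ^ (p - 1) else 0) = 1 / p := by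
  have hmeq : ∀ s ∈ Ioi (0:ℝ), (if s ≤ 1 then s ^ (p-1) else (0:ℝ))
      = (Ioc (0:ℝ) 1).indicator (fun s => s ^ (p-1)) s := by
    intro s hs
    by_cases h : s ≤ 1
    · rw [if_pos h, Set.indicator_of_mem (Set.mem_Ioc.2 ⟨hs, h⟩)]
    · rw [if_neg h, Set.indicator_of_notMem (by simp [h])]
  rw [setIntegral_congr_fun measurableSet_Ioi hmeq]
  rw [setIntegral_indicator measurableSet_Ioc]
  have h2 : Ioi (0:ℝ) ∩ Ioc 0 1 = Ioc 0 1 := by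
    ext x
    simp only [mem_inter_iff, mem_Ioi, mem_Ioc, iff_def]
    constructor
    · rintro ⟨_, h⟩; exact h
    · rintro ⟨h1, h2⟩; exact ⟨h1, h1, h2⟩
  rw [h2, ← intervalIntegral.integral_of_le zero_le_one,
    integral_rpow (Or.inl (by linarith))]
  rw [sub_add_cancel, Real.one_rpow, Real.zero_rpow (by linarith : p ≠ 0)]
  norm_num

lemma km_dct (p : ℝ) (hp : 0 < p) (G : ℕ → ℝ → ℝ) (hGc : ∀ n, Continuous (G n))
    (hGb : ∀ n, ∀ x ∈ Ioo (0:ℝ) 1, |G n x| ≤ 2 * Real.exp 1)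
    (hconv : ∀ s ∈ Ioi (0:ℝ), s ≠ 1 → ∀ᶠ n in atTop,
      G n (Real.exp (-s)) = (if Real.exp (-1) ≤ Real.exp (-s) then (Real.exp (-s))⁻¹ else 0)) :
    Tendsto (fun n => ∫ s in Ioi (0:ℝ), Real.exp (-s) * G n (Real.exp (-s)) * s ^ (p - 1))
      atTop (𝓝 (1 / p)) := by
  set f : ℝ → ℝ := fun s => if s ≤ 1 then s ^ (p - 1) else 0 with hf
  have key : Tendsto (fun n => ∫ s in Ioi (0:ℝ), Real.exp (-s) * G n (Real.exp (-s)) * s ^ (p - 1))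
      atTop (𝓝 (∫ s in Ioi (0:ℝ), f s)) := by
    apply MeasureTheory.tendsto_integral_of_dominated_convergence
      (bound := fun s => (2 * Real.exp 1) * (Real.exp (-s) * s ^ (p - 1)))
    · intro n
      exact ((km_integrand_integrable p hp (G n) (hGc n)).aestronglyMeasurable)
    · exact (Real.GammaIntegral_convergent hp).const_mul _
    · intro n
      rw [ae_restrict_iff' measurableSet_Ioi]
      filter_upwards with s hs
      have h3 : (0:ℝ) < Real.exp (-s) := Real.exp_pos _
      have hx : Real.exp (-s) ∈ Ioo (0:ℝ) 1 :=
        ⟨h3, Real.exp_lt_one_iff.2 (by simpa using hs)⟩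
      have h1 : |G n (Real.exp (-s))| ≤ 2 * Real.exp 1 := hGb n _ hx
      have h2 : (0:ℝ) ≤ s ^ (p - 1) := Real.rpow_nonneg (le_of_lt hs) _
      rw [Real.norm_eq_abs, abs_mul, abs_mul, abs_of_pos h3, abs_of_nonneg h2]
      calc Real.exp (-s) * |G n (Real.exp (-s))| * s ^ (p - 1)
          ≤ Real.exp (-s) * (2 * Real.exp 1) * s ^ (p - 1) := by gcongr
        _ = (2 * Real.exp 1) * (Real.exp (-s) * s ^ (p - 1)) := by ring
    · have hne : ∀ᵐ s : ℝ ∂(volume.restrict (Ioi 0)), s ≠ 1 := by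
        apply ae_restrict_of_ae
        rw [ae_iff]
        convert Real.volume_singleton (a := 1) using 2
        ext x; simp
      have hmem := ae_restrict_mem (μ := volume) (measurableSet_Ioi (a := (0:ℝ)))
      filter_upwards [hne, hmem] with s hs1 hs0
      have heq : ∀ᶠ n in atTop,
          Real.exp (-s) * G n (Real.exp (-s)) * s ^ (p - 1) = f s := by
        filter_upwards [hconv s hs0 hs1] with n hn
        rw [hn]
        rcases lt_or_gt_of_ne hs1 with hlt | hgt
        · have : Real.exp (-1) ≤ Real.exp (-s) := Real.exp_le_exp.2 (by linarith)
          rw [if_pos this, hf]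
          simp only [if_pos hlt.le]
          field_simp
        · have : ¬ Real.exp (-1) ≤ Real.exp (-s) := by
            rw [not_le]; exact Real.exp_lt_exp.2 (by linarith)
          rw [if_neg this, hf]
          simp [not_le.2 hgt]
      exact Tendsto.congr' (heq.mono fun n hn => hn.symm) tendsto_const_nhds
  rwa [km_indicator_integral p hp] at key

lemma km_approx_upper (p : ℝ) (hp : 0 < p) (ε : ℝ) (hε : 0 < ε) :
    ∃ g : ℝ → ℝ, Continuous g ∧ (∀ x, 0 ≤ g x) ∧
      (∀ x ∈ Ioc (0:ℝ) 1, (if Real.exp (-1) ≤ x then (1:ℝ) else 0) ≤ x * g x) ∧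
      ∫ s in Ioi (0:ℝ), Real.exp (-s) * g (Real.exp (-s)) * s ^ (p-1) < 1/p + ε := by
  set δ : ℕ → ℝ := fun n => Real.exp (-1) / ((n:ℝ) + 2) with hδ
  have hδpos : ∀ n, 0 < δ n := fun n => by positivity
  have hδle : ∀ n, δ n ≤ Real.exp (-1) / 2 := fun n =>
    div_le_div_of_nonneg_left (Real.exp_pos _).le two_pos (by push_cast; linarith)
  set a : ℕ → ℝ := fun n => Real.exp (-1) - δ n with ha
  have hapos : ∀ n, Real.exp (-1) / 2 ≤ a n := fun n => by
    have := hδle n; simp only [ha]; linarith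
  have hapos' : ∀ n, 0 < a n := fun n => lt_of_lt_of_le (by positivity) (hapos n)
  set G : ℕ → ℝ → ℝ := fun n x => max 0 (min 1 ((x - a n) / δ n)) * (max x (a n))⁻¹ with hG
  have hGc : ∀ n, Continuous (G n) := by
    intro n
    exact (continuous_const.max (continuous_const.min
      ((continuous_id.sub continuous_const).div_const _))).mul
      ((continuous_id.max continuous_const).inv₀
        fun x => ((hapos' n).trans_le (le_max_right x (a n))).ne')
  have hGnn : ∀ n x, 0 ≤ G n x := fun n x =>
    mul_nonneg (le_max_left _ _) (inv_nonneg.2 ((hapos' n).le.trans (le_max_right _ _)))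
  have hGeq : ∀ n x, Real.exp (-1) ≤ x → G n x = x⁻¹ := by
    intro n x hx
    have h1 : (1:ℝ) ≤ (x - a n) / δ n := by
      rw [le_div_iff₀ (hδpos n)]
      simp only [ha]; linarith
    have h2 : a n ≤ x := by
      have := hδpos n; simp only [ha]; linarith
    rw [hG]
    simp only [min_eq_left h1, max_eq_left h2, max_eq_right zero_le_one, one_mul]
  have hGzero : ∀ n x, x < a n → G n x = 0 := by
    intro n x hx
    have h1 : (x - a n) / δ n < 0 := div_neg_of_neg_of_pos (by linarith) (hδpos n)
    have h2 : min 1 ((x - a n) / δ n) ≤ 0 := le_of_lt ((min_le_right _ _).trans_lt h1)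
    rw [hG]
    simp only [max_eq_left h2, zero_mul]
  have hGb : ∀ n, ∀ x ∈ Ioo (0:ℝ) 1, |G n x| ≤ 2 * Real.exp 1 := by
    intro n x _
    rw [abs_of_nonneg (hGnn n x)]
    have hinv : (max x (a n))⁻¹ ≤ (Real.exp (-1) / 2)⁻¹ := by
      apply inv_anti₀ (by positivity)
      exact (hapos n).trans (le_max_right _ _)
    have hval : (Real.exp (-1) / 2)⁻¹ = 2 * Real.exp 1 := by
      rw [Real.exp_neg]; field_simp
    calc G n x ≤ 1 * (Real.exp (-1) / 2)⁻¹ := by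
          apply mul_le_mul (max_le zero_le_one (min_le_left _ _)) hinv
            (inv_nonneg.2 ((hapos' n).le.trans (le_max_right _ _))) zero_le_one
      _ = 2 * Real.exp 1 := by rw [one_mul, hval]
  have hcomp : ∀ n, ∀ x ∈ Ioc (0:ℝ) 1,
      (if Real.exp (-1) ≤ x then (1:ℝ) else 0) ≤ x * G n x := by
    intro n x hx
    by_cases hc : Real.exp (-1) ≤ x
    · rw [if_pos hc, hGeq n x hc, mul_inv_cancel₀ (ne_of_gt hx.1)]
    · rw [if_neg hc]
      exact mul_nonneg hx.1.le (hGnn n x)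
  have hconv : ∀ s ∈ Ioi (0:ℝ), s ≠ 1 → ∀ᶠ n in atTop,
      G n (Real.exp (-s)) = (if Real.exp (-1) ≤ Real.exp (-s) then (Real.exp (-s))⁻¹ else 0) := by
    intro s hs hs1
    rcases lt_or_gt_of_ne hs1 with hlt | hgt
    · have hc : Real.exp (-1) ≤ Real.exp (-s) := Real.exp_le_exp.2 (by linarith)
      exact Eventually.of_forall fun n => by rw [hGeq n _ hc, if_pos hc]
    · have hc : Real.exp (-s) < Real.exp (-1) := Real.exp_lt_exp.2 (by linarith)
      have hev : ∀ᶠ n in atTop, δ n < Real.exp (-1) - Real.exp (-s) :=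
        km_delta_tendsto.eventually_lt_const (by linarith)
      filter_upwards [hev] with n hn
      rw [hGzero n _ (by simp only [ha]; linarith), if_neg (not_le.2 hc)]
  have hdct := km_dct p hp G hGc hGb hconv
  have hev := hdct.eventually_lt_const (lt_add_of_pos_right (1/p) hε)
  obtain ⟨n, hn⟩ := hev.exists
  exact ⟨G n, hGc n, hGnn n, hcomp n, hn⟩

lemma km_approx_lower (p : ℝ) (hp : 0 < p) (ε : ℝ) (hε : 0 < ε) :
    ∃ g : ℝ → ℝ, Continuous g ∧ (∀ x, 0 ≤ g x) ∧
      (∀ x ∈ Ioc (0:ℝ) 1, x * g x ≤ (if Real.exp (-1) ≤ x then (1:ℝ) else 0)) ∧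
      1/p - ε < ∫ s in Ioi (0:ℝ), Real.exp (-s) * g (Real.exp (-s)) * s ^ (p-1) := by
  set δ : ℕ → ℝ := fun n => Real.exp (-1) / ((n:ℝ) + 2) with hδ
  have hδpos : ∀ n, 0 < δ n := fun n => by positivity
  have hepos : (0:ℝ) < Real.exp (-1) := Real.exp_pos _
  set G : ℕ → ℝ → ℝ :=
    fun n x => max 0 (min 1 ((x - Real.exp (-1)) / δ n)) * (max x (Real.exp (-1)))⁻¹ with hG
  have hGc : ∀ n, Continuous (G n) := by
    intro n
    exact (continuous_const.max (continuous_const.min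
      ((continuous_id.sub continuous_const).div_const _))).mul
      ((continuous_id.max continuous_const).inv₀
        fun x => (hepos.trans_le (le_max_right x _)).ne')
  have hGnn : ∀ n x, 0 ≤ G n x := fun n x =>
    mul_nonneg (le_max_left _ _) (inv_nonneg.2 (hepos.le.trans (le_max_right _ _)))
  have hGzero : ∀ n x, x < Real.exp (-1) → G n x = 0 := by
    intro n x hx
    have h1 : (x - Real.exp (-1)) / δ n < 0 := div_neg_of_neg_of_pos (by linarith) (hδpos n)
    have h2 : min 1 ((x - Real.exp (-1)) / δ n) ≤ 0 := le_of_lt ((min_le_right _ _).trans_lt h1)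
    rw [hG]
    simp only [max_eq_left h2, zero_mul]
  have hGb : ∀ n, ∀ x ∈ Ioo (0:ℝ) 1, |G n x| ≤ 2 * Real.exp 1 := by
    intro n x _
    rw [abs_of_nonneg (hGnn n x)]
    have hinv : (max x (Real.exp (-1)))⁻¹ ≤ (Real.exp (-1))⁻¹ :=
      inv_anti₀ hepos (le_max_right _ _)
    calc G n x ≤ 1 * (Real.exp (-1))⁻¹ := by
          apply mul_le_mul (max_le zero_le_one (min_le_left _ _)) hinv
            (inv_nonneg.2 (hepos.le.trans (le_max_right _ _))) zero_le_one
      _ ≤ 2 * Real.exp 1 := by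
          rw [one_mul, Real.exp_neg, inv_inv]
          nlinarith [Real.exp_pos 1]
  have hcomp : ∀ n, ∀ x ∈ Ioc (0:ℝ) 1,
      x * G n x ≤ (if Real.exp (-1) ≤ x then (1:ℝ) else 0) := by
    intro n x hx
    by_cases hc : Real.exp (-1) ≤ x
    · rw [if_pos hc, hG]
      simp only [max_eq_left hc]
      rw [show x * (max 0 (min 1 ((x - Real.exp (-1)) / δ n)) * x⁻¹)
          = max 0 (min 1 ((x - Real.exp (-1)) / δ n)) * (x * x⁻¹) by ring,
        mul_inv_cancel₀ (ne_of_gt hx.1), mul_one]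
      exact max_le zero_le_one (min_le_left _ _)
    · rw [if_neg hc, hGzero n x (not_le.1 hc), mul_zero]
  have hconv : ∀ s ∈ Ioi (0:ℝ), s ≠ 1 → ∀ᶠ n in atTop,
      G n (Real.exp (-s)) = (if Real.exp (-1) ≤ Real.exp (-s) then (Real.exp (-s))⁻¹ else 0) := by
    intro s hs hs1
    rcases lt_or_gt_of_ne hs1 with hlt | hgt
    · have hc : Real.exp (-1) < Real.exp (-s) := Real.exp_lt_exp.2 (by linarith)
      have hev : ∀ᶠ n in atTop, δ n < Real.exp (-s) - Real.exp (-1) :=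
        km_delta_tendsto.eventually_lt_const (by linarith)
      filter_upwards [hev] with n hn
      have h1 : (1:ℝ) ≤ (Real.exp (-s) - Real.exp (-1)) / δ n := by
        rw [le_div_iff₀ (hδpos n)]; linarith
      rw [hG, if_pos hc.le]
      simp only [min_eq_left h1, max_eq_left hc.le, max_eq_right zero_le_one, one_mul]
    · have hc : Real.exp (-s) < Real.exp (-1) := Real.exp_lt_exp.2 (by linarith)
      exact Eventually.of_forall fun n => by
        rw [hGzero n _ hc, if_neg (not_le.2 hc)]
  have hdct := km_dct p hp G hGc hGb hconv
  have hev := hdct.eventually_const_lt (by linarith : 1/p - ε < 1/p)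
  obtain ⟨n, hn⟩ := hev.exists
  exact ⟨G n, hGc n, hGnn n, hcomp n, hn⟩

lemma km_poly_upper (p : ℝ) (hp : 0 < p) (ε : ℝ) (hε : 0 < ε) :
    ∃ P : Polynomial ℝ,
      (∀ x ∈ Ioc (0:ℝ) 1, (if Real.exp (-1) ≤ x then (1:ℝ) else 0) ≤ x * P.eval x) ∧
      ∫ s in Ioi (0:ℝ), Real.exp (-s) * P.eval (Real.exp (-s)) * s ^ (p-1) < 1/p + ε := by
  obtain ⟨g, hgc, hgnn, hgcomp, hgint⟩ := km_approx_upper p hp (ε/2) (by linarith)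
  have hΓ : 0 < Real.Gamma p := Real.Gamma_pos_of_pos hp
  set η : ℝ := ε / (4 * Real.Gamma p) with hη
  have hηpos : 0 < η := by positivity
  obtain ⟨Q, hQ⟩ := exists_polynomial_near_of_continuousOn 0 1 g hgc.continuousOn η hηpos
  refine ⟨Q + Polynomial.C η, ?_, ?_⟩
  · intro x hx
    have hmem : x ∈ Icc (0:ℝ) 1 := ⟨hx.1.le, hx.2⟩
    have h1 := hQ x hmem
    have h2 : g x ≤ Polynomial.eval x (Q + Polynomial.C η) := by
      simp only [Polynomial.eval_add, Polynomial.eval_C]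
      have := abs_lt.1 h1
      linarith [this.1]
    calc (if Real.exp (-1) ≤ x then (1:ℝ) else 0) ≤ x * g x := hgcomp x hx
      _ ≤ x * Polynomial.eval x (Q + Polynomial.C η) := by
          exact mul_le_mul_of_nonneg_left h2 hx.1.le
  · have hle : ∀ s ∈ Ioi (0:ℝ),
        Real.exp (-s) * Polynomial.eval (Real.exp (-s)) (Q + Polynomial.C η) * s ^ (p-1)
          ≤ Real.exp (-s) * g (Real.exp (-s)) * s ^ (p-1)
            + (2*η) * (Real.exp (-s) * s ^ (p-1)) := by
      intro s hs
      have hx : Real.exp (-s) ∈ Icc (0:ℝ) 1 :=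
        ⟨(Real.exp_pos _).le, Real.exp_le_one_iff.2 (by simpa using (le_of_lt hs))⟩
      have h1 := abs_lt.1 (hQ _ hx)
      have h2 : Polynomial.eval (Real.exp (-s)) (Q + Polynomial.C η)
          ≤ g (Real.exp (-s)) + 2*η := by
        simp only [Polynomial.eval_add, Polynomial.eval_C]
        linarith [h1.2]
      have h3 : (0:ℝ) ≤ s ^ (p-1) := Real.rpow_nonneg (le_of_lt hs) _
      have h4 : (0:ℝ) < Real.exp (-s) := Real.exp_pos _
      linarith [mul_le_mul_of_nonneg_right h2 (mul_nonneg h4.le h3)]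
    have hint1 : IntegrableOn (fun s : ℝ =>
        Real.exp (-s) * Polynomial.eval (Real.exp (-s)) (Q + Polynomial.C η) * s ^ (p-1))
        (Ioi 0) := km_integrand_integrable p hp (fun x => Polynomial.eval x (Q + Polynomial.C η)) (Polynomial.continuous (Q + Polynomial.C η))
    have hint2 : IntegrableOn (fun s : ℝ =>
        Real.exp (-s) * g (Real.exp (-s)) * s ^ (p-1) + (2*η) * (Real.exp (-s) * s ^ (p-1)))
        (Ioi 0) :=
      (km_integrand_integrable p hp g hgc).add ((Real.GammaIntegral_convergent hp).const_mul _)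
    have hmono := setIntegral_mono_on hint1 hint2 measurableSet_Ioi hle
    have hsplit : ∫ s in Ioi (0:ℝ),
        (Real.exp (-s) * g (Real.exp (-s)) * s ^ (p-1) + (2*η) * (Real.exp (-s) * s ^ (p-1)))
        = (∫ s in Ioi (0:ℝ), Real.exp (-s) * g (Real.exp (-s)) * s ^ (p-1))
          + (2*η) * Real.Gamma p := by
      rw [integral_add (km_integrand_integrable p hp g hgc)
        ((Real.GammaIntegral_convergent hp).const_mul _), integral_const_mul]
      congr 1
      rw [Real.Gamma_eq_integral hp]
    have hfinal : (2*η) * Real.Gamma p = ε/2 := by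
      rw [hη]; field_simp; ring
    calc ∫ s in Ioi (0:ℝ),
          Real.exp (-s) * Polynomial.eval (Real.exp (-s)) (Q + Polynomial.C η) * s ^ (p-1)
        ≤ (∫ s in Ioi (0:ℝ), Real.exp (-s) * g (Real.exp (-s)) * s ^ (p-1)) + ε/2 := by
          rw [← hfinal]; rw [hsplit] at hmono; exact hmono
      _ < (1/p + ε/2) + ε/2 := by linarith
      _ = 1/p + ε := by ring

lemma km_poly_lower (p : ℝ) (hp : 0 < p) (ε : ℝ) (hε : 0 < ε) :
    ∃ P : Polynomial ℝ,
      (∀ x ∈ Ioc (0:ℝ) 1, x * P.eval x ≤ (if Real.exp (-1) ≤ x then (1:ℝ) else 0)) ∧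
      1/p - ε < ∫ s in Ioi (0:ℝ), Real.exp (-s) * P.eval (Real.exp (-s)) * s ^ (p-1) := by
  obtain ⟨g, hgc, hgnn, hgcomp, hgint⟩ := km_approx_lower p hp (ε/2) (by linarith)
  have hΓ : 0 < Real.Gamma p := Real.Gamma_pos_of_pos hp
  set η : ℝ := ε / (4 * Real.Gamma p) with hη
  have hηpos : 0 < η := by positivity
  obtain ⟨Q, hQ⟩ := exists_polynomial_near_of_continuousOn 0 1 g hgc.continuousOn η hηpos
  refine ⟨Q - Polynomial.C η, ?_, ?_⟩
  · intro x hx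
    have hmem : x ∈ Icc (0:ℝ) 1 := ⟨hx.1.le, hx.2⟩
    have h1 := abs_lt.1 (hQ x hmem)
    have h2 : Polynomial.eval x (Q - Polynomial.C η) ≤ g x := by
      simp only [Polynomial.eval_sub, Polynomial.eval_C]
      linarith [h1.2]
    calc x * Polynomial.eval x (Q - Polynomial.C η) ≤ x * g x :=
          mul_le_mul_of_nonneg_left h2 hx.1.le
      _ ≤ (if Real.exp (-1) ≤ x then (1:ℝ) else 0) := hgcomp x hx
  · have hle : ∀ s ∈ Ioi (0:ℝ),
        Real.exp (-s) * g (Real.exp (-s)) * s ^ (p-1)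
          - (2*η) * (Real.exp (-s) * s ^ (p-1))
          ≤ Real.exp (-s) * Polynomial.eval (Real.exp (-s)) (Q - Polynomial.C η) * s ^ (p-1) := by
      intro s hs
      have hx : Real.exp (-s) ∈ Icc (0:ℝ) 1 :=
        ⟨(Real.exp_pos _).le, Real.exp_le_one_iff.2 (by simpa using (le_of_lt hs))⟩
      have h1 := abs_lt.1 (hQ _ hx)
      have h2 : g (Real.exp (-s)) - 2*η ≤ Polynomial.eval (Real.exp (-s)) (Q - Polynomial.C η) := by
        simp only [Polynomial.eval_sub, Polynomial.eval_C]
        linarith [h1.1]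
      have h3 : (0:ℝ) ≤ s ^ (p-1) := Real.rpow_nonneg (le_of_lt hs) _
      have h4 : (0:ℝ) < Real.exp (-s) := Real.exp_pos _
      linarith [mul_le_mul_of_nonneg_right h2 (mul_nonneg h4.le h3)]
    have hint1 : IntegrableOn (fun s : ℝ =>
        Real.exp (-s) * Polynomial.eval (Real.exp (-s)) (Q - Polynomial.C η) * s ^ (p-1))
        (Ioi 0) := km_integrand_integrable p hp (fun x => Polynomial.eval x (Q - Polynomial.C η)) (Polynomial.continuous (Q - Polynomial.C η))
    have hint2 : IntegrableOn (fun s : ℝ =>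
        Real.exp (-s) * g (Real.exp (-s)) * s ^ (p-1) - (2*η) * (Real.exp (-s) * s ^ (p-1)))
        (Ioi 0) :=
      (km_integrand_integrable p hp g hgc).sub ((Real.GammaIntegral_convergent hp).const_mul _)
    have hmono := setIntegral_mono_on hint2 hint1 measurableSet_Ioi hle
    have hsplit : ∫ s in Ioi (0:ℝ),
        (Real.exp (-s) * g (Real.exp (-s)) * s ^ (p-1) - (2*η) * (Real.exp (-s) * s ^ (p-1)))
        = (∫ s in Ioi (0:ℝ), Real.exp (-s) * g (Real.exp (-s)) * s ^ (p-1))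
          - (2*η) * Real.Gamma p := by
      rw [integral_sub (km_integrand_integrable p hp g hgc)
        ((Real.GammaIntegral_convergent hp).const_mul _), integral_const_mul]
      congr 1
      rw [Real.Gamma_eq_integral hp]
    have hfinal : (2*η) * Real.Gamma p = ε/2 := by
      rw [hη]; field_simp; ring
    rw [hsplit, hfinal] at hmono
    linarith

lemma km_summable (l : ℕ → ℝ) (hl : ∀ m, 0 ≤ l m)
    (hsum : ∀ t : ℝ, 0 < t → Summable fun m : ℕ => Real.exp (-l m * t))
    {t : ℝ} (ht : 0 < t) (h : ℝ → ℝ) {M : ℝ} (hM : ∀ x ∈ Ioc (0:ℝ) 1, |h x| ≤ M) :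
    Summable (fun m : ℕ => Real.exp (-l m * t) * h (Real.exp (-l m * t))) := by
  refine Summable.of_norm_bounded
    ((hsum t ht).mul_left M) (fun m => ?_)
  have hx : Real.exp (-l m * t) ∈ Ioc (0:ℝ) 1 :=
    ⟨Real.exp_pos _, Real.exp_le_one_iff.2 (by nlinarith [hl m])⟩
  rw [Real.norm_eq_abs, abs_mul, abs_of_pos hx.1]
  calc Real.exp (-l m * t) * |h (Real.exp (-l m * t))| ≤ Real.exp (-l m * t) * M := by
        exact mul_le_mul_of_nonneg_left (hM _ hx) hx.1.le
    _ = M * Real.exp (-l m * t) := mul_comm _ _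

lemma km_mono_limit (l : ℕ → ℝ) (C p : ℝ) (hp : 0 < p)
    (hasym : Tendsto (fun t : ℝ => (∑' m : ℕ, Real.exp (-l m * t)) * t ^ p)
      (𝓝[>] 0) (𝓝 C)) (k : ℕ) :
    Tendsto (fun t : ℝ =>
        (∑' m : ℕ, Real.exp (-l m * t) * Real.exp (-l m * t) ^ k) * t ^ p)
      (𝓝[>] 0) (𝓝 (C * ((k:ℝ)+1) ^ (-p))) := by
  set c : ℝ := (k:ℝ) + 1 with hc
  have hcpos : (0:ℝ) < c := by positivity
  have hmul : Tendsto (fun t : ℝ => c * t) (𝓝[>] 0) (𝓝[>] 0) := by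
    apply tendsto_nhdsWithin_of_tendsto_nhds_of_eventually_within
    · have h := (Continuous.tendsto (continuous_const.mul continuous_id (f := fun _ : ℝ => c)) (0:ℝ)).mono_left
        (nhdsWithin_le_nhds (s := Ioi (0:ℝ)))
      simpa [Pi.mul_def] using h
    · filter_upwards [self_mem_nhdsWithin] with t ht
      exact mul_pos hcpos ht
  have h1 := hasym.comp hmul
  have h2 := h1.const_mul (c ^ (-p))
  have h3 : c ^ (-p) * C = C * c ^ (-p) := mul_comm _ _
  rw [h3] at h2
  refine Tendsto.congr' ?_ h2
  filter_upwards [self_mem_nhdsWithin] with t ht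
  simp only [Function.comp_apply]
  have htsum : (∑' m : ℕ, Real.exp (-l m * (c * t)))
      = ∑' m : ℕ, Real.exp (-l m * t) * Real.exp (-l m * t) ^ k := by
    congr 1
    ext m
    rw [km_exp_ident]
  rw [htsum, Real.mul_rpow hcpos.le (le_of_lt ht)]
  have hcc : c ^ (-p) * c ^ p = 1 := by
    rw [← Real.rpow_add hcpos]
    simp
  calc c ^ (-p) * ((∑' m : ℕ, Real.exp (-l m * t) * Real.exp (-l m * t) ^ k) * (c ^ p * t ^ p))
      = (∑' m : ℕ, Real.exp (-l m * t) * Real.exp (-l m * t) ^ k) * t ^ p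
        * (c ^ (-p) * c ^ p) := by ring
    _ = (∑' m : ℕ, Real.exp (-l m * t) * Real.exp (-l m * t) ^ k) * t ^ p := by
        rw [hcc, mul_one]

lemma km_poly_limit (l : ℕ → ℝ) (C p : ℝ) (hp : 0 < p)
    (hsum : ∀ t : ℝ, 0 < t → Summable fun m : ℕ => Real.exp (-l m * t))
    (hasym : Tendsto (fun t : ℝ => (∑' m : ℕ, Real.exp (-l m * t)) * t ^ p)
      (𝓝[>] 0) (𝓝 C)) (P : Polynomial ℝ) :
    Tendsto (fun t : ℝ =>
        (∑' m : ℕ, Real.exp (-l m * t) * P.eval (Real.exp (-l m * t))) * t ^ p)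
      (𝓝[>] 0)
      (𝓝 (∑ k ∈ Finset.range (P.natDegree + 1), P.coeff k * (C * ((k:ℝ)+1) ^ (-p)))) := by
  have hsummono : ∀ (k : ℕ) (t : ℝ), 0 < t →
      Summable (fun m : ℕ => Real.exp (-l m * t) * Real.exp (-l m * t) ^ k) := by
    intro k t ht
    have h := hsum (((k:ℝ)+1) * t) (by positivity)
    refine h.congr fun m => ?_
    rw [km_exp_ident]
  have hbase := tendsto_finset_sum (Finset.range (P.natDegree + 1))
    (f := fun k t => P.coeff k *
      ((∑' m : ℕ, Real.exp (-l m * t) * Real.exp (-l m * t) ^ k) * t ^ p))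
    (fun k _ => (km_mono_limit l C p hp hasym k).const_mul (P.coeff k))
  refine Tendsto.congr' ?_ hbase
  filter_upwards [self_mem_nhdsWithin] with t ht
  have ht' : (0:ℝ) < t := ht
  have step1 : (∑' m : ℕ, Real.exp (-l m * t) * P.eval (Real.exp (-l m * t)))
      = ∑ k ∈ Finset.range (P.natDegree + 1),
          ∑' m : ℕ, P.coeff k * (Real.exp (-l m * t) * Real.exp (-l m * t) ^ k) := by
    rw [← Summable.tsum_finsetSum (fun k _ => ((hsummono k t ht').mul_left (P.coeff k)))]
    congr 1
    ext m
    rw [Polynomial.eval_eq_sum_range, Finset.mul_sum]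
    congr 1
    ext k
    ring
  rw [step1]
  rw [Finset.sum_mul]
  congr 1
  ext k
  rw [tsum_mul_left]
  ring

lemma km_card_eq_tsum (l : ℕ → ℝ)
    (htop : Tendsto l atTop atTop) (x : ℝ) :
    ((Nat.card {m : ℕ | l m ≤ x}) : ℝ) = ∑' m : ℕ, (if l m ≤ x then (1:ℝ) else 0) := by
  obtain ⟨M, hM⟩ := eventually_atTop.1 (htop.eventually_gt_atTop x)
  have hsub : {m : ℕ | l m ≤ x} ⊆ Iio M := by
    intro m hm
    by_contra h
    exact absurd hm (not_le.2 (hM m (not_lt.1 h)))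
  have hfin : {m : ℕ | l m ≤ x}.Finite := (Set.finite_Iio M).subset hsub
  rw [tsum_eq_sum (s := hfin.toFinset)
    (fun b hb => if_neg (by simpa using hb))]
  rw [Finset.sum_congr rfl (fun m hm => if_pos (by simpa using hm))]
  rw [Finset.sum_const, nsmul_eq_mul, mul_one]
  congr 1
  exact (Nat.card_coe_set_eq _).trans (Set.ncard_eq_toFinset_card _ hfin)

lemma km_ind_summable (l : ℕ → ℝ) (htop : Tendsto l atTop atTop) (x : ℝ) :
    Summable (fun m : ℕ => (if l m ≤ x then (1:ℝ) else 0)) := by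
  obtain ⟨M, hM⟩ := eventually_atTop.1 (htop.eventually_gt_atTop x)
  apply summable_of_ne_finset_zero (s := Finset.range M)
  intro b hb
  simp only [Finset.mem_range, not_lt] at hb
  exact if_neg (not_le.2 (hM b hb))

theorem karamata_weyl (l : ℕ → ℝ) (hmono : Monotone l) (h0 : 0 ≤ l 0)
    (htop : Filter.Tendsto l Filter.atTop Filter.atTop)
    (C q : ℝ) (hC : 0 < C) (hq : 0 < q)
    (hsum : ∀ t : ℝ, 0 < t → Summable fun m : ℕ => Real.exp (-l m * t))
    (hasym : Filter.Tendsto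
      (fun t : ℝ => (∑' m : ℕ, Real.exp (-l m * t)) * t ^ (q / 2))
      (𝓝[>] 0) (𝓝 C)) :
    Filter.Tendsto
      (fun x : ℝ => (Nat.card {m : ℕ | l m ≤ x} : ℝ) / x ^ (q / 2))
      Filter.atTop (𝓝 (C / Real.Gamma (q / 2 + 1))) := by
  have hp : 0 < q / 2 := by linarith
  have hl : ∀ m, 0 ≤ l m := fun m => h0.trans (hmono (Nat.zero_le m))
  have hΓ : 0 < Real.Gamma (q/2) := Real.Gamma_pos_of_pos hp
  have hΓ1 : Real.Gamma (q/2 + 1) = (q/2) * Real.Gamma (q/2) := Real.Gamma_add_one hp.ne'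
  set A : ℝ := C / Real.Gamma (q/2 + 1) with hA
  have hApos : 0 < A := by rw [hA]; positivity
  have hCg : 0 < C / Real.Gamma (q/2) := by positivity
  have hAeq : A = (C / Real.Gamma (q/2)) * (1/(q/2)) := by
    rw [hA, hΓ1]; field_simp
  have key : ∀ P : Polynomial ℝ,
      (∑ k ∈ Finset.range (P.natDegree + 1), P.coeff k * (C * ((k:ℝ)+1) ^ (-(q/2))))
      = (C / Real.Gamma (q/2)) *
        ∫ s in Ioi (0:ℝ), Real.exp (-s) * P.eval (Real.exp (-s)) * s ^ (q/2 - 1) := by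
    intro P
    have hint : ∀ k : ℕ, IntegrableOn
        (fun s : ℝ => Real.exp (-s) * Real.exp (-s) ^ k * s ^ (q/2-1)) (Ioi 0) :=
      fun k => km_integrand_integrable _ hp (fun x => x ^ k) (continuous_pow k)
    have heq : ∀ s : ℝ, s ∈ Ioi (0:ℝ) →
        Real.exp (-s) * P.eval (Real.exp (-s)) * s ^ (q/2-1)
        = ∑ k ∈ Finset.range (P.natDegree+1),
            P.coeff k * (Real.exp (-s) * Real.exp (-s) ^ k * s ^ (q/2-1)) := by
      intro s _
      rw [Polynomial.eval_eq_sum_range (Real.exp (-s)), Finset.mul_sum, Finset.sum_mul]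
      exact Finset.sum_congr rfl fun k _ => by ring
    rw [setIntegral_congr_fun measurableSet_Ioi heq]
    rw [integral_finset_sum _ (fun k _ => ((hint k).const_mul (P.coeff k)))]
    simp_rw [integral_const_mul]
    rw [Finset.mul_sum]
    refine Finset.sum_congr rfl fun k _ => ?_
    rw [km_integral_monomial _ hp k]
    field_simp
  suffices H : Tendsto (fun t : ℝ => (Nat.card {m : ℕ | l m ≤ t⁻¹} : ℝ) * t ^ (q/2))
      (𝓝[>] 0) (𝓝 A) by
    have hcomp := H.comp tendsto_inv_atTop_nhdsGT_zero
    refine Tendsto.congr' ?_ hcomp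
    filter_upwards [eventually_gt_atTop (0:ℝ)] with x hx
    simp only [Function.comp_apply, inv_inv]
    rw [Real.inv_rpow hx.le, ← div_eq_mul_inv]
  have hindeq : ∀ t : ℝ, 0 < t → ∀ m : ℕ,
      (if l m ≤ t⁻¹ then (1:ℝ) else 0)
      = (if Real.exp (-1) ≤ Real.exp (-l m * t) then (1:ℝ) else 0) := by
    intro t ht m
    have hiff : (l m ≤ t⁻¹) ↔ (Real.exp (-1) ≤ Real.exp (-l m * t)) := by
      rw [Real.exp_le_exp]
      have h1 : t⁻¹ * t = 1 := inv_mul_cancel₀ ht.ne'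
      constructor
      · intro h; nlinarith
      · intro h
        have h2 : l m * t ≤ 1 := by linarith
        have h3 := mul_le_mul_of_nonneg_right h2 (inv_nonneg.2 ht.le)
        rw [one_mul] at h3
        calc l m = l m * t * t⁻¹ := by field_simp
          _ ≤ t⁻¹ := h3
    simp only [hiff]
  have hxm : ∀ (t : ℝ), 0 < t → ∀ m : ℕ, Real.exp (-l m * t) ∈ Ioc (0:ℝ) 1 := by
    intro t ht m
    exact ⟨Real.exp_pos _, Real.exp_le_one_iff.2 (by nlinarith [hl m])⟩
  have hUB : ∀ (P : Polynomial ℝ),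
      (∀ x ∈ Ioc (0:ℝ) 1, (if Real.exp (-1) ≤ x then (1:ℝ) else 0) ≤ x * P.eval x) →
      ∀ t : ℝ, 0 < t →
        ((Nat.card {m : ℕ | l m ≤ t⁻¹} : ℝ)) * t ^ (q/2)
          ≤ (∑' m : ℕ, Real.exp (-l m * t) * P.eval (Real.exp (-l m * t))) * t ^ (q/2) := by
    intro P hP t ht
    obtain ⟨M, hM⟩ := isCompact_Icc.exists_bound_of_continuousOn
        ((Polynomial.continuous P).continuousOn (s := Icc (0:ℝ) 1))
    have hsummableP := km_summable l hl hsum ht (fun x => P.eval x)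
        (M := M) (fun x hxm2 => hM x ⟨hxm2.1.le, hxm2.2⟩)
    apply mul_le_mul_of_nonneg_right _ (Real.rpow_nonneg ht.le _)
    rw [km_card_eq_tsum l htop]
    refine Summable.tsum_le_tsum (fun m => ?_) (km_ind_summable l htop _) hsummableP
    rw [hindeq t ht m]
    exact hP _ (hxm t ht m)
  have hLB : ∀ (P : Polynomial ℝ),
      (∀ x ∈ Ioc (0:ℝ) 1, x * P.eval x ≤ (if Real.exp (-1) ≤ x then (1:ℝ) else 0)) →
      ∀ t : ℝ, 0 < t →
        (∑' m : ℕ, Real.exp (-l m * t) * P.eval (Real.exp (-l m * t))) * t ^ (q/2)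
          ≤ ((Nat.card {m : ℕ | l m ≤ t⁻¹} : ℝ)) * t ^ (q/2) := by
    intro P hP t ht
    obtain ⟨M, hM⟩ := isCompact_Icc.exists_bound_of_continuousOn
        ((Polynomial.continuous P).continuousOn (s := Icc (0:ℝ) 1))
    have hsummableP := km_summable l hl hsum ht (fun x => P.eval x)
        (M := M) (fun x hxm2 => hM x ⟨hxm2.1.le, hxm2.2⟩)
    apply mul_le_mul_of_nonneg_right _ (Real.rpow_nonneg ht.le _)
    rw [km_card_eq_tsum l htop]
    refine Summable.tsum_le_tsum (fun m => ?_) hsummableP (km_ind_summable l htop _)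
    rw [hindeq t ht m]
    exact hP _ (hxm t ht m)
  rw [tendsto_order]
  constructor
  · intro b hb
    have hAb : 0 < A - b := sub_pos.2 hb
    set ε : ℝ := (A - b) * Real.Gamma (q/2) / (2*C) with hε
    have hεpos : 0 < ε := by rw [hε]; positivity
    obtain ⟨P, hPcomp, hPint⟩ := km_poly_lower (q/2) hp ε hεpos
    have hL := km_poly_limit l C (q/2) hp hsum hasym P
    have hval : b < ∑ k ∈ Finset.range (P.natDegree + 1),
        P.coeff k * (C * ((k:ℝ)+1) ^ (-(q/2))) := by
      rw [key P]
      have h1 := mul_lt_mul_of_pos_left hPint hCg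
      have h2 : (C / Real.Gamma (q/2)) * ε = (A - b)/2 := by
        rw [hε]; field_simp
      have h3 : (C / Real.Gamma (q/2)) * (1/(q/2) - ε) = A - (A - b)/2 := by
        rw [mul_sub, ← hAeq, h2]
      calc b < A - (A - b)/2 := by linarith
        _ = (C / Real.Gamma (q/2)) * (1/(q/2) - ε) := h3.symm
        _ < _ := h1
    filter_upwards [hL.eventually_const_lt hval, self_mem_nhdsWithin] with t h1 h2
    exact lt_of_lt_of_le h1 (hLB P hPcomp t h2)
  · intro b hb
    have hAb : 0 < b - A := sub_pos.2 hb
    set ε : ℝ := (b - A) * Real.Gamma (q/2) / (2*C) with hε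
    have hεpos : 0 < ε := by rw [hε]; positivity
    obtain ⟨P, hPcomp, hPint⟩ := km_poly_upper (q/2) hp ε hεpos
    have hL := km_poly_limit l C (q/2) hp hsum hasym P
    have hval : (∑ k ∈ Finset.range (P.natDegree + 1),
        P.coeff k * (C * ((k:ℝ)+1) ^ (-(q/2)))) < b := by
      rw [key P]
      have h1 := mul_lt_mul_of_pos_left hPint hCg
      have h2 : (C / Real.Gamma (q/2)) * ε = (b - A)/2 := by
        rw [hε]; field_simp
      have h3 : (C / Real.Gamma (q/2)) * (1/(q/2) + ε) = A + (b - A)/2 := by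
        rw [mul_add, ← hAeq, h2]
      calc (C / Real.Gamma (q/2)) *
            ∫ s in Ioi (0:ℝ), Real.exp (-s) * P.eval (Real.exp (-s)) * s ^ (q/2 - 1)
          < (C / Real.Gamma (q/2)) * (1/(q/2) + ε) := h1
        _ = A + (b - A)/2 := h3
        _ < b := by linarith
    filter_upwards [hL.eventually_lt_const hval, self_mem_nhdsWithin] with t h1 h2
    exact lt_of_le_of_lt (hUB P hPcomp t h2) h1
end

section
/- If ∑_{n≥0} e^{-λ_n t} ~ (V/√(4πt)) as t → 0⁺ for a nondecreasing unbounded sequence (λ_n) of nonnegative reals and V > 0, then N(λ) = #{n : λ_n ≤ λ} ~ (V/π)·√λ as λ → ∞. -/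
open Real Filter Topology MeasureTheory Set

namespace KW

noncomputable def ramp (u v y : ℝ) : ℝ := min 1 (max 0 ((y - u) / (v - u)))
noncomputable def phi (y : ℝ) : ℝ := min (Real.exp 1) (max y (Real.exp (-1)))⁻¹
noncomputable def gp (δ y : ℝ) : ℝ := phi y * ramp (Real.exp (-1) - δ) (Real.exp (-1)) y
noncomputable def gm (δ y : ℝ) : ℝ := phi y * ramp (Real.exp (-1)) (Real.exp (-1) + δ) y

lemma continuous_ramp (u v : ℝ) : Continuous (ramp u v) :=
  continuous_const.min (continuous_const.max ((continuous_id.sub continuous_const).div_const _))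

lemma continuous_phi : Continuous phi :=
  continuous_const.min ((continuous_id.max continuous_const).inv₀ fun x =>
    ne_of_gt (lt_of_lt_of_le (Real.exp_pos _) (le_max_right _ _)))

lemma continuous_gp (δ : ℝ) : Continuous (gp δ) := continuous_phi.mul (continuous_ramp _ _)
lemma continuous_gm (δ : ℝ) : Continuous (gm δ) := continuous_phi.mul (continuous_ramp _ _)

lemma ramp_nonneg (u v y : ℝ) (huv : u < v) : 0 ≤ ramp u v y := by
  unfold ramp
  exact le_min zero_le_one (le_max_left _ _)
lemma ramp_le_one (u v y : ℝ) : ramp u v y ≤ 1 := min_le_left _ _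

lemma ramp_eq_one (u v y : ℝ) (huv : u < v) (h : v ≤ y) : ramp u v y = 1 := by
  unfold ramp
  have hd : 0 < v - u := sub_pos.mpr huv
  have : (1:ℝ) ≤ (y - u) / (v - u) := (one_le_div hd).mpr (by linarith)
  rw [max_eq_right (le_trans zero_le_one this), min_eq_left this]

lemma ramp_eq_zero (u v y : ℝ) (huv : u < v) (h : y ≤ u) : ramp u v y = 0 := by
  unfold ramp
  have hd : 0 < v - u := sub_pos.mpr huv
  have : (y - u) / (v - u) ≤ 0 := div_nonpos_of_nonpos_of_nonneg (by linarith) hd.le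
  rw [max_eq_left this, min_eq_right zero_le_one]

lemma phi_nonneg (y : ℝ) : 0 ≤ phi y :=
  le_min (Real.exp_pos _).le (inv_nonneg.mpr (le_trans (Real.exp_pos _).le (le_max_right _ _)))

lemma phi_mul_le_one (y : ℝ) (hy : 0 < y) : phi y * y ≤ 1 := by
  have h1 : phi y ≤ (max y (Real.exp (-1)))⁻¹ := min_le_right _ _
  have h2 : (max y (Real.exp (-1)))⁻¹ ≤ y⁻¹ := by
    exact inv_anti₀ hy (le_max_left _ _)
  calc phi y * y ≤ y⁻¹ * y := by
        apply mul_le_mul_of_nonneg_right (h1.trans h2) hy.le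
    _ = 1 := inv_mul_cancel₀ hy.ne'

lemma phi_mul_eq_one (y : ℝ) (h1 : Real.exp (-1) ≤ y) (h2 : y ≤ 1) : phi y * y = 1 := by
  have hy : 0 < y := lt_of_lt_of_le (Real.exp_pos _) h1
  have hmax : max y (Real.exp (-1)) = y := max_eq_left h1
  have hinv : y⁻¹ ≤ Real.exp 1 := by
    calc y⁻¹ ≤ (Real.exp (-1))⁻¹ := inv_anti₀ (Real.exp_pos _) h1
      _ = Real.exp 1 := by rw [← Real.exp_neg, neg_neg]
  unfold phi
  rw [hmax, min_eq_right hinv, inv_mul_cancel₀ hy.ne']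


lemma gp_nonneg (δ y : ℝ) (hδ : 0 < δ) : 0 ≤ gp δ y :=
  mul_nonneg (phi_nonneg y) (ramp_nonneg _ _ _ (by linarith))

lemma gm_nonneg (δ y : ℝ) (hδ : 0 < δ) : 0 ≤ gm δ y :=
  mul_nonneg (phi_nonneg y) (ramp_nonneg _ _ _ (by linarith))

lemma gp_mul_le (δ y : ℝ) (hδ : 0 < δ) (hy : 0 < y) : gp δ y * y ≤ 1 := by
  have h1 : gp δ y ≤ phi y := by
    have := mul_le_mul_of_nonneg_left (ramp_le_one (Real.exp (-1) - δ) (Real.exp (-1)) y)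
      (phi_nonneg y)
    simpa [gp] using this
  exact le_trans (mul_le_mul_of_nonneg_right h1 hy.le) (phi_mul_le_one y hy)

lemma gp_mul_ge (δ y : ℝ) (hδ : 0 < δ) (hy1 : 0 < y) (hy2 : y ≤ 1) :
    (if Real.exp (-1) ≤ y then (1:ℝ) else 0) ≤ gp δ y * y := by
  split_ifs with h
  · rw [gp, ramp_eq_one _ _ _ (by linarith) h, mul_one, phi_mul_eq_one y h hy2]
  · exact mul_nonneg (gp_nonneg δ y hδ) hy1.le

lemma gm_mul_le_ind (δ y : ℝ) (hδ : 0 < δ) (hy1 : 0 < y) :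
    gm δ y * y ≤ (if Real.exp (-1) ≤ y then (1:ℝ) else 0) := by
  split_ifs with h
  · have h1 : gm δ y ≤ phi y := by
      have := mul_le_mul_of_nonneg_left (ramp_le_one (Real.exp (-1)) (Real.exp (-1) + δ) y)
        (phi_nonneg y)
      simpa [gm] using this
    exact le_trans (mul_le_mul_of_nonneg_right h1 hy1.le) (phi_mul_le_one y hy1)
  · rw [gm, ramp_eq_zero _ _ _ (by linarith) (le_of_not_ge h), mul_zero, zero_mul]

-- Integrals

lemma integrableOn_base : IntegrableOn (fun x : ℝ => x ^ (-(1/2) : ℝ) * Real.exp (-x)) (Ioi 0) := by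
  have h := Real.GammaIntegral_convergent (s := 1/2) (by norm_num)
  have : (fun x : ℝ => x ^ (-(1/2) : ℝ) * Real.exp (-x)) =
      fun x : ℝ => Real.exp (-x) * x ^ ((1/2 : ℝ) - 1) := by
    funext x; rw [mul_comm]; norm_num
  rw [this]; exact h

lemma base_integral : ∫ x in Ioi (0:ℝ), x ^ (-(1/2) : ℝ) * Real.exp (-x) = Real.sqrt π := by
  have h := (Real.Gamma_eq_integral (s := 1/2) (by norm_num)).symm
  have e : ∫ x in Ioi (0:ℝ), x ^ (-(1/2) : ℝ) * Real.exp (-x)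
      = ∫ x in Ioi (0:ℝ), Real.exp (-x) * x ^ ((1/2:ℝ) - 1) := by
    congr 1; funext x; rw [mul_comm]; norm_num
  rw [e, h, Real.Gamma_one_half_eq]

lemma scaled_integral (r : ℝ) (hr : 0 < r) :
    ∫ x in Ioi (0:ℝ), x ^ (-(1/2) : ℝ) * Real.exp (-(r * x)) = Real.sqrt π / Real.sqrt r := by
  have h := Real.integral_rpow_mul_exp_neg_mul_Ioi (a := 1/2) (r := r) (by norm_num) hr
  have e : ∫ x in Ioi (0:ℝ), x ^ (-(1/2) : ℝ) * Real.exp (-(r * x))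
      = ∫ t in Ioi (0:ℝ), t ^ ((1/2:ℝ) - 1) * Real.exp (-(r * t)) := by
    congr 1; funext x; norm_num
  rw [e, h, Real.Gamma_one_half_eq]
  rw [← Real.sqrt_eq_rpow, one_div, Real.sqrt_inv, div_eq_mul_inv, mul_comm]

lemma integrableOn_base_scaled (r : ℝ) (hr : 1 ≤ r) :
    IntegrableOn (fun x : ℝ => x ^ (-(1/2) : ℝ) * Real.exp (-(r * x))) (Ioi 0) := by
  apply integrableOn_base.mono' (g := fun x : ℝ => x ^ (-(1/2) : ℝ) * Real.exp (-x))
  · apply ContinuousOn.aestronglyMeasurable _ measurableSet_Ioi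
    apply ContinuousOn.mul
    · exact fun x hx => (Real.continuousAt_rpow_const x _ (Or.inl (ne_of_gt hx))).continuousWithinAt
    · exact (Real.continuous_exp.comp (continuous_const.mul continuous_id).neg).continuousOn
  · filter_upwards [ae_restrict_mem measurableSet_Ioi] with x hx
    have hx0 : (0:ℝ) < x := hx
    rw [Real.norm_eq_abs, abs_mul, abs_of_nonneg (Real.rpow_nonneg hx0.le _),
      abs_of_nonneg (Real.exp_pos _).le]
    apply mul_le_mul_of_nonneg_left _ (Real.rpow_nonneg hx0.le _)
    exact Real.exp_le_exp.mpr (by nlinarith)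

lemma rpow_integral (a : ℝ) (ha : 0 < a) :
    ∫ x in Ioc (0:ℝ) a, x ^ (-(1/2) : ℝ) = 2 * Real.sqrt a := by
  rw [← intervalIntegral.integral_of_le ha.le,
    integral_rpow (Or.inl (by norm_num))]
  have h0 : (0:ℝ) ^ (-(1/2:ℝ) + 1) = 0 := by
    rw [Real.zero_rpow (by norm_num)]
  rw [h0, Real.sqrt_eq_rpow]
  norm_num
  ring

lemma integrableOn_rpow_Ioc (a : ℝ) (ha : 0 < a) :
    IntegrableOn (fun x : ℝ => x ^ (-(1/2) : ℝ)) (Ioc 0 a) := by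
  rw [← intervalIntegrable_iff_integrableOn_Ioc_of_le ha.le]
  exact intervalIntegral.intervalIntegrable_rpow' (by norm_num)

lemma integrableOn_comp {g : ℝ → ℝ} (hg : Continuous g) {M : ℝ}
    (hb : ∀ y ∈ Set.Ioc (0:ℝ) 1, |g y| ≤ M) :
    IntegrableOn (fun x : ℝ => g (Real.exp (-x)) * (x ^ (-(1/2) : ℝ) * Real.exp (-x)))
      (Ioi 0) := by
  have hM : 0 ≤ M := le_trans (abs_nonneg _) (hb 1 ⟨one_pos, le_refl 1⟩)
  apply (integrableOn_base.const_mul M).mono'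
  · apply ContinuousOn.aestronglyMeasurable _ measurableSet_Ioi
    apply ContinuousOn.mul
    · exact (hg.comp (Real.continuous_exp.comp continuous_neg)).continuousOn
    · apply ContinuousOn.mul
      · exact fun x hx =>
          (Real.continuousAt_rpow_const x _ (Or.inl (ne_of_gt hx))).continuousWithinAt
      · exact (Real.continuous_exp.comp continuous_neg).continuousOn
  · filter_upwards [ae_restrict_mem measurableSet_Ioi] with x hx
    have hx0 : (0:ℝ) < x := hx
    have hy : Real.exp (-x) ∈ Set.Ioc (0:ℝ) 1 :=
      ⟨Real.exp_pos _, Real.exp_le_one_iff.mpr (by linarith)⟩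
    have hbase : 0 ≤ x ^ (-(1/2) : ℝ) * Real.exp (-x) :=
      mul_nonneg (Real.rpow_nonneg hx0.le _) (Real.exp_pos _).le
    rw [Real.norm_eq_abs, abs_mul, abs_of_nonneg hbase]
    exact mul_le_mul_of_nonneg_right (hb _ hy) hbase

lemma LF_gp_le (δ : ℝ) (hδ1 : 0 < δ) (hδ2 : δ < Real.exp (-1)) :
    ∫ x in Ioi (0:ℝ), gp δ (Real.exp (-x)) * (x ^ (-(1/2) : ℝ) * Real.exp (-x))
      ≤ 2 * Real.sqrt (-Real.log (Real.exp (-1) - δ)) := by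
  set a : ℝ := -Real.log (Real.exp (-1) - δ) with ha_def
  have hsub : (0:ℝ) < Real.exp (-1) - δ := by linarith
  have hexpa : Real.exp (-a) = Real.exp (-1) - δ := by
    rw [ha_def, neg_neg, Real.exp_log hsub]
  have ha : 0 < a := by
    rw [ha_def, neg_pos]
    apply Real.log_neg hsub
    calc Real.exp (-1) - δ < Real.exp (-1) := by linarith
      _ < 1 := by rw [← Real.exp_zero]; exact Real.exp_lt_exp.mpr (by norm_num)
  -- bound on Ioc 0 a, zero on Ioi a
  obtain ⟨M, hM⟩ : ∃ M, ∀ y ∈ Set.Icc (0:ℝ) 1, |gp δ y| ≤ M := by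
    obtain ⟨M, hM⟩ := isCompact_Icc.exists_bound_of_continuousOn (continuous_gp δ).continuousOn
    exact ⟨M, fun y hy => hM y hy⟩
  have hint : IntegrableOn (fun x : ℝ => gp δ (Real.exp (-x)) * (x ^ (-(1/2) : ℝ) * Real.exp (-x)))
      (Ioi 0) :=
    integrableOn_comp (continuous_gp δ) (fun y hy => hM y ⟨hy.1.le, hy.2⟩)
  have hsplit : Ioc (0:ℝ) a ∪ Ioi a = Ioi 0 := Ioc_union_Ioi_eq_Ioi ha.le
  rw [← hsplit, setIntegral_union (Ioc_disjoint_Ioi le_rfl) measurableSet_Ioi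
    (hint.mono_set (by rw [← hsplit]; exact subset_union_left))
    (hint.mono_set (by rw [← hsplit]; exact subset_union_right))]
  have hzero : ∫ x in Ioi a, gp δ (Real.exp (-x)) * (x ^ (-(1/2) : ℝ) * Real.exp (-x)) = 0 := by
    rw [setIntegral_congr_fun measurableSet_Ioi (g := fun _ => (0:ℝ)), integral_zero]
    intro x hx
    have : Real.exp (-x) ≤ Real.exp (-1) - δ := by
      rw [← hexpa]; exact Real.exp_le_exp.mpr (by simpa using le_of_lt hx)
    simp only
    rw [gp, ramp_eq_zero _ _ _ (by linarith) this, mul_zero, zero_mul]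
  rw [hzero, add_zero, ← rpow_integral a ha]
  apply setIntegral_mono_on
    (hint.mono_set (by rw [← hsplit]; exact subset_union_left))
    (integrableOn_rpow_Ioc a ha) measurableSet_Ioc
  intro x hx
  have hx0 : (0:ℝ) < x := hx.1
  have hy1 : 0 < Real.exp (-x) := Real.exp_pos _
  have hy2 : Real.exp (-x) ≤ 1 := Real.exp_le_one_iff.mpr (by linarith)
  calc gp δ (Real.exp (-x)) * (x ^ (-(1/2) : ℝ) * Real.exp (-x))
      = x ^ (-(1/2) : ℝ) * (gp δ (Real.exp (-x)) * Real.exp (-x)) := by ring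
    _ ≤ x ^ (-(1/2) : ℝ) * 1 :=
        mul_le_mul_of_nonneg_left (gp_mul_le δ _ hδ1 hy1) (Real.rpow_nonneg hx0.le _)
    _ = x ^ (-(1/2) : ℝ) := mul_one _

lemma LF_gm_ge (δ : ℝ) (hδ1 : 0 < δ) (hδ2 : Real.exp (-1) + δ < 1) :
    2 * Real.sqrt (-Real.log (Real.exp (-1) + δ))
      ≤ ∫ x in Ioi (0:ℝ), gm δ (Real.exp (-x)) * (x ^ (-(1/2) : ℝ) * Real.exp (-x)) := by
  set b : ℝ := -Real.log (Real.exp (-1) + δ) with hb_def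
  have hpos : (0:ℝ) < Real.exp (-1) + δ := by positivity
  have hexpb : Real.exp (-b) = Real.exp (-1) + δ := by
    rw [hb_def, neg_neg, Real.exp_log hpos]
  have hb : 0 < b := by
    rw [hb_def, neg_pos]
    exact Real.log_neg hpos hδ2
  obtain ⟨M, hM⟩ : ∃ M, ∀ y ∈ Set.Icc (0:ℝ) 1, |gm δ y| ≤ M := by
    obtain ⟨M, hM⟩ := isCompact_Icc.exists_bound_of_continuousOn (continuous_gm δ).continuousOn
    exact ⟨M, fun y hy => hM y hy⟩
  have hint : IntegrableOn (fun x : ℝ => gm δ (Real.exp (-x)) * (x ^ (-(1/2) : ℝ) * Real.exp (-x)))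
      (Ioi 0) :=
    integrableOn_comp (continuous_gm δ) (fun y hy => hM y ⟨hy.1.le, hy.2⟩)
  have hsplit : Ioc (0:ℝ) b ∪ Ioi b = Ioi 0 := Ioc_union_Ioi_eq_Ioi hb.le
  rw [← hsplit, setIntegral_union (Ioc_disjoint_Ioi le_rfl) measurableSet_Ioi
    (hint.mono_set (by rw [← hsplit]; exact subset_union_left))
    (hint.mono_set (by rw [← hsplit]; exact subset_union_right))]
  have heq : ∫ x in Ioc (0:ℝ) b, gm δ (Real.exp (-x)) * (x ^ (-(1/2) : ℝ) * Real.exp (-x))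
      = 2 * Real.sqrt b := by
    rw [← rpow_integral b hb]
    apply setIntegral_congr_fun measurableSet_Ioc
    intro x hx
    have hx0 : (0:ℝ) < x := hx.1
    have hy2 : Real.exp (-x) ≤ 1 := Real.exp_le_one_iff.mpr (by linarith)
    have hyb : Real.exp (-1) + δ ≤ Real.exp (-x) := by
      rw [← hexpb]; exact Real.exp_le_exp.mpr (by simpa using hx.2)
    have hy1 : Real.exp (-1) ≤ Real.exp (-x) := by linarith
    simp only
    rw [gm, ramp_eq_one _ _ _ (by linarith) hyb, mul_one]
    calc phi (Real.exp (-x)) * (x ^ (-(1/2) : ℝ) * Real.exp (-x))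
        = x ^ (-(1/2) : ℝ) * (phi (Real.exp (-x)) * Real.exp (-x)) := by ring
      _ = x ^ (-(1/2) : ℝ) := by rw [phi_mul_eq_one _ hy1 hy2, mul_one]
  rw [heq]
  have hnn : 0 ≤ ∫ x in Ioi b, gm δ (Real.exp (-x)) * (x ^ (-(1/2) : ℝ) * Real.exp (-x)) := by
    apply setIntegral_nonneg measurableSet_Ioi
    intro x hx
    have hx0 : (0:ℝ) < x := lt_trans hb hx
    exact mul_nonneg (gm_nonneg δ _ hδ1)
      (mul_nonneg (Real.rpow_nonneg hx0.le _) (Real.exp_pos _).le)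
  linarith

end KW

open KW Set MeasureTheory

set_option maxHeartbeats 2000000 in
theorem karamata_weyl_codim_one (l : ℕ → ℝ) (hmono : Monotone l) (h0 : 0 ≤ l 0)
    (htop : Filter.Tendsto l Filter.atTop Filter.atTop)
    (V : ℝ) (hV : 0 < V)
    (hsum : ∀ t : ℝ, 0 < t → Summable fun n : ℕ => Real.exp (-l n * t))
    (hasym : Filter.Tendsto
      (fun t : ℝ => (∑' n : ℕ, Real.exp (-l n * t)) * Real.sqrt (4 * π * t))
      (𝓝[>] 0) (𝓝 V)) :
    Filter.Tendsto
      (fun x : ℝ => (Nat.card {n : ℕ | l n ≤ x} : ℝ) / Real.sqrt x)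
      Filter.atTop (𝓝 (V / π)) := by
  have hl : ∀ n, 0 ≤ l n := fun n => h0.trans (hmono (Nat.zero_le n))
  have hπ : (0:ℝ) < π := Real.pi_pos
  have h4π : (0:ℝ) < 4*π := by linarith
  set c : ℝ := V / Real.sqrt (4*π) with hc_def
  have hc : 0 < c := div_pos hV (Real.sqrt_pos.mpr h4π)
  have hsqπ : (0:ℝ) < Real.sqrt π := Real.sqrt_pos.mpr hπ
  have hcK : c / Real.sqrt π * 2 = V / π := by
    have h1 : Real.sqrt (4*π) = 2 * Real.sqrt π := by
      rw [show (4:ℝ)*π = 2^2*π by ring, Real.sqrt_mul (by positivity) π,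
        Real.sqrt_sq (by norm_num)]
    have h2 : Real.sqrt π * Real.sqrt π = π := Real.mul_self_sqrt hπ.le
    rw [hc_def, h1]
    field_simp
    nlinarith [h2]
  -- Step 1 : scaled sums
  have hscaled : ∀ r : ℝ, 0 < r →
      Filter.Tendsto (fun t : ℝ => Real.sqrt t * ∑' n, Real.exp (-l n * (r * t))) (𝓝[>] 0)
        (𝓝 (c / Real.sqrt r)) := by
    intro r hr
    have h1 : Filter.Tendsto (fun t : ℝ => r * t) (𝓝[>] (0:ℝ)) (𝓝[>] (0:ℝ)) := by
      apply tendsto_nhdsWithin_of_tendsto_nhds_of_eventually_within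
      · have h : Filter.Tendsto (fun t : ℝ => r * t) (𝓝 (0:ℝ)) (𝓝 (r * 0)) :=
          (continuous_const.mul continuous_id).tendsto (0:ℝ)
        rw [mul_zero] at h
        exact h.mono_left nhdsWithin_le_nhds
      · filter_upwards [self_mem_nhdsWithin] with t ht
        exact mul_pos hr ht
    have h3 := (hasym.comp h1).div_const (Real.sqrt (4*π*r))
    have hrt : (0:ℝ) < 4*π*r := by positivity
    have hs : (0:ℝ) < Real.sqrt (4*π*r) := Real.sqrt_pos.mpr hrt
    have hval : V / Real.sqrt (4*π*r) = c / Real.sqrt r := by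
      rw [hc_def, Real.sqrt_mul (by positivity) r, div_div]
    rw [hval] at h3
    apply h3.congr'
    filter_upwards [self_mem_nhdsWithin] with t ht
    simp only [Function.comp_apply]
    have : Real.sqrt (4*π*(r*t)) = Real.sqrt (4*π*r) * Real.sqrt t := by
      rw [← Real.sqrt_mul hrt.le t]; ring_nf
    rw [this]
    field_simp
    ring_nf
    rw [mul_comm]; congr 1; apply tsum_congr; intro n; ring_nf
  -- Step 2 : summability with bounded weights
  have hsummable : ∀ t : ℝ, 0 < t → ∀ (g : ℝ → ℝ) (M : ℝ),
      (∀ y ∈ Set.Ioc (0:ℝ) 1, |g y| ≤ M) →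
      Summable (fun n => g (Real.exp (-l n * t)) * Real.exp (-l n * t)) := by
    intro t ht g M hb
    apply Summable.of_norm_bounded ((hsum t ht).mul_left M)
    intro n
    have hy : Real.exp (-l n * t) ∈ Set.Ioc (0:ℝ) 1 :=
      ⟨Real.exp_pos _, Real.exp_le_one_iff.mpr (by nlinarith [hl n])⟩
    rw [Real.norm_eq_abs, abs_mul, abs_of_nonneg (Real.exp_pos _).le]
    exact mul_le_mul_of_nonneg_right (hb _ hy) (Real.exp_pos _).le
  -- membership fact
  have hy_mem : ∀ t : ℝ, 0 < t → ∀ n, Real.exp (-l n * t) ∈ Set.Ioc (0:ℝ) 1 := by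
    intro t ht n
    exact ⟨Real.exp_pos _, Real.exp_le_one_iff.mpr (by nlinarith [hl n])⟩
  -- Step 3 : monomials
  have hmonom : ∀ k : ℕ, Filter.Tendsto
      (fun t : ℝ => Real.sqrt t * ∑' n, (Real.exp (-l n * t))^k * Real.exp (-l n * t))
      (𝓝[>] 0) (𝓝 (c / Real.sqrt ((k:ℝ)+1))) := by
    intro k
    have h := hscaled ((k:ℝ)+1) (by positivity)
    apply h.congr'
    filter_upwards [self_mem_nhdsWithin] with t ht
    congr 1
    apply tsum_congr; intro n
    rw [← Real.exp_nat_mul, ← Real.exp_add]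
    congr 1
    push_cast
    ring
  -- one-function limit
  have hWone : Filter.Tendsto (fun t : ℝ => Real.sqrt t * ∑' n, Real.exp (-l n * t)) (𝓝[>] 0)
      (𝓝 c) := by
    have h := hscaled 1 one_pos
    rw [Real.sqrt_one, div_one] at h
    simp only [one_mul] at h
    exact h
  -- Step 4a : polynomials
  have hpoly : ∀ p : Polynomial ℝ, Filter.Tendsto
      (fun t : ℝ => Real.sqrt t * ∑' n, Polynomial.eval (Real.exp (-l n * t)) p * Real.exp (-l n * t))
      (𝓝[>] 0)
      (𝓝 (∑ k ∈ Finset.range (p.natDegree + 1), p.coeff k * (c / Real.sqrt ((k:ℝ)+1)))) := by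
    intro p
    set N := p.natDegree + 1 with hN
    have base := tendsto_finset_sum (Finset.range N)
      (fun k _ => (hmonom k).const_mul (p.coeff k))
    apply base.congr'
    filter_upwards [self_mem_nhdsWithin] with t ht
    have ht0 : (0:ℝ) < t := ht
    have hterm : ∀ n, Polynomial.eval (Real.exp (-l n * t)) p * Real.exp (-l n * t)
        = ∑ k ∈ Finset.range N, p.coeff k * ((Real.exp (-l n * t))^k * Real.exp (-l n * t)) := by
      intro n
      rw [Polynomial.eval_eq_sum_range, Finset.sum_mul]
      exact Finset.sum_congr rfl fun k _ => by ring
    have hsumk : ∀ k : ℕ, Summable (fun n => (Real.exp (-l n * t))^k * Real.exp (-l n * t)) := by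
      intro k
      apply hsummable t ht0 (fun y => y^k) 1
      intro y hy
      rw [abs_pow, abs_of_pos hy.1]
      exact pow_le_one₀ hy.1.le hy.2
    rw [tsum_congr hterm, Summable.tsum_finsetSum (fun k _ => (hsumk k).mul_left (p.coeff k)), Finset.mul_sum]
    exact (Finset.sum_congr rfl fun k _ => by rw [tsum_mul_left]; ring).symm.symm
  -- Step 4a' : integral identity for polynomials
  have hpint : ∀ p : Polynomial ℝ,
      (c / Real.sqrt π) * ∫ x in Ioi (0:ℝ),
          Polynomial.eval (Real.exp (-x)) p * (x ^ (-(1/2) : ℝ) * Real.exp (-x))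
      = ∑ k ∈ Finset.range (p.natDegree + 1), p.coeff k * (c / Real.sqrt ((k:ℝ)+1)) := by
    intro p
    set N := p.natDegree + 1 with hN
    have hterm : ∀ x ∈ Ioi (0:ℝ),
        Polynomial.eval (Real.exp (-x)) p * (x ^ (-(1/2) : ℝ) * Real.exp (-x))
        = ∑ k ∈ Finset.range N, p.coeff k *
            (x ^ (-(1/2) : ℝ) * Real.exp (-(((k:ℝ)+1) * x))) := by
      intro x _
      rw [Polynomial.eval_eq_sum_range, Finset.sum_mul]
      apply Finset.sum_congr rfl
      intro k _
      have he : (Real.exp (-x))^k * Real.exp (-x) = Real.exp (-(((k:ℝ)+1) * x)) := by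
        rw [← Real.exp_nat_mul, ← Real.exp_add]
        congr 1
        ring
      calc p.coeff k * (Real.exp (-x))^k * (x ^ (-(1/2) : ℝ) * Real.exp (-x))
          = p.coeff k * (x ^ (-(1/2) : ℝ) * ((Real.exp (-x))^k * Real.exp (-x))) := by ring
        _ = p.coeff k * (x ^ (-(1/2) : ℝ) * Real.exp (-(((k:ℝ)+1) * x))) := by rw [he]
    have hintk : ∀ k ∈ Finset.range N, IntegrableOn
        (fun x : ℝ => p.coeff k * (x ^ (-(1/2) : ℝ) * Real.exp (-(((k:ℝ)+1) * x)))) (Ioi 0) := by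
      intro k _
      exact (integrableOn_base_scaled ((k:ℝ)+1)
        (by have := Nat.cast_nonneg (α := ℝ) k; linarith)).const_mul _
    rw [setIntegral_congr_fun measurableSet_Ioi hterm, integral_finset_sum _ hintk,
      Finset.mul_sum]
    apply Finset.sum_congr rfl
    intro k _
    rw [MeasureTheory.integral_const_mul, scaled_integral ((k:ℝ)+1) (by positivity)]
    field_simp
  -- Step 4 : general continuous g
  have hWgen : ∀ g : ℝ → ℝ, Continuous g →
      Filter.Tendsto (fun t : ℝ => Real.sqrt t * ∑' n, g (Real.exp (-l n * t)) * Real.exp (-l n * t))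
        (𝓝[>] 0)
        (𝓝 ((c / Real.sqrt π) *
          ∫ x in Ioi (0:ℝ), g (Real.exp (-x)) * (x ^ (-(1/2) : ℝ) * Real.exp (-x)))) := by
    intro g hg
    obtain ⟨Mg, hMg⟩ := isCompact_Icc.exists_bound_of_continuousOn
      (hg.continuousOn (s := Icc (0:ℝ) 1))
    have hMg' : ∀ y ∈ Set.Ioc (0:ℝ) 1, |g y| ≤ Mg := fun y hy => hMg y ⟨hy.1.le, hy.2⟩
    rw [Metric.tendsto_nhds]
    intro ε hε
    set ε' : ℝ := ε / (4*(c+2)) with hε'def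
    have hε' : 0 < ε' := by positivity
    obtain ⟨p, hp⟩ := exists_polynomial_near_of_continuousOn 0 1 g hg.continuousOn ε' hε'
    obtain ⟨Mp, hMp⟩ := isCompact_Icc.exists_bound_of_continuousOn
      ((p.continuous).continuousOn (s := Icc (0:ℝ) 1))
    have hMp' : ∀ y ∈ Set.Ioc (0:ℝ) 1, |Polynomial.eval y p| ≤ Mp := by
      intro y hy
      exact hMp y ⟨hy.1.le, hy.2⟩
    -- the three eventual facts
    have hA : ∀ᶠ t in 𝓝[>] (0:ℝ), Real.sqrt t * ∑' n, Real.exp (-l n * t) < c + 1 :=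
      hWone.eventually_lt_const (by linarith)
    have hpolyL := hpoly p
    rw [← hpint p] at hpolyL
    have hB := Metric.tendsto_nhds.mp hpolyL (ε/4) (by positivity)
    filter_upwards [hA, hB, self_mem_nhdsWithin] with t hta htb ht
    have ht0 : (0:ℝ) < t := ht
    have hst : (0:ℝ) ≤ Real.sqrt t := Real.sqrt_nonneg t
    -- summability
    have hsg : Summable (fun n => g (Real.exp (-l n * t)) * Real.exp (-l n * t)) :=
      hsummable t ht0 g Mg hMg'
    have hsp : Summable (fun n => Polynomial.eval (Real.exp (-l n * t)) p * Real.exp (-l n * t)) :=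
      hsummable t ht0 _ Mp hMp'
    have hse : Summable (fun n => Real.exp (-l n * t)) := hsum t ht0
    -- first bound : |Wg - Wp| ≤ ε' * (√t * ∑' e)
    have h1 : |Real.sqrt t * ∑' n, g (Real.exp (-l n * t)) * Real.exp (-l n * t)
        - Real.sqrt t * ∑' n, Polynomial.eval (Real.exp (-l n * t)) p * Real.exp (-l n * t)|
        ≤ ε' * (Real.sqrt t * ∑' n, Real.exp (-l n * t)) := by
      rw [← mul_sub, abs_mul, abs_of_nonneg hst, ← Summable.tsum_sub hsg hsp]
      have hdiff : Summable (fun n => g (Real.exp (-l n * t)) * Real.exp (-l n * t)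
          - Polynomial.eval (Real.exp (-l n * t)) p * Real.exp (-l n * t)) := hsg.sub hsp
      have habs : |∑' n, (g (Real.exp (-l n * t)) * Real.exp (-l n * t)
          - Polynomial.eval (Real.exp (-l n * t)) p * Real.exp (-l n * t))|
          ≤ ∑' n, ε' * Real.exp (-l n * t) := by
        calc |∑' n, (g (Real.exp (-l n * t)) * Real.exp (-l n * t)
            - Polynomial.eval (Real.exp (-l n * t)) p * Real.exp (-l n * t))|
            ≤ ∑' n, |g (Real.exp (-l n * t)) * Real.exp (-l n * t)
              - Polynomial.eval (Real.exp (-l n * t)) p * Real.exp (-l n * t)| := by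
              have := norm_tsum_le_tsum_norm (f := fun n =>
                g (Real.exp (-l n * t)) * Real.exp (-l n * t)
                - Polynomial.eval (Real.exp (-l n * t)) p * Real.exp (-l n * t)) ?_
              · simpa [Real.norm_eq_abs] using this
              · simpa [Real.norm_eq_abs] using hdiff.abs
          _ ≤ ∑' n, ε' * Real.exp (-l n * t) := by
              apply Summable.tsum_le_tsum _ hdiff.abs (hse.mul_left ε')
              intro n
              have heq : g (Real.exp (-l n * t)) * Real.exp (-l n * t)
                  - Polynomial.eval (Real.exp (-l n * t)) p * Real.exp (-l n * t)
                  = (g (Real.exp (-l n * t)) - Polynomial.eval (Real.exp (-l n * t)) p)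
                    * Real.exp (-l n * t) := by ring
              rw [heq, abs_mul, abs_of_nonneg (Real.exp_pos _).le]
              apply mul_le_mul_of_nonneg_right _ (Real.exp_pos _).le
              have hy := hy_mem t ht0 n
              have h' := hp (Real.exp (-l n * t)) ⟨hy.1.le, hy.2⟩
              rw [abs_sub_comm] at h'
              exact h'.le
      calc Real.sqrt t * |∑' n, (g (Real.exp (-l n * t)) * Real.exp (-l n * t)
          - Polynomial.eval (Real.exp (-l n * t)) p * Real.exp (-l n * t))|
          ≤ Real.sqrt t * ∑' n, ε' * Real.exp (-l n * t) :=
            mul_le_mul_of_nonneg_left habs hst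
        _ = ε' * (Real.sqrt t * ∑' n, Real.exp (-l n * t)) := by rw [tsum_mul_left]; ring
    -- second bound : |Lp - Lg| ≤ ε' * c
    have hig : IntegrableOn
        (fun x : ℝ => g (Real.exp (-x)) * (x ^ (-(1/2) : ℝ) * Real.exp (-x))) (Ioi 0) :=
      integrableOn_comp hg hMg'
    have hip : IntegrableOn
        (fun x : ℝ => Polynomial.eval (Real.exp (-x)) p * (x ^ (-(1/2) : ℝ) * Real.exp (-x)))
        (Ioi 0) := integrableOn_comp p.continuous hMp'
    have h2 : |(c / Real.sqrt π) * (∫ x in Ioi (0:ℝ),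
          Polynomial.eval (Real.exp (-x)) p * (x ^ (-(1/2) : ℝ) * Real.exp (-x)))
        - (c / Real.sqrt π) * (∫ x in Ioi (0:ℝ),
          g (Real.exp (-x)) * (x ^ (-(1/2) : ℝ) * Real.exp (-x)))| ≤ ε' * c := by
      rw [← mul_sub, abs_mul, abs_of_nonneg (by positivity), ← integral_sub hip hig]
      have habs : |∫ x in Ioi (0:ℝ),
          (Polynomial.eval (Real.exp (-x)) p * (x ^ (-(1/2) : ℝ) * Real.exp (-x))
            - g (Real.exp (-x)) * (x ^ (-(1/2) : ℝ) * Real.exp (-x)))|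
          ≤ ε' * Real.sqrt π := by
        calc |∫ x in Ioi (0:ℝ),
            (Polynomial.eval (Real.exp (-x)) p * (x ^ (-(1/2) : ℝ) * Real.exp (-x))
              - g (Real.exp (-x)) * (x ^ (-(1/2) : ℝ) * Real.exp (-x)))|
            ≤ ∫ x in Ioi (0:ℝ), |Polynomial.eval (Real.exp (-x)) p * (x ^ (-(1/2) : ℝ) * Real.exp (-x))
              - g (Real.exp (-x)) * (x ^ (-(1/2) : ℝ) * Real.exp (-x))| := by
              simpa [Real.norm_eq_abs] using
                MeasureTheory.norm_integral_le_integral_norm (μ := volume.restrict (Ioi 0))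
                  (f := fun x : ℝ =>
                    Polynomial.eval (Real.exp (-x)) p * (x ^ (-(1/2) : ℝ) * Real.exp (-x))
                    - g (Real.exp (-x)) * (x ^ (-(1/2) : ℝ) * Real.exp (-x)))
          _ ≤ ∫ x in Ioi (0:ℝ), ε' * (x ^ (-(1/2) : ℝ) * Real.exp (-x)) := by
              apply setIntegral_mono_on ((hip.sub hig).abs)
                (integrableOn_base.const_mul ε') measurableSet_Ioi
              intro x hx
              show |Polynomial.eval (Real.exp (-x)) p * (x ^ (-(1/2) : ℝ) * Real.exp (-x))
                  - g (Real.exp (-x)) * (x ^ (-(1/2) : ℝ) * Real.exp (-x))|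
                  ≤ ε' * (x ^ (-(1/2) : ℝ) * Real.exp (-x))
              have hx0 : (0:ℝ) < x := hx
              have hb0 : (0:ℝ) ≤ x ^ (-(1/2) : ℝ) * Real.exp (-x) :=
                mul_nonneg (Real.rpow_nonneg hx0.le _) (Real.exp_pos _).le
              have heq : Polynomial.eval (Real.exp (-x)) p * (x ^ (-(1/2) : ℝ) * Real.exp (-x))
                  - g (Real.exp (-x)) * (x ^ (-(1/2) : ℝ) * Real.exp (-x))
                  = (Polynomial.eval (Real.exp (-x)) p - g (Real.exp (-x)))
                    * (x ^ (-(1/2) : ℝ) * Real.exp (-x)) := by ring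
              rw [heq, abs_mul, abs_of_nonneg hb0]
              apply mul_le_mul_of_nonneg_right _ hb0
              have hy : Real.exp (-x) ∈ Set.Icc (0:ℝ) 1 :=
                ⟨(Real.exp_pos _).le, Real.exp_le_one_iff.mpr (by linarith)⟩
              exact (hp (Real.exp (-x)) hy).le
          _ = ε' * Real.sqrt π := by rw [MeasureTheory.integral_const_mul, base_integral]
      calc c / Real.sqrt π * |∫ x in Ioi (0:ℝ),
          (Polynomial.eval (Real.exp (-x)) p * (x ^ (-(1/2) : ℝ) * Real.exp (-x))
            - g (Real.exp (-x)) * (x ^ (-(1/2) : ℝ) * Real.exp (-x)))|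
          ≤ c / Real.sqrt π * (ε' * Real.sqrt π) :=
            mul_le_mul_of_nonneg_left habs (by positivity)
        _ = ε' * c := by field_simp
    -- assemble
    rw [Real.dist_eq]
    rw [Real.dist_eq] at htb
    have htri : ∀ a b d e : ℝ, |a - e| ≤ |a - b| + |b - d| + |d - e| := by
      intro a b d e
      calc |a - e| = |(a - b) + ((b - d) + (d - e))| := by ring_nf
        _ ≤ |a - b| + |(b - d) + (d - e)| := abs_add_le _ _
        _ ≤ |a - b| + (|b - d| + |d - e|) := by
            exact add_le_add_right (abs_add_le _ _) _
        _ = |a - b| + |b - d| + |d - e| := by ring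
    have hchain := htri
      (Real.sqrt t * ∑' n, g (Real.exp (-l n * t)) * Real.exp (-l n * t))
      (Real.sqrt t * ∑' n, Polynomial.eval (Real.exp (-l n * t)) p * Real.exp (-l n * t))
      ((c / Real.sqrt π) * ∫ x in Ioi (0:ℝ),
        Polynomial.eval (Real.exp (-x)) p * (x ^ (-(1/2) : ℝ) * Real.exp (-x)))
      ((c / Real.sqrt π) * ∫ x in Ioi (0:ℝ),
        g (Real.exp (-x)) * (x ^ (-(1/2) : ℝ) * Real.exp (-x)))
    have hb1 : ε' * (Real.sqrt t * ∑' n, Real.exp (-l n * t)) ≤ ε' * (c+1) :=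
      mul_le_mul_of_nonneg_left hta.le hε'.le
    have hfinal : ε' * (c+1) + ε' * c + ε/4 < ε := by
      have h2c : ε' * (2*c+1) ≤ ε/2 := by
        rw [hε'def, div_mul_eq_mul_div, div_le_div_iff₀ (by positivity) (by norm_num)]
        nlinarith [hε.le, hc.le]
      linarith
    calc |Real.sqrt t * ∑' n, g (Real.exp (-l n * t)) * Real.exp (-l n * t)
        - (c / Real.sqrt π) * ∫ x in Ioi (0:ℝ),
          g (Real.exp (-x)) * (x ^ (-(1/2) : ℝ) * Real.exp (-x))| ≤ _ := hchain
      _ ≤ ε' * (c+1) + ε/4 + ε' * c := by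
          apply add_le_add (add_le_add (h1.trans hb1) htb.le) h2
      _ < ε := by linarith [hfinal]
  -- counting function as a tsum
  have hfin : ∀ x : ℝ, {n : ℕ | l n ≤ x}.Finite := by
    intro x
    obtain ⟨N, hN⟩ := Filter.eventually_atTop.mp (htop.eventually_gt_atTop x)
    apply Set.Finite.subset (Set.finite_Iio N)
    intro n hn
    by_contra hcon
    exact absurd hn (not_le.mpr (hN n (not_lt.mp hcon)))
  have hcard : ∀ t : ℝ, 0 < t → (Nat.card {n : ℕ | l n ≤ 1/t} : ℝ)
      = ∑' n, (if Real.exp (-1) ≤ Real.exp (-l n * t) then (1:ℝ) else 0) := by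
    intro t ht
    have hiff : ∀ n, (Real.exp (-1) ≤ Real.exp (-l n * t)) ↔ l n ≤ 1/t := by
      intro n
      rw [Real.exp_le_exp, le_div_iff₀ ht]
      constructor <;> intro h <;> linarith
    have hf := hfin (1/t)
    rw [tsum_eq_sum (s := hf.toFinset) ?_]
    · rw [Finset.sum_congr rfl (g := fun _ => (1:ℝ)) ?_, Finset.sum_const, nsmul_eq_mul, mul_one]
      · congr 1
        rw [Nat.card_coe_set_eq, Set.ncard_eq_toFinset_card _ hf]
      · intro n hn
        rw [if_pos ((hiff n).mpr (by simpa using hn))]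
    · intro n hn
      rw [if_neg]
      rw [hiff n]
      simpa using hn
  -- the squeeze in the t → 0⁺ variable
  have hmain : Filter.Tendsto
      (fun t : ℝ => Real.sqrt t * (Nat.card {n : ℕ | l n ≤ 1/t} : ℝ)) (𝓝[>] 0)
      (𝓝 (V / π)) := by
    rw [Metric.tendsto_nhds]
    intro ε hε
    set K : ℝ := V / π with hK
    have hKpos : 0 < K := by positivity
    set η : ℝ := min (1/2) (ε / (4*K)) with hη
    have hη0 : 0 < η := by rw [hη]; exact lt_min (by norm_num) (by positivity)
    have hetahalf : η ≤ 1/2 := by rw [hη]; exact min_le_left _ _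
    have hηε : K * η ≤ ε/4 := by
      have hh : η ≤ ε/(4*K) := by rw [hη]; exact min_le_right _ _
      calc K * η ≤ K * (ε/(4*K)) := mul_le_mul_of_nonneg_left hh hKpos.le
        _ = ε/4 := by field_simp
    set δ : ℝ := min (Real.exp (-1) - Real.exp (-(1+η)^2))
      (Real.exp (-(1-η)^2) - Real.exp (-1)) with hδdef
    have h1η : (1:ℝ) < (1+η)^2 := by nlinarith
    have h2η : (1-η)^2 < 1 := by nlinarith
    have hδ0 : 0 < δ := by
      rw [hδdef]
      apply lt_min
      · rw [sub_pos]
        exact Real.exp_lt_exp.mpr (by nlinarith)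
      · rw [sub_pos]
        exact Real.exp_lt_exp.mpr (by nlinarith)
    have hδe : δ < Real.exp (-1) := by
      calc δ ≤ Real.exp (-1) - Real.exp (-(1+η)^2) := by rw [hδdef]; exact min_le_left _ _
        _ < Real.exp (-1) := by linarith [Real.exp_pos (-(1+η)^2)]
    have hδ1 : Real.exp (-1) + δ < 1 := by
      calc Real.exp (-1) + δ ≤ Real.exp (-1) + (Real.exp (-(1-η)^2) - Real.exp (-1)) := by
            have : δ ≤ Real.exp (-(1-η)^2) - Real.exp (-1) := by
              rw [hδdef]; exact min_le_right _ _
            linarith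
        _ = Real.exp (-(1-η)^2) := by ring
        _ < 1 := Real.exp_lt_one_iff.mpr (by nlinarith [sq_nonneg (1 - η - 1/2)])
    set a : ℝ := -Real.log (Real.exp (-1) - δ) with hadef
    set b : ℝ := -Real.log (Real.exp (-1) + δ) with hbdef
    have hsubpos : 0 < Real.exp (-1) - δ := by linarith
    have haub : a ≤ (1+η)^2 := by
      have h1 : δ ≤ Real.exp (-1) - Real.exp (-(1+η)^2) := by rw [hδdef]; exact min_le_left _ _
      have h2 : Real.exp (-(1+η)^2) ≤ Real.exp (-1) - δ := by linarith
      have h3 : -(1+η)^2 ≤ Real.log (Real.exp (-1) - δ) :=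
        (Real.le_log_iff_exp_le hsubpos).mpr h2
      rw [hadef]; linarith
    have hsa : Real.sqrt a ≤ 1 + η := by
      calc Real.sqrt a ≤ Real.sqrt ((1+η)^2) := Real.sqrt_le_sqrt haub
        _ = 1 + η := Real.sqrt_sq (by positivity)
    have hblb : (1-η)^2 ≤ b := by
      have h1 : δ ≤ Real.exp (-(1-η)^2) - Real.exp (-1) := by rw [hδdef]; exact min_le_right _ _
      have h2 : Real.exp (-1) + δ ≤ Real.exp (-(1-η)^2) := by linarith
      have h3 : Real.log (Real.exp (-1) + δ) ≤ -(1-η)^2 := by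
        have := Real.log_le_log (by positivity) h2
        rwa [Real.log_exp] at this
      rw [hbdef]; linarith
    have hsb : 1 - η ≤ Real.sqrt b := by
      have h := Real.sqrt_le_sqrt hblb
      rwa [Real.sqrt_sq (by linarith : (0:ℝ) ≤ 1-η)] at h
    -- limits of the two test functions
    have hLp := hWgen (gp δ) (continuous_gp δ)
    have hLm := hWgen (gm δ) (continuous_gm δ)
    have hLpub : (c / Real.sqrt π) * (∫ x in Ioi (0:ℝ),
        gp δ (Real.exp (-x)) * (x ^ (-(1/2) : ℝ) * Real.exp (-x))) ≤ K + ε/4 := by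
      calc (c / Real.sqrt π) * (∫ x in Ioi (0:ℝ),
          gp δ (Real.exp (-x)) * (x ^ (-(1/2) : ℝ) * Real.exp (-x)))
          ≤ (c / Real.sqrt π) * (2 * Real.sqrt a) :=
            mul_le_mul_of_nonneg_left (LF_gp_le δ hδ0 hδe) (by positivity)
        _ = K * Real.sqrt a := by rw [← hcK]; ring
        _ ≤ K * (1 + η) := mul_le_mul_of_nonneg_left hsa hKpos.le
        _ = K + K * η := by ring
        _ ≤ K + ε/4 := by linarith
    have hLmlb : K - ε/4 ≤ (c / Real.sqrt π) * (∫ x in Ioi (0:ℝ),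
        gm δ (Real.exp (-x)) * (x ^ (-(1/2) : ℝ) * Real.exp (-x))) := by
      calc K - ε/4 ≤ K - K * η := by linarith
        _ = K * (1 - η) := by ring
        _ ≤ K * Real.sqrt b := mul_le_mul_of_nonneg_left hsb hKpos.le
        _ = (c / Real.sqrt π) * (2 * Real.sqrt b) := by rw [← hcK]; ring
        _ ≤ (c / Real.sqrt π) * (∫ x in Ioi (0:ℝ),
            gm δ (Real.exp (-x)) * (x ^ (-(1/2) : ℝ) * Real.exp (-x))) :=
            mul_le_mul_of_nonneg_left (LF_gm_ge δ hδ0 hδ1) (by positivity)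
    -- bounds for summability
    obtain ⟨Mgp, hMgp⟩ := isCompact_Icc.exists_bound_of_continuousOn
      ((continuous_gp δ).continuousOn (s := Icc (0:ℝ) 1))
    obtain ⟨Mgm, hMgm⟩ := isCompact_Icc.exists_bound_of_continuousOn
      ((continuous_gm δ).continuousOn (s := Icc (0:ℝ) 1))
    have hevp := Metric.tendsto_nhds.mp hLp (ε/4) (by positivity)
    have hevm := Metric.tendsto_nhds.mp hLm (ε/4) (by positivity)
    filter_upwards [hevp, hevm, self_mem_nhdsWithin] with t htp htm ht
    have ht0 : (0:ℝ) < t := ht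
    have hst : (0:ℝ) ≤ Real.sqrt t := Real.sqrt_nonneg t
    have hsgp : Summable (fun n => gp δ (Real.exp (-l n * t)) * Real.exp (-l n * t)) :=
      hsummable t ht0 _ Mgp (fun y hy => hMgp y ⟨hy.1.le, hy.2⟩)
    have hsgm : Summable (fun n => gm δ (Real.exp (-l n * t)) * Real.exp (-l n * t)) :=
      hsummable t ht0 _ Mgm (fun y hy => hMgm y ⟨hy.1.le, hy.2⟩)
    have hsind : Summable (fun n => if Real.exp (-1) ≤ Real.exp (-l n * t) then (1:ℝ) else 0) := by
      apply summable_of_ne_finset_zero (s := (hfin (1/t)).toFinset)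
      intro n hn
      rw [if_neg]
      intro hcon
      apply hn
      rw [Set.Finite.mem_toFinset]
      rw [Real.exp_le_exp] at hcon
      have : l n * t ≤ 1 := by linarith
      exact (le_div_iff₀ ht0).mpr this
    have hle1 : (∑' n, gm δ (Real.exp (-l n * t)) * Real.exp (-l n * t))
        ≤ ∑' n, (if Real.exp (-1) ≤ Real.exp (-l n * t) then (1:ℝ) else 0) := by
      apply Summable.tsum_le_tsum _ hsgm hsind
      intro n
      exact gm_mul_le_ind δ _ hδ0 (hy_mem t ht0 n).1
    have hle2 : (∑' n, (if Real.exp (-1) ≤ Real.exp (-l n * t) then (1:ℝ) else 0))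
        ≤ ∑' n, gp δ (Real.exp (-l n * t)) * Real.exp (-l n * t) := by
      apply Summable.tsum_le_tsum _ hsind hsgp
      intro n
      exact gp_mul_ge δ _ hδ0 (hy_mem t ht0 n).1 (hy_mem t ht0 n).2
    rw [Real.dist_eq] at htp htm ⊢
    have habp := (abs_lt.mp htp).2
    have habm := (abs_lt.mp htm).1
    have key1 : Real.sqrt t * (Nat.card {n : ℕ | l n ≤ 1/t} : ℝ)
        ≤ Real.sqrt t * ∑' n, gp δ (Real.exp (-l n * t)) * Real.exp (-l n * t) := by
      rw [hcard t ht0]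
      exact mul_le_mul_of_nonneg_left hle2 hst
    have key2 : Real.sqrt t * ∑' n, gm δ (Real.exp (-l n * t)) * Real.exp (-l n * t)
        ≤ Real.sqrt t * (Nat.card {n : ℕ | l n ≤ 1/t} : ℝ) := by
      rw [hcard t ht0]
      exact mul_le_mul_of_nonneg_left hle1 hst
    rw [abs_lt]
    constructor
    · linarith
    · linarith
  -- final substitution t = 1/x
  have hinv : Filter.Tendsto (fun x : ℝ => x⁻¹) Filter.atTop (𝓝[>] (0:ℝ)) :=
    tendsto_inv_atTop_nhdsGT_zero
  have hcomp := hmain.comp hinv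
  apply hcomp.congr'
  filter_upwards [Filter.eventually_gt_atTop (0:ℝ)] with x hx
  simp only [Function.comp_apply]
  rw [Real.sqrt_inv, one_div, inv_inv]
  rw [div_eq_inv_mul]
end
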